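/- arXiv:2006.12562 — 9 statements merged into one kernel-verified Lean document; each statement's English description precedes it below -/
import Mathlib

section
/- For any graph G with n vertices and maximum independent set size α, if i_k denotes the number of independent sets of size k, then the sequence (i_k) for k from ⌈α(n-1)/(α+n)⌉ to α is weakly decreasing. -/
open Finset

/-- The set of independent sets of a graph, as finsets of vertices. -/
def IsIndepFinset {V : Type*} (G : SimpleGraph V) (s : Finset V) : Prop :=
  ∀ a ∈ s, ∀ b ∈ s, ¬ G.Adj a b

open Classical in
/-- `i_k(G)`: the number of independent sets of size `k` in `G`. -/
noncomputable def indepCount {V : Type*} [Fintype V] (G : SimpleGraph V) (k : ℕ) : ℕ :=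
  (Finset.univ.filter fun s : Finset V => s.card = k ∧ IsIndepFinset G s).card

namespace IndepAux

variable {V : Type*}

/-- elementary symmetric sums -/
def Es (T : Finset V) (y : V → ℚ) (j : ℕ) : ℚ :=
  ∑ s ∈ T.powersetCard j, ∏ v ∈ s, y v

lemma Es_nonneg {T : Finset V} {y : V → ℚ} (hy : ∀ v, 0 ≤ y v) (j : ℕ) : 0 ≤ Es T y j :=
  Finset.sum_nonneg fun s _ => Finset.prod_nonneg fun v _ => hy v

lemma Es_zero (T : Finset V) (y : V → ℚ) : Es T y 0 = 1 := by
  simp [Es, Finset.powersetCard_zero]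

lemma Es_one (T : Finset V) (y : V → ℚ) : Es T y 1 = ∑ v ∈ T, y v := by
  simp [Es, Finset.powersetCard_one]

lemma Es_of_card_lt {T : Finset V} {j : ℕ} (h : T.card < j) (y : V → ℚ) : Es T y j = 0 := by
  simp [Es, Finset.powersetCard_eq_empty.2 h]

lemma Es_insert [DecidableEq V] {t : V} {T : Finset V} (ht : t ∉ T) (y : V → ℚ) (j : ℕ) :
    Es (insert t T) y (j + 1) = Es T y (j + 1) + y t * Es T y j := by
  classical
  rw [Es, Finset.powersetCard_succ_insert ht, Finset.sum_union, Es, Es, Finset.mul_sum,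
    Finset.sum_image]
  · congr 1
    refine Finset.sum_congr rfl fun s hs => ?_
    rw [Finset.prod_insert fun hmem => ht ((Finset.mem_powersetCard.1 hs).1 hmem)]
  · intro s hs r hr h
    have hts : t ∉ s := fun hmem => ht ((Finset.mem_powersetCard.1 hs).1 hmem)
    have htr : t ∉ r := fun hmem => ht ((Finset.mem_powersetCard.1 hr).1 hmem)
    have := congrArg (Finset.erase · t) h
    simpa [Finset.erase_insert, hts, htr] using this
  · rw [Finset.disjoint_right]
    intro s hs hs'
    obtain ⟨r, hr, rfl⟩ := Finset.mem_image.1 hs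
    have hts : t ∈ insert t r := Finset.mem_insert_self t r
    exact ht ((Finset.mem_powersetCard.1 hs').1 hts)

end IndepAux

namespace IndepAux

lemma Es_eq_zero_of_one_eq_zero {T : Finset V} {y : V → ℚ} (hy : ∀ v, 0 ≤ y v)
    (h1 : Es T y 1 = 0) {j : ℕ} (hj : 1 ≤ j) : Es T y j = 0 := by
  have hz : ∀ v ∈ T, y v = 0 := by
    rw [Es_one] at h1
    intro v hv
    exact (Finset.sum_eq_zero_iff_of_nonneg fun w _ => hy w).1 h1 v hv
  refine Finset.sum_eq_zero fun s hs => ?_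
  obtain ⟨hsub, hcard⟩ := Finset.mem_powersetCard.1 hs
  obtain ⟨v, hv⟩ : s.Nonempty := Finset.card_pos.1 (hcard ▸ hj)
  exact Finset.prod_eq_zero hv (hz v (hsub hv))

private lemma step_ineq (a b d s c M K : ℚ) (hbn : 0 ≤ b) (hsn : 0 ≤ s)
    (hcn : 0 ≤ c) (hspos : 0 < s) (hMq : 0 < M) (hKn : 0 ≤ K)
    (IH1 : M * (K+1+1) * a ≤ (M - K - 1) * s * b)
    (IH2 : M * (K+1) * b ≤ (M - K) * s * d) :
    (M+1) * (K+1+1) * (a + c * b) ≤ (M - K) * (s + c) * (b + c * d) := by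
  have U1 : 0 ≤ (M+1) * s * (((M - K - 1) * s * b) - M * (K+1+1) * a) := by
    apply mul_nonneg (mul_nonneg (by positivity) hsn); linarith
  have U2 : 0 ≤ M * c * (s + c) * (((M - K) * s * d) - M * (K+1) * b) := by
    apply mul_nonneg (mul_nonneg (mul_nonneg hMq.le hcn) (by linarith)); linarith
  have R : 0 ≤ (K+1) * b * (s - M * c)^2 := by positivity
  have key : M * s * (((M - K) * (s + c) * (b + c * d)) - (M+1) * (K+1+1) * (a + c * b))
      = (M+1) * s * (((M - K - 1) * s * b) - M * (K+1+1) * a)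
        + M * c * (s + c) * (((M - K) * s * d) - M * (K+1) * b)
        + (K+1) * b * (s - M * c)^2 := by ring
  have hms : (0:ℚ) < M * s := mul_pos hMq hspos
  have h : (0:ℚ) ≤ M * s * (((M - K) * (s + c) * (b + c * d)) - (M+1) * (K+1+1) * (a + c * b)) := by
    rw [key]; linarith [U1, U2, R]
  have h0 : M * s * (0:ℚ) ≤ M * s * (((M - K) * (s + c) * (b + c * d)) - (M+1) * (K+1+1) * (a + c * b)) := by
    rw [mul_zero]; exact h
  have hX := le_of_mul_le_mul_left h0 hms
  linarith

lemma esym_ineq [DecidableEq V] :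
    ∀ (m : ℕ) (T : Finset V) (y : V → ℚ), T.card = m → (∀ v, 0 ≤ y v) → ∀ k : ℕ,
      (m : ℚ) * (k + 1) * Es T y (k + 1) ≤ ((m - k : ℕ) : ℚ) * Es T y 1 * Es T y k := by
  intro m
  induction m with
  | zero =>
    intro T y hT hy k
    have h0 : ((0:ℕ) : ℚ) = 0 := rfl
    rw [Nat.zero_sub]
    simpa using mul_nonneg (mul_nonneg (by norm_num) (Es_nonneg hy 1)) (Es_nonneg hy k)
  | succ m ih =>
    intro T y hT hy k
    cases k with
    | zero =>
      rw [Nat.sub_zero, Es_zero]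
      push_cast
      ring_nf
      exact le_refl _
    | succ k =>
      obtain ⟨t, htT⟩ : T.Nonempty := Finset.card_pos.1 (hT ▸ Nat.succ_pos m)
      have hins : T = insert t (T.erase t) := (Finset.insert_erase htT).symm
      have htT' : t ∉ T.erase t := Finset.notMem_erase t T
      have hT' : (T.erase t).card = m := by
        rw [Finset.card_erase_of_mem htT, hT]
        omega
      set a := Es (T.erase t) y (k + 1 + 1) with ha
      set b := Es (T.erase t) y (k + 1) with hb
      set d := Es (T.erase t) y k with hd
      set s := Es (T.erase t) y 1 with hs
      set c := y t with hc
      have e2 : Es T y (k + 1 + 1) = a + c * b := by rw [hins]; exact Es_insert htT' y (k+1)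
      have e1 : Es T y (k + 1) = b + c * d := by rw [hins]; exact Es_insert htT' y k
      have e0 : Es T y 1 = s + c := by
        rw [hins]
        have := Es_insert htT' y 0
        rw [Es_zero] at this
        rw [this]; ring
      have hbn : 0 ≤ b := Es_nonneg hy _
      have hyz : ∀ j, 1 ≤ j → Es (T.erase t) y 1 = 0 → Es (T.erase t) y j = 0 :=
        fun j hj h1 => Es_eq_zero_of_one_eq_zero hy h1 hj
      have hdn : 0 ≤ d := Es_nonneg hy _
      have han : 0 ≤ a := Es_nonneg hy _
      have hsn : 0 ≤ s := Es_nonneg hy _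
      have hcn : 0 ≤ c := hy t
      rw [e2, e1, e0]
      by_cases hkm : m ≤ k
      · -- trivial case: coefficient zero on RHS, LHS zero
        have hz1 : a = 0 := Es_of_card_lt (by omega) y
        have hz2 : b = 0 := Es_of_card_lt (by omega) y
        have : (m + 1 - (k + 1) : ℕ) = 0 := by omega
        rw [hz1, hz2, this]
        push_cast
        nlinarith [mul_nonneg hcn (mul_nonneg hcn hdn)]
      · push_neg at hkm   -- k < m
        have hsub1 : ((m + 1 - (k + 1) : ℕ) : ℚ) = (m : ℚ) - k := by
          have : m + 1 - (k + 1) = m - k := by omega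
          rw [this, Nat.cast_sub (le_of_lt hkm)]
        have IH1 := ih (T.erase t) y hT' hy (k + 1)
        have IH2 := ih (T.erase t) y hT' hy k
        rw [← ha, ← hs, ← hb] at IH1
        rw [← hb, ← hs, ← hd] at IH2
        push_cast at IH1 IH2
        have hbz : Es (T.erase t) y 1 = 0 → b = 0 := by
          intro h1; rw [hb]; exact hyz _ (by omega) h1
        have haz : Es (T.erase t) y 1 = 0 → a = 0 := by
          intro h1; rw [ha]; exact hyz _ (by omega) h1
        have hs' : Es (T.erase t) y 1 = s := hs.symm
        clear_value a b d s c
        have hsub2 : ((m - (k + 1) : ℕ) : ℚ) = (m : ℚ) - k - 1 := by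
          rw [Nat.cast_sub (by omega)]; push_cast; ring
        have hsub3 : ((m - k : ℕ) : ℚ) = (m : ℚ) - k := by
          rw [Nat.cast_sub (le_of_lt hkm)]
        rw [hsub2] at IH1
        rw [hsub3] at IH2
        rw [hsub1]
        -- IH1 : (m:ℚ) * (k+1+1) * a ≤ ((m:ℚ) - k - 1) * s * b
        -- IH2 : (m:ℚ) * (k+1) * b ≤ ((m:ℚ) - k) * s * d
        by_cases hs0 : s = 0
        · have hb0 : b = 0 := hbz (hs' ▸ hs0 ▸ rfl)
          have ha0 : a = 0 := haz (hs' ▸ hs0 ▸ rfl)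
          rw [hb0, ha0, hs0]
          push_cast
          nlinarith [mul_nonneg hcn (mul_nonneg hcn hdn)]
        · have hspos : 0 < s := lt_of_le_of_ne hsn (Ne.symm hs0)
          have hmq : (0:ℚ) < (m : ℚ) := by
            have h1 : 0 < m := by omega
            exact_mod_cast h1
          have happ := step_ineq a b d s c (m:ℚ) (k:ℚ) hbn hsn hcn hspos hmq
            (by positivity) (by push_cast at IH1 ⊢; linarith) (by push_cast at IH2 ⊢; linarith)
          push_cast
          linarith [happ]

end IndepAux

namespace IndepAux

variable [Fintype V]

open Classical in
noncomputable def IS (G : SimpleGraph V) (j : ℕ) : Finset (Finset V) :=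
  Finset.univ.filter fun s : Finset V => s.card = j ∧ IsIndepFinset G s

lemma mem_IS {G : SimpleGraph V} {j : ℕ} {s : Finset V} :
    s ∈ IS G j ↔ s.card = j ∧ IsIndepFinset G s := by
  simp [IS]

noncomputable def Ij (G : SimpleGraph V) (x : V → ℚ) (j : ℕ) : ℚ :=
  ∑ s ∈ IS G j, ∏ v ∈ s, x v

lemma Ij_nonneg {G : SimpleGraph V} {x : V → ℚ} (hx : ∀ v, 0 ≤ x v) (j : ℕ) :
    0 ≤ Ij G x j :=
  Finset.sum_nonneg fun s _ => Finset.prod_nonneg fun v _ => hx v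

lemma indep_subset {G : SimpleGraph V} {s t : Finset V} (hst : s ⊆ t)
    (ht : IsIndepFinset G t) : IsIndepFinset G s :=
  fun a ha b hb => ht a (hst ha) b (hst hb)

lemma IS_card_eq {G : SimpleGraph V} (j : ℕ) : (IS G j).card = indepCount G j := rfl

open Classical in
lemma CL_indep (G : SimpleGraph V) (α : ℕ)
    (hα : IsGreatest {m | ∃ s : Finset V, IsIndepFinset G s ∧ s.card = m} α) (k : ℕ)
    (x : V → ℚ) (hx : ∀ v, 0 ≤ x v)
    (hsupp : IsIndepFinset G (Finset.univ.filter fun v => x v ≠ 0)) :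
    (α : ℚ) * (k + 1) * Ij G x (k + 1) ≤ ((α - k : ℕ) : ℚ) * (∑ v, x v) * Ij G x k := by
  classical
  set S := Finset.univ.filter fun v => x v ≠ 0 with hS
  have hzero : ∀ v, v ∉ S → x v = 0 := by
    intro v hv
    by_contra h
    exact hv (Finset.mem_filter.2 ⟨Finset.mem_univ v, h⟩)
  have hcard : S.card ≤ α := hα.2 ⟨S, hsupp, rfl⟩
  have hαn : α ≤ Finset.univ.card (α := V) := by
    obtain ⟨s, _, hsc⟩ := hα.1
    exact hsc ▸ Finset.card_le_univ s
  obtain ⟨P, hSP, hPu, hPcard⟩ :=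
    Finset.exists_subsuperset_card_eq (Finset.subset_univ S) hcard hαn
  have hIj : ∀ j, Ij G x j = Es P x j := by
    intro j
    have h1 : Ij G x j = ∑ s ∈ S.powersetCard j, ∏ v ∈ s, x v := by
      refine (Finset.sum_subset ?_ ?_).symm
      · intro s hs
        obtain ⟨hss, hcardj⟩ := Finset.mem_powersetCard.1 hs
        exact mem_IS.2 ⟨hcardj, indep_subset hss hsupp⟩
      · intro s hs hns
        obtain ⟨hcardj, _⟩ := mem_IS.1 hs
        have : ¬ s ⊆ S := fun hsub => hns (Finset.mem_powersetCard.2 ⟨hsub, hcardj⟩)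
        obtain ⟨v, hvs, hvS⟩ := Finset.not_subset.1 this
        exact Finset.prod_eq_zero hvs (hzero v hvS)
    have h2 : Es P x j = ∑ s ∈ S.powersetCard j, ∏ v ∈ s, x v := by
      refine (Finset.sum_subset (Finset.powersetCard_mono hSP) ?_).symm
      intro s hs hns
      obtain ⟨_, hcardj⟩ := Finset.mem_powersetCard.1 hs
      have : ¬ s ⊆ S := fun hsub => hns (Finset.mem_powersetCard.2 ⟨hsub, hcardj⟩)
      obtain ⟨v, hvs, hvS⟩ := Finset.not_subset.1 this
      exact Finset.prod_eq_zero hvs (hzero v hvS)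
    rw [h1, h2]
  have hsum : ∑ v, x v = Es P x 1 := by
    rw [Es_one]
    refine (Finset.sum_subset hPu ?_).symm
    intro v _ hvP
    exact hzero v fun hvS => hvP (hSP hvS)
  rw [hIj, hIj, hsum]
  exact esym_ineq α P x hPcard hx k

end IndepAux

namespace IndepAux

variable [Fintype V]

open Classical in
lemma sum_update_eq (x : V → ℚ) {u v : V} (huv : u ≠ v) :
    (∑ w, Function.update (Function.update x u 0) v (x u + x v) w) = ∑ w, x w := by
  classical
  rw [Finset.sum_update_of_mem (Finset.mem_univ v)]
  simp only [Finset.sdiff_singleton_eq_erase]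
  rw [Finset.sum_update_of_mem (Finset.mem_erase.2 ⟨huv, Finset.mem_univ u⟩)]
  simp only [Finset.sdiff_singleton_eq_erase]
  rw [Finset.erase_right_comm (a := v) (b := u)]
  have h1 : ∑ w ∈ (Finset.univ.erase u).erase v, x w + x v = ∑ w ∈ Finset.univ.erase u, x w := by
    exact Finset.sum_erase_add _ _ (Finset.mem_erase.2 ⟨huv.symm, Finset.mem_univ v⟩)
  have h2 : ∑ w ∈ Finset.univ.erase u, x w + x u = ∑ w, x w :=
    Finset.sum_erase_add _ _ (Finset.mem_univ u)
  linarith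

open Classical in
lemma comb (G : SimpleGraph V) {u v : V} (huv : G.Adj u v) (x : V → ℚ) (j : ℕ) :
    (x u + x v) * Ij G x j
      = x v * Ij G (Function.update (Function.update x u 0) v (x u + x v)) j
      + x u * Ij G (Function.update (Function.update x v 0) u (x u + x v)) j := by
  classical
  have hne : u ≠ v := huv.ne
  set x0 := Function.update (Function.update x u 0) v (x u + x v) with hx0
  set x1 := Function.update (Function.update x v 0) u (x u + x v) with hx1
  have hx0u : x0 u = 0 := by rw [hx0]; simp [Function.update_apply, hne]
  have hx1v : x1 v = 0 := by rw [hx1]; simp [Function.update_apply, hne.symm]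
  have hx0v : x0 v = x u + x v := by rw [hx0]; simp
  have hx1u : x1 u = x u + x v := by rw [hx1]; simp [Function.update_apply, hne]
  have hx0w : ∀ w, w ≠ u → w ≠ v → x0 w = x w := by
    intro w h1 h2; rw [hx0]; simp [Function.update_apply, h1, h2]
  have hx1w : ∀ w, w ≠ u → w ≠ v → x1 w = x w := by
    intro w h1 h2; rw [hx1]; simp [Function.update_apply, h1, h2]
  rw [Ij, Ij, Ij, Finset.mul_sum, Finset.mul_sum, Finset.mul_sum, ← Finset.sum_add_distrib]
  refine Finset.sum_congr rfl fun s hs => ?_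
  obtain ⟨hcard, hind⟩ := mem_IS.1 hs
  by_cases hu : u ∈ s <;> by_cases hv : v ∈ s
  · exact absurd huv (hind u hu v hv)
  · -- u ∈ s, v ∉ s
    have e0 : ∏ w ∈ s, x0 w = 0 := Finset.prod_eq_zero hu hx0u
    have eq1 : ∀ w ∈ s.erase u, x1 w = x w := by
      intro w hw
      obtain ⟨hwu, hws⟩ := Finset.mem_erase.1 hw
      exact hx1w w hwu (fun h => hv (h ▸ hws))
    have e1 : ∏ w ∈ s, x1 w = (x u + x v) * ∏ w ∈ s.erase u, x w := by
      rw [← Finset.mul_prod_erase s x1 hu, hx1u, Finset.prod_congr rfl eq1]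
    have ex : ∏ w ∈ s, x w = x u * ∏ w ∈ s.erase u, x w :=
      (Finset.mul_prod_erase s x hu).symm
    rw [e0, e1, ex]; ring
  · -- v ∈ s, u ∉ s
    have e1 : ∏ w ∈ s, x1 w = 0 := Finset.prod_eq_zero hv hx1v
    have eq0 : ∀ w ∈ s.erase v, x0 w = x w := by
      intro w hw
      obtain ⟨hwv, hws⟩ := Finset.mem_erase.1 hw
      exact hx0w w (fun h => hu (h ▸ hws)) hwv
    have e0 : ∏ w ∈ s, x0 w = (x u + x v) * ∏ w ∈ s.erase v, x w := by
      rw [← Finset.mul_prod_erase s x0 hv, hx0v, Finset.prod_congr rfl eq0]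
    have ex : ∏ w ∈ s, x w = x v * ∏ w ∈ s.erase v, x w :=
      (Finset.mul_prod_erase s x hv).symm
    rw [e0, e1, ex]; ring
  · -- neither
    have e0 : ∏ w ∈ s, x0 w = ∏ w ∈ s, x w :=
      Finset.prod_congr rfl fun w hw => hx0w w (fun h => hu (h ▸ hw)) (fun h => hv (h ▸ hw))
    have e1 : ∏ w ∈ s, x1 w = ∏ w ∈ s, x w :=
      Finset.prod_congr rfl fun w hw => hx1w w (fun h => hu (h ▸ hw)) (fun h => hv (h ▸ hw))
    rw [e0, e1]; ring

end IndepAux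

namespace IndepAux

variable [Fintype V]

open Classical in
lemma CL (G : SimpleGraph V) (α : ℕ)
    (hα : IsGreatest {m | ∃ s : Finset V, IsIndepFinset G s ∧ s.card = m} α) (k : ℕ) :
    ∀ (N : ℕ) (x : V → ℚ), (Finset.univ.filter fun v => x v ≠ 0).card ≤ N →
      (∀ v, 0 ≤ x v) →
      (α : ℚ) * (k + 1) * Ij G x (k + 1) ≤ ((α - k : ℕ) : ℚ) * (∑ v, x v) * Ij G x k := by
  classical
  intro N
  induction N with
  | zero =>
    intro x hN hx
    refine CL_indep G α hα k x hx ?_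
    have : (Finset.univ.filter fun v => x v ≠ 0) = ∅ := Finset.card_eq_zero.1 (Nat.le_zero.1 hN)
    rw [this]
    intro a ha
    exact absurd ha (Finset.notMem_empty a)
  | succ N ih =>
    intro x hN hx
    by_cases hedge : ∃ u v, G.Adj u v ∧ x u ≠ 0 ∧ x v ≠ 0
    · obtain ⟨u, v, huv, hxu, hxv⟩ := hedge
      have hne : u ≠ v := huv.ne
      have hxupos : 0 < x u := lt_of_le_of_ne (hx u) (Ne.symm hxu)
      have hxvpos : 0 < x v := lt_of_le_of_ne (hx v) (Ne.symm hxv)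
      set x0 := Function.update (Function.update x u 0) v (x u + x v) with hx0
      set x1 := Function.update (Function.update x v 0) u (x u + x v) with hx1
      have hx0n : ∀ w, 0 ≤ x0 w := by
        intro w
        rw [hx0]
        simp only [Function.update_apply]
        split_ifs <;> first | positivity | exact hx w
      have hx1n : ∀ w, 0 ≤ x1 w := by
        intro w
        rw [hx1]
        simp only [Function.update_apply]
        split_ifs <;> first | positivity | exact hx w
      have humem : u ∈ Finset.univ.filter fun w => x w ≠ 0 :=
        Finset.mem_filter.2 ⟨Finset.mem_univ u, hxu⟩
      have hsupp0 : (Finset.univ.filter fun w => x0 w ≠ 0).card ≤ N := by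
        have hsub : (Finset.univ.filter fun w => x0 w ≠ 0) ⊆
            (Finset.univ.filter fun w => x w ≠ 0).erase u := by
          intro w hw
          have hw0 : x0 w ≠ 0 := (Finset.mem_filter.1 hw).2
          have hwu : w ≠ u := by
            rintro rfl
            apply hw0
            rw [hx0]
            simp [Function.update_apply, hne]
          refine Finset.mem_erase.2 ⟨hwu, Finset.mem_filter.2 ⟨Finset.mem_univ w, ?_⟩⟩
          by_cases hwv : w = v
          · subst hwv; exact hxv
          · intro hxw
            apply hw0
            rw [hx0]
            simp [Function.update_apply, hwu, hwv, hxw]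
        calc (Finset.univ.filter fun w => x0 w ≠ 0).card
            ≤ ((Finset.univ.filter fun w => x w ≠ 0).erase u).card := Finset.card_le_card hsub
          _ = (Finset.univ.filter fun w => x w ≠ 0).card - 1 := Finset.card_erase_of_mem humem
          _ ≤ N := by omega
      have hsupp1 : (Finset.univ.filter fun w => x1 w ≠ 0).card ≤ N := by
        have hvmem : v ∈ Finset.univ.filter fun w => x w ≠ 0 :=
          Finset.mem_filter.2 ⟨Finset.mem_univ v, hxv⟩
        have hsub : (Finset.univ.filter fun w => x1 w ≠ 0) ⊆
            (Finset.univ.filter fun w => x w ≠ 0).erase v := by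
          intro w hw
          have hw0 : x1 w ≠ 0 := (Finset.mem_filter.1 hw).2
          have hwv : w ≠ v := by
            rintro rfl
            apply hw0
            rw [hx1]
            simp [Function.update_apply, hne.symm]
          refine Finset.mem_erase.2 ⟨hwv, Finset.mem_filter.2 ⟨Finset.mem_univ w, ?_⟩⟩
          by_cases hwu : w = u
          · subst hwu; exact hxu
          · intro hxw
            apply hw0
            rw [hx1]
            simp [Function.update_apply, hwu, hwv, hxw]
        calc (Finset.univ.filter fun w => x1 w ≠ 0).card
            ≤ ((Finset.univ.filter fun w => x w ≠ 0).erase v).card := Finset.card_le_card hsub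
          _ = (Finset.univ.filter fun w => x w ≠ 0).card - 1 := Finset.card_erase_of_mem hvmem
          _ ≤ N := by omega
      have IH0 := ih x0 hsupp0 hx0n
      have IH1 := ih x1 hsupp1 hx1n
      have hsum0 : (∑ w, x0 w) = ∑ w, x w := sum_update_eq x hne
      have hsum1 : (∑ w, x1 w) = ∑ w, x w := by
        have := sum_update_eq (V := V) x hne.symm
        rw [hx1]
        calc (∑ w, Function.update (Function.update x v 0) u (x u + x v) w)
            = ∑ w, Function.update (Function.update x v 0) u (x v + x u) w := by
              rw [add_comm (x u) (x v)]
          _ = ∑ w, x w := this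
      rw [hsum0] at IH0
      rw [hsum1] at IH1
      have hck1 := comb G huv x (k + 1)
      have hck := comb G huv x k
      rw [← hx0, ← hx1] at hck1 hck
      have hpos : (0 : ℚ) < x u + x v := by linarith
      have hIH0' := mul_le_mul_of_nonneg_left IH0 hxvpos.le
      have hIH1' := mul_le_mul_of_nonneg_left IH1 hxupos.le
      have hmain : (x u + x v) * ((α : ℚ) * (k + 1) * Ij G x (k + 1))
          ≤ (x u + x v) * (((α - k : ℕ) : ℚ) * (∑ w, x w) * Ij G x k) := by
        have e1 : (x u + x v) * ((α : ℚ) * (k + 1) * Ij G x (k + 1))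
            = (α : ℚ) * (k + 1) * ((x u + x v) * Ij G x (k + 1)) := by ring
        have e2 : (x u + x v) * (((α - k : ℕ) : ℚ) * (∑ w, x w) * Ij G x k)
            = ((α - k : ℕ) : ℚ) * (∑ w, x w) * ((x u + x v) * Ij G x k) := by ring
        rw [e1, e2, hck1, hck]
        nlinarith [hIH0', hIH1']
      exact le_of_mul_le_mul_left hmain hpos
    · push_neg at hedge
      refine CL_indep G α hα k x hx ?_
      intro a ha b hb hadj
      have hxa : x a ≠ 0 := (Finset.mem_filter.1 ha).2
      have hxb : x b ≠ 0 := (Finset.mem_filter.1 hb).2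
      exact hxb (hedge a b hadj hxa)

end IndepAux

open IndepAux in
theorem stmt_0 {V : Type*} [Fintype V] (G : SimpleGraph V) (n α : ℕ)
    (hn : n = Fintype.card V)
    (hα : IsGreatest {m | ∃ s : Finset V, IsIndepFinset G s ∧ s.card = m} α) :
    ∀ k l : ℕ, ⌈((α * (n - 1) : ℕ) : ℚ) / (α + n)⌉₊ ≤ k → k ≤ l → l ≤ α →
      indepCount G l ≤ indepCount G k := by
  classical
  intro k l hk hkl
  induction l, hkl using Nat.le_induction with
  | base => intro _; exact le_rfl
  | succ l hkl ih =>
    intro hl1α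
    have hlα : l ≤ α := by omega
    have hIH := ih hlα
    have hα1 : 1 ≤ α := by omega
    refine le_trans ?_ hIH
    -- suffices : indepCount G (l+1) ≤ indepCount G l
    have hone : ∀ j, Ij G (fun _ => (1:ℚ)) j = (indepCount G j : ℚ) := by
      intro j
      rw [Ij]
      rw [show (∑ s ∈ IS G j, ∏ _v ∈ s, (1:ℚ)) = ∑ s ∈ IS G j, 1 by simp]
      rw [Finset.sum_const, ← IS_card_eq]
      simp
    have hsumone : (∑ _v : V, (1:ℚ)) = (Fintype.card V : ℚ) := by simp
    have hfilter : (Finset.univ.filter fun v : V => (1:ℚ) ≠ 0).card ≤ Fintype.card V := by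
      rw [← Finset.card_univ]
      exact Finset.card_filter_le _ _
    have hCL := CL G α hα l (Fintype.card V) (fun _ => (1:ℚ)) hfilter (fun _ => zero_le_one)
    rw [hone, hone, hsumone] at hCL
    -- threshold arithmetic
    have hth : ((α - l : ℕ) : ℚ) * (Fintype.card V : ℚ) ≤ (α : ℚ) * (l + 1) := by
      rw [← hn]
      by_cases hn0 : n = 0
      · subst hn0
        simp only [Nat.cast_zero, mul_zero]
        positivity
      · have hn1 : 1 ≤ n := by omega
        have hceil : ((α * (n - 1) : ℕ) : ℚ) / (α + n) ≤ (l : ℚ) := by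
          have h1 : ⌈((α * (n - 1) : ℕ) : ℚ) / (α + n)⌉₊ ≤ l := le_trans hk hkl
          exact_mod_cast Nat.ceil_le.1 h1
        have hden : (0:ℚ) < (α : ℚ) + n := by
          have h2 : (1:ℚ) ≤ (α : ℚ) := by exact_mod_cast hα1
          have h3 : (0:ℚ) ≤ (n : ℚ) := by positivity
          linarith
        have hmul := (div_le_iff₀ hden).1 hceil
        have hcast : ((α * (n - 1) : ℕ) : ℚ) = (α : ℚ) * ((n : ℚ) - 1) := by
          push_cast [Nat.cast_sub hn1]
          ring
        rw [hcast] at hmul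
        rw [Nat.cast_sub hlα]
        linear_combination hmul
    have hpos : (0:ℚ) < (α : ℚ) * ((l : ℚ) + 1) := by
      have h2 : (1:ℚ) ≤ (α : ℚ) := by exact_mod_cast hα1
      positivity
    have hstep : (α : ℚ) * ((l : ℚ) + 1) * (indepCount G (l+1) : ℚ)
        ≤ (α : ℚ) * ((l : ℚ) + 1) * (indepCount G l : ℚ) := by
      refine le_trans ?_ (mul_le_mul_of_nonneg_right hth (by positivity))
      exact hCL
    have := le_of_mul_le_mul_left hstep hpos
    exact_mod_cast this
end

section
/- If every maximal (by inclusion) independent set of a graph G has size at least λ, then the initial portion (i_0, i_1, ..., i_{⌈λ/2⌉}) of the independent set sequence of G is non-decreasing. -/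
open Finset

open Classical in
lemma indep_subset {V : Type*} (G : SimpleGraph V) {s t : Finset V}
    (h : IsIndepFinset G t) (hst : s ⊆ t) : IsIndepFinset G s :=
  fun a ha b hb => h a (hst ha) b (hst hb)

open Classical in
lemma exists_big_ext {V : Type*} [Fintype V] (G : SimpleGraph V) (lam : ℕ)
    (hmax : ∀ s : Finset V, IsIndepFinset G s →
      (∀ t : Finset V, IsIndepFinset G t → s ⊆ t → s = t) → lam ≤ s.card)
    (s : Finset V) (hs : IsIndepFinset G s) :
    ∃ t : Finset V, IsIndepFinset G t ∧ s ⊆ t ∧ lam ≤ t.card := by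
  classical
  set C : Finset (Finset V) := univ.filter (fun t => IsIndepFinset G t ∧ s ⊆ t) with hC
  have hsC : s ∈ C := by simp [hC, hs]
  obtain ⟨t, htC, htmax⟩ := C.exists_max_image (fun t => t.card) ⟨s, hsC⟩
  simp only [hC, mem_filter, mem_univ, true_and] at htC
  refine ⟨t, htC.1, htC.2, hmax t htC.1 ?_⟩
  intro u hu htu
  have huC : u ∈ C := by simp [hC, hu, htC.2.trans htu]
  exact Finset.eq_of_subset_of_card_le htu (htmax u huC)

theorem stmt_1 {V : Type*} [Fintype V] (G : SimpleGraph V) (lam : ℕ)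
    (hmax : ∀ s : Finset V, IsIndepFinset G s →
      (∀ t : Finset V, IsIndepFinset G t → s ⊆ t → s = t) → lam ≤ s.card) :
    ∀ k : ℕ, 1 ≤ k → k ≤ ⌈(lam : ℚ) / 2⌉₊ →
      indepCount G (k - 1) ≤ indepCount G k := by
  classical
  intro k hk1 hk2
  -- 2k ≤ lam + 1
  have hceil : (⌈(lam : ℚ) / 2⌉₊ : ℚ) < (lam : ℚ) / 2 + 1 :=
    Nat.ceil_lt_add_one (by positivity)
  have hkq : (k : ℚ) ≤ (⌈(lam : ℚ) / 2⌉₊ : ℚ) := by exact_mod_cast hk2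
  have h2k : (2 * k : ℚ) < (lam : ℚ) + 2 := by linarith
  have hlam : 2 * k ≤ lam + 1 := by
    have : (2 * k : ℕ) < lam + 2 := by exact_mod_cast h2k
    omega
  set S : ℕ → Finset (Finset V) := fun j =>
    univ.filter (fun s : Finset V => s.card = j ∧ IsIndepFinset G s) with hS
  have hcount : ∀ j, indepCount G j = (S j).card := by
    intro j; simp [indepCount, hS]
  set E : Finset (Finset V × Finset V) :=
    ((S (k-1)) ×ˢ (S k)).filter (fun p => p.1 ⊆ p.2) with hE
  have hfst : E.card = ∑ A ∈ S (k-1), (E.filter fun p => p.1 = A).card := by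
    apply Finset.card_eq_sum_card_fiberwise
    intro p hp
    simp only [hE, mem_coe, mem_filter, mem_product] at hp
    exact hp.1.1
  have hsnd : E.card = ∑ B ∈ S k, (E.filter fun p => p.2 = B).card := by
    apply Finset.card_eq_sum_card_fiberwise
    intro p hp
    simp only [hE, mem_coe, mem_filter, mem_product] at hp
    exact hp.1.2
  -- lower bound on fst fibers
  have hlow : ∀ A ∈ S (k-1), k ≤ (E.filter fun p => p.1 = A).card := by
    intro A hA
    simp only [hS, mem_filter, mem_univ, true_and] at hA
    obtain ⟨hAc, hAi⟩ := hA
    obtain ⟨M, hMi, hAM, hMc⟩ := exists_big_ext G lam hmax A hAi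
    have hcard : k ≤ (M \ A).card := by
      rw [Finset.card_sdiff_of_subset hAM, hAc]
      omega
    refine le_trans hcard (Finset.card_le_card_of_injOn
      (fun v => (A, insert v A)) ?_ ?_)
    · intro v hv
      rw [Finset.mem_coe, Finset.mem_sdiff] at hv; rw [Finset.mem_coe]
      refine Finset.mem_filter.mpr ⟨Finset.mem_filter.mpr
        ⟨Finset.mem_product.mpr ⟨?_, ?_⟩, Finset.subset_insert _ _⟩, rfl⟩
      · simp only [hS, mem_filter, mem_univ, true_and]; exact ⟨hAc, hAi⟩
      · simp only [hS, mem_filter, mem_univ, true_and]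
        refine ⟨?_, indep_subset G hMi (Finset.insert_subset hv.1 hAM)⟩
        rw [Finset.card_insert_of_notMem hv.2, hAc]; omega
    · intro v hv w hw heq
      simp only [Finset.mem_coe, Finset.mem_sdiff] at hv hw
      have h2 : insert v A = insert w A := congrArg Prod.snd heq
      have : v ∈ insert w A := h2 ▸ Finset.mem_insert_self v A
      rcases Finset.mem_insert.mp this with h | h
      · exact h
      · exact absurd h hv.2
  -- upper bound on snd fibers
  have hhigh : ∀ B ∈ S k, (E.filter fun p => p.2 = B).card ≤ k := by
    intro B hB
    simp only [hS, mem_filter, mem_univ, true_and] at hB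
    have hle : (E.filter fun p => p.2 = B).card ≤ (B.powersetCard (k-1)).card := by
      apply Finset.card_le_card_of_injOn Prod.fst
      · intro p hp
        rw [Finset.mem_coe, Finset.mem_filter] at hp
        obtain ⟨hpE, hpB⟩ := hp
        simp only [hE, mem_filter, mem_product, hS, mem_univ, true_and] at hpE
        rw [Finset.mem_coe, Finset.mem_powersetCard]
        exact ⟨hpB ▸ hpE.2, hpE.1.1.1⟩
      · intro p hp q hq heq
        simp only [Finset.mem_coe, Finset.mem_filter] at hp hq
        exact Prod.ext heq (hp.2.trans hq.2.symm)
    rw [Finset.card_powersetCard, hB.1] at hle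
    have hch : k.choose (k-1) = k := by
      rw [← Nat.choose_symm (Nat.sub_le k 1)]
      have : k - (k - 1) = 1 := by omega
      rw [this, Nat.choose_one_right]
    rwa [hch] at hle
  have h1 : (S (k-1)).card * k ≤ E.card := by
    rw [hfst]
    have := Finset.card_nsmul_le_sum (S (k-1)) _ k hlow
    simpa [smul_eq_mul] using this
  have h2 : E.card ≤ (S k).card * k := by
    rw [hsnd]
    have := Finset.sum_le_card_nsmul (S k) _ k hhigh
    simpa [smul_eq_mul] using this
  rw [hcount, hcount]
  exact Nat.le_of_mul_le_mul_right (h1.trans h2) (by omega)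
end

section
/- Let T be a tree with n vertices and maximum independent set size α. Then every maximal independent set in T has size at least ⌈(n-α+1)/2⌉. -/
open Finset

lemma aux_indep {V : Type*} [Fintype V] [DecidableEq V] (G : SimpleGraph V)
    [DecidableRel G.Adj] (s : Finset V) :
    ∃ t ⊆ s, IsIndepFinset G t ∧
      s.card ≤ t.card + (G.edgeFinset.filter (fun e => ∀ x ∈ e, x ∈ s)).card := by
  classical
  induction s using Finset.strongInduction with
  | _ s ih =>
    by_cases hs : IsIndepFinset G s
    · exact ⟨s, Finset.Subset.refl s, hs, Nat.le_add_right _ _⟩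
    · unfold IsIndepFinset at hs
      push_neg at hs
      obtain ⟨a, ha, b, hb, hab⟩ := hs
      obtain ⟨t, hts, hti, hcard⟩ := ih (s.erase a) (Finset.erase_ssubset ha)
      refine ⟨t, hts.trans (Finset.erase_subset _ _), hti, ?_⟩
      set F := G.edgeFinset.filter (fun e => ∀ x ∈ e, x ∈ s) with hF
      set F' := G.edgeFinset.filter (fun e => ∀ x ∈ e, x ∈ s.erase a) with hF'
      have hmem : s(a, b) ∈ F := by
        rw [hF, Finset.mem_filter]
        refine ⟨SimpleGraph.mem_edgeFinset.mpr hab, ?_⟩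
        intro x hx
        rcases Sym2.mem_iff.mp hx with rfl | rfl
        · exact ha
        · exact hb
      have hsub : F' ⊆ F.erase s(a, b) := by
        intro e he
        rw [hF', Finset.mem_filter] at he
        refine Finset.mem_erase.mpr ⟨?_, Finset.mem_filter.mpr
          ⟨he.1, fun x hx => Finset.mem_of_mem_erase (he.2 x hx)⟩⟩
        rintro rfl
        exact Finset.notMem_erase a s (he.2 a (Sym2.mem_mk_left a b))
      have h1 : F'.card ≤ F.card - 1 := by
        have h := Finset.card_le_card hsub
        rwa [Finset.card_erase_of_mem hmem] at h
      have h2 : 1 ≤ F.card := Finset.card_pos.mpr ⟨_, hmem⟩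
      have h3 : (s.erase a).card + 1 = s.card := Finset.card_erase_add_one ha
      omega

theorem stmt_2 {V : Type*} [Fintype V] (T : SimpleGraph V) (hT : T.IsTree) (n α : ℕ)
    (hn : n = Fintype.card V)
    (hα : IsGreatest {m | ∃ s : Finset V, IsIndepFinset T s ∧ s.card = m} α) :
    ∀ K : Finset V, IsIndepFinset T K →
      (∀ t : Finset V, IsIndepFinset T t → K ⊆ t → K = t) →
      ⌈((n - α + 1 : ℕ) : ℚ) / 2⌉₊ ≤ K.card := by
  classical
  intro K hK hmax
  have hVne : Nonempty V := hT.isConnected.nonempty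
  -- K is nonempty
  have hKne : K.Nonempty := by
    by_contra h
    obtain ⟨v⟩ := hVne
    have h0 : K = ∅ := Finset.not_nonempty_iff_eq_empty.mp h
    have hsing : IsIndepFinset T {v} := by
      intro a ha b hb
      simp only [Finset.mem_singleton] at ha hb
      subst ha; subst hb
      exact T.irrefl
    have := hmax {v} hsing (by simp [h0])
    rw [h0] at this
    exact Finset.singleton_ne_empty v this.symm
  -- K is dominating
  have hdom : ∀ v, v ∉ K → ∃ u ∈ K, T.Adj u v := by
    intro v hv
    by_contra h
    push_neg at h
    have hins : IsIndepFinset T (insert v K) := by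
      intro a ha b hb
      rcases Finset.mem_insert.mp ha with rfl | ha' <;>
        rcases Finset.mem_insert.mp hb with rfl | hb'
      · exact T.irrefl
      · exact fun hadj => h b hb' hadj.symm
      · exact fun hadj => h a ha' hadj
      · exact hK a ha' b hb'
    have := hmax _ hins (Finset.subset_insert v K)
    exact hv (this ▸ Finset.mem_insert_self v K)
  -- choose a neighbor in K for each vertex outside K
  let f : V → V := fun v => if h : ∃ u ∈ K, T.Adj u v then h.choose else v
  have hf : ∀ v ∉ K, f v ∈ K ∧ T.Adj (f v) v := by
    intro v hv
    have h := hdom v hv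
    simp only [f, dif_pos h]
    exact h.choose_spec
  set C : Finset V := Finset.univ \ K with hC
  have hCmem : ∀ v, v ∈ C ↔ v ∉ K := by
    intro v; simp [hC]
  set D : Finset (Sym2 V) := C.image (fun v => s(v, f v)) with hD
  have hDcard : D.card = C.card := by
    rw [hD]
    apply Finset.card_image_of_injOn
    intro x hx y hy hxy
    have hx' : x ∉ K := (hCmem x).mp hx
    have hy' : y ∉ K := (hCmem y).mp hy
    simp only [Sym2.eq, Sym2.rel_iff', Prod.mk.injEq, Prod.swap_prod_mk] at hxy
    rcases hxy with ⟨rfl, _⟩ | ⟨h1, _⟩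
    · rfl
    · exact absurd ((hf y hy').1) (h1 ▸ hx')
  set F : Finset (Sym2 V) := T.edgeFinset.filter (fun e => ∀ x ∈ e, x ∈ C) with hFdef
  have hDsub : D ⊆ T.edgeFinset := by
    intro e he
    rw [hD, Finset.mem_image] at he
    obtain ⟨v, hv, rfl⟩ := he
    exact SimpleGraph.mem_edgeFinset.mpr ((hf v ((hCmem v).mp hv)).2.symm)
  have hFsub : F ⊆ T.edgeFinset := Finset.filter_subset _ _
  have hdisj : Disjoint D F := by
    rw [Finset.disjoint_left]
    intro e heD heF
    rw [hD, Finset.mem_image] at heD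
    obtain ⟨v, hv, rfl⟩ := heD
    rw [hFdef, Finset.mem_filter] at heF
    have := (hCmem (f v)).mp (heF.2 (f v) (Sym2.mem_mk_right v (f v)))
    exact this ((hf v ((hCmem v).mp hv)).1)
  have hedge : T.edgeFinset.card + 1 = n := by
    rw [hn]; exact hT.card_edgeFinset
  have hDF : D.card + F.card ≤ T.edgeFinset.card := by
    rw [← Finset.card_union_of_disjoint hdisj]
    exact Finset.card_le_card (Finset.union_subset hDsub hFsub)
  obtain ⟨t, htC, hti, htcard⟩ := aux_indep T C
  rw [← hFdef] at htcard
  have htα : t.card ≤ α := hα.2 ⟨t, hti, rfl⟩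
  have hCcard : C.card + K.card = n := by
    rw [hC, hn, Finset.card_sdiff_add_card_eq_card (Finset.subset_univ K),
      Finset.card_univ]
  have hK1 : 1 ≤ K.card := Finset.card_pos.mpr hKne
  have key : n - α + 1 ≤ 2 * K.card := by omega
  rw [Nat.ceil_le, div_le_iff₀ (by norm_num : (0:ℚ) < 2)]
  calc ((n - α + 1 : ℕ) : ℚ) ≤ ((2 * K.card : ℕ) : ℚ) := by exact_mod_cast key
    _ = (K.card : ℚ) * 2 := by push_cast; ring
end

section
/- Let T be a tree with n vertices and maximum independent set size α, and let i_k be the number of independent sets of size k in T. Then i_{k-1} ≤ i_k for all k ≤ ⌈(n-α+1)/4⌉. -/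
open Finset

namespace StmtAux

open SimpleGraph

variable {V : Type*} {T : SimpleGraph V}

/-- The unique path from `x` to `r` in a tree. -/
noncomputable def pth (hT : T.IsTree) (r x : V) : T.Walk x r :=
  (hT.existsUnique_path x r).choose

lemma pth_isPath (hT : T.IsTree) (r x : V) : (pth hT r x).IsPath :=
  (hT.existsUnique_path x r).choose_spec.1

lemma pth_unique (hT : T.IsTree) (r x : V) (p : T.Walk x r) (hp : p.IsPath) :
    p = pth hT r x :=
  (hT.existsUnique_path x r).choose_spec.2 p hp

/-- The parent of `x` in the tree rooted at `r`. -/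
noncomputable def par (hT : T.IsTree) (r x : V) : V := (pth hT r x).getVert 1

/-- The depth of `x` in the tree rooted at `r`. -/
noncomputable def dep (hT : T.IsTree) (r x : V) : ℕ := (pth hT r x).length

lemma par_or (hT : T.IsTree) (r : V) {x y : V} (hxy : T.Adj x y) :
    (par hT r x = y ∧ dep hT r x = dep hT r y + 1) ∨
    (par hT r y = x ∧ dep hT r y = dep hT r x + 1) := by
  classical
  have hwp : (pth hT r x).IsPath := pth_isPath hT r x
  by_cases hy : y ∈ (pth hT r x).support
  · left
    have hq : ((pth hT r x).dropUntil y hy).IsPath := hwp.dropUntil hy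
    have hqy : pth hT r y = (pth hT r x).dropUntil y hy :=
      (pth_unique hT r y _ hq).symm
    have hx : x ∉ ((pth hT r x).dropUntil y hy).support := by
      have hspec := (pth hT r x).take_spec hy
      have hnodup : (pth hT r x).support.Nodup := hwp.support_nodup
      rw [← hspec, SimpleGraph.Walk.support_append] at hnodup
      have hx1 : x ∈ ((pth hT r x).takeUntil y hy).support :=
        SimpleGraph.Walk.start_mem_support _
      have hx2 : x ∉ ((pth hT r x).dropUntil y hy).support.tail :=
        (List.disjoint_of_nodup_append hnodup) hx1
      intro hmem
      rw [SimpleGraph.Walk.support_eq_cons] at hmem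
      rcases List.mem_cons.mp hmem with h | h
      · exact hxy.ne h
      · exact hx2 h
    have hp : (SimpleGraph.Walk.cons hxy ((pth hT r x).dropUntil y hy)).IsPath :=
      hq.cons hx
    have heq := pth_unique hT r x _ hp
    constructor
    · show (pth hT r x).getVert 1 = y
      rw [← heq, SimpleGraph.Walk.getVert_cons_succ, SimpleGraph.Walk.getVert_zero]
    · show (pth hT r x).length = (pth hT r y).length + 1
      rw [← heq, SimpleGraph.Walk.length_cons, hqy]
  · right
    have hp : (SimpleGraph.Walk.cons hxy.symm (pth hT r x)).IsPath := hwp.cons hy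
    have heq := pth_unique hT r y _ hp
    constructor
    · show (pth hT r y).getVert 1 = x
      rw [← heq, SimpleGraph.Walk.getVert_cons_succ, SimpleGraph.Walk.getVert_zero]
    · show (pth hT r y).length = (pth hT r x).length + 1
      rw [← heq, SimpleGraph.Walk.length_cons]

/-- In any subset of a tree containing an edge, there is a "leaf": a vertex with
exactly one neighbour inside the set. -/
lemma exists_leaf (hT : T.IsTree) (r : V) (s : Finset V)
    (hE : ∃ u ∈ s, ∃ v ∈ s, T.Adj u v) :
    ∃ u ∈ s, ∃ v ∈ s, T.Adj u v ∧ ∀ w ∈ s, T.Adj u w → w = v := by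
  classical
  set E := s.filter (fun x => ∃ y ∈ s, T.Adj x y) with hE'
  have hne : E.Nonempty := by
    obtain ⟨u, hu, v, hv, h⟩ := hE
    exact ⟨u, by rw [hE', mem_filter]; exact ⟨hu, v, hv, h⟩⟩
  obtain ⟨u, huE, hmax⟩ := Finset.exists_max_image E (dep hT r) hne
  rw [hE', mem_filter] at huE
  obtain ⟨hus, v, hvs, huv⟩ := huE
  have key : ∀ w ∈ s, T.Adj u w → w = par hT r u := by
    intro w hws hw
    rcases par_or hT r hw with ⟨h1, _⟩ | ⟨h2, hd⟩
    · exact h1.symm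
    · exfalso
      have hwE : w ∈ E := by rw [hE', mem_filter]; exact ⟨hws, u, hus, hw.symm⟩
      have := hmax w hwE
      omega
  refine ⟨u, hus, v, hvs, huv, ?_⟩
  intro w hws hw
  rw [key w hws hw, ← key v hvs huv]

/-- A matching given as a finset of ordered pairs: adjacent, with all endpoints distinct. -/
def Match (T : SimpleGraph V) (F : Finset (V × V)) : Prop :=
  (∀ p ∈ F, T.Adj p.1 p.2) ∧
  ∀ p ∈ F, ∀ q ∈ F, p ≠ q → p.1 ≠ q.1 ∧ p.1 ≠ q.2 ∧ p.2 ≠ q.1 ∧ p.2 ≠ q.2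

lemma match_eq_of (hFm : Match T F) {p q : V × V} (hp : p ∈ F) (hq : q ∈ F)
    (h : p.1 = q.1 ∨ p.1 = q.2 ∨ p.2 = q.1 ∨ p.2 = q.2) : p = q := by
  by_contra hne
  have := hFm.2 p hp q hq hne
  tauto

/-- König / Gallai type lemma for trees: any subset `s` contains a matching `F` and an
independent set `t` with `|s| ≤ |t| + |F|`. -/
lemma konig (hT : T.IsTree) (r : V) : ∀ m : ℕ, ∀ s : Finset V, s.card = m →
    ∃ F : Finset (V × V), (∀ p ∈ F, p.1 ∈ s ∧ p.2 ∈ s) ∧ Match T F ∧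
      ∃ t ⊆ s, IsIndepFinset T t ∧ s.card ≤ t.card + F.card := by
  intro m
  induction m using Nat.strong_induction_on with
  | _ m ih =>
  intro s hs
  classical
  by_cases hE : ∃ u ∈ s, ∃ v ∈ s, T.Adj u v
  · obtain ⟨u, hus, v, hvs, huv, hleaf⟩ := exists_leaf hT r s hE
    have hne : u ≠ v := huv.ne
    set s' := (s.erase u).erase v with hs'
    have hs'sub : s' ⊆ s := (erase_subset _ _).trans (erase_subset _ _)
    have hu' : u ∉ s' := by
      rw [hs']; intro h
      exact (notMem_erase u s) (mem_of_mem_erase h)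
    have hv' : v ∉ s' := by rw [hs']; exact notMem_erase v _
    have h2le : 2 ≤ s.card := Finset.one_lt_card.2 ⟨u, hus, v, hvs, hne⟩
    have hvmem : v ∈ s.erase u := mem_erase.2 ⟨hne.symm, hvs⟩
    have hcard : s'.card + 2 = s.card := by
      rw [hs', card_erase_of_mem hvmem, card_erase_of_mem hus]
      omega
    obtain ⟨F', hF'sub, hF'm, t', ht'sub, ht'ind, ht'card⟩ :=
      ih s'.card (by omega) s' rfl
    have huv' : (u, v) ∉ F' := fun h => hu' (hF'sub _ h).1
    have hut' : u ∉ t' := fun h => hu' (ht'sub h)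
    refine ⟨insert (u, v) F', ?_, ⟨?_, ?_⟩, insert u t', ?_, ?_, ?_⟩
    · intro p hp
      rcases mem_insert.mp hp with h | h
      · rw [h]; exact ⟨hus, hvs⟩
      · exact ⟨hs'sub (hF'sub p h).1, hs'sub (hF'sub p h).2⟩
    · intro p hp
      rcases mem_insert.mp hp with h | h
      · rw [h]; exact huv
      · exact hF'm.1 p h
    · intro p hp q hq hpq
      rcases mem_insert.mp hp with h | h <;> rcases mem_insert.mp hq with h' | h'
      · exact absurd (h.trans h'.symm) hpq
      · have h1 := (hF'sub q h').1
        have h2 := (hF'sub q h').2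
        have hp1 : p.1 = u := by rw [h]
        have hp2 : p.2 = v := by rw [h]
        rw [hp1, hp2]
        exact ⟨fun e => hu' (by rw [e]; exact h1), fun e => hu' (by rw [e]; exact h2),
               fun e => hv' (by rw [e]; exact h1), fun e => hv' (by rw [e]; exact h2)⟩
      · have h1 := (hF'sub p h).1
        have h2 := (hF'sub p h).2
        have hq1 : q.1 = u := by rw [h']
        have hq2 : q.2 = v := by rw [h']
        rw [hq1, hq2]
        exact ⟨fun e => hu' (by rw [← e]; exact h1), fun e => hv' (by rw [← e]; exact h1),
               fun e => hu' (by rw [← e]; exact h2), fun e => hv' (by rw [← e]; exact h2)⟩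
      · exact hF'm.2 p h q h' hpq
    · intro x hx
      rcases mem_insert.mp hx with h | h
      · rw [h]; exact hus
      · exact hs'sub (ht'sub h)
    · intro a ha b hb hab
      rcases mem_insert.mp ha with h | h <;> rcases mem_insert.mp hb with h' | h'
      · subst h; subst h'; exact (T.irrefl hab)
      · subst h
        have hb' : b ∈ s := hs'sub (ht'sub h')
        have := hleaf b hb' hab
        exact hv' (this ▸ ht'sub h')
      · subst h'
        have ha' : a ∈ s := hs'sub (ht'sub h)
        have := hleaf a ha' hab.symm
        exact hv' (this ▸ ht'sub h)
      · exact ht'ind a h b h' hab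
    · rw [card_insert_of_notMem hut', card_insert_of_notMem huv']
      omega
  · refine ⟨∅, by simp, ⟨by simp, by simp⟩, s, Finset.Subset.refl s, ?_, by simp⟩
    intro a ha b hb hab
    exact hE ⟨a, ha, b, hb, hab⟩

open Classical in
/-- Core counting lemma: an independent set of size `k-1` has at least `k` extension
vertices, given a matching of size at least `4k-4`. -/
lemma ext_lower [Fintype V] (hT : T.IsTree) (r : V) {k : ℕ} (hk : 1 ≤ k)
    {F : Finset (V × V)} (hFm : Match T F) (hFc : 4 * k - 4 ≤ F.card)
    {S : Finset V} (hSind : IsIndepFinset T S) (hScard : S.card = k - 1) :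
    k ≤ (univ.filter (fun w => w ∉ S ∧ ∀ s ∈ S, ¬ T.Adj s w)).card := by
  classical
  rcases eq_or_lt_of_le hk with h1 | h2
  · -- k = 1
    have hS0 : S.card = 0 := by omega
    have hS : S = ∅ := card_eq_zero.1 hS0
    have hnn : Nonempty V := hT.isConnected.nonempty
    obtain ⟨v⟩ := hnn
    have hv : v ∈ univ.filter (fun w => w ∉ S ∧ ∀ s ∈ S, ¬ T.Adj s w) := by
      rw [mem_filter]
      refine ⟨mem_univ v, ?_, ?_⟩
      · rw [hS]; exact notMem_empty v
      · intro s hs; rw [hS] at hs; exact absurd hs (notMem_empty s)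
    rw [← h1]
    exact Finset.card_pos.2 ⟨v, hv⟩
  · -- k ≥ 2
    set dom : V → Prop := fun x => x ∈ S ∨ ∃ s ∈ S, T.Adj s x with hdomdef
    set FBad := F.filter (fun p => dom p.1 ∧ dom p.2) with hFBad
    set FBadS := FBad.filter (fun p => p.1 ∈ S ∨ p.2 ∈ S) with hFBadS
    set FBadN := FBad \ FBadS with hFBadN
    set FGood := F \ FBad with hFGood
    have hBadSF : ∀ p ∈ FBadS, p ∈ F := fun p hp =>
      (filter_subset _ _) ((filter_subset _ _) hp)
    have hBadNF : ∀ p ∈ FBadN, p ∈ F := fun p hp =>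
      (filter_subset _ _) (sdiff_subset hp)
    have hGoodF : ∀ p ∈ FGood, p ∈ F := fun p hp => sdiff_subset hp
    -- FBadS injects into S
    have hBS : FBadS.card ≤ S.card := by
      apply Finset.card_le_card_of_injOn (fun p => if p.1 ∈ S then p.1 else p.2)
      · intro p hp
        rw [hFBadS, Finset.mem_coe, mem_filter] at hp
        rcases hp.2 with h | h
        · simp [h]
        · by_cases h1 : p.1 ∈ S <;> simp [h1, h]
      · intro p hp q hq heq
        simp only [Finset.mem_coe] at hp hq
        dsimp only at heq
        apply match_eq_of hFm (hBadSF p hp) (hBadSF q hq)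
        split_ifs at heq <;> tauto
    -- FBadN injects into S via parents
    have hBN : FBadN.card ≤ S.card := by
      -- the "child" endpoint of an edge
      set child : V × V → V := fun p => if par hT r p.1 = p.2 then p.1 else p.2 with hchild
      have hchildmem : ∀ p, child p = p.1 ∨ child p = p.2 := by
        intro p; rw [hchild]; dsimp only; split_ifs <;> simp
      have hprops : ∀ p ∈ FBadN, p ∈ F ∧ (dom p.1 ∧ dom p.2) ∧ p.1 ∉ S ∧ p.2 ∉ S := by
        intro p hp
        have hp' := hp
        rw [hFBadN, mem_sdiff] at hp'
        have hpb := hp'.1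
        rw [hFBad, mem_filter] at hpb
        have hnotS : ¬ (p.1 ∈ S ∨ p.2 ∈ S) := by
          intro hor
          exact hp'.2 (by rw [hFBadS, mem_filter]; exact ⟨hp'.1, hor⟩)
        push_neg at hnotS
        exact ⟨hpb.1, hpb.2, hnotS⟩
      have hparchild : ∀ p ∈ FBadN, par hT r (child p) ∉ S ∧
          (par hT r (child p) = p.1 ∨ par hT r (child p) = p.2) := by
        intro p hp
        obtain ⟨hpF, _, hp1S, hp2S⟩ := hprops p hp
        have hadj := hFm.1 p hpF
        rw [hchild]; dsimp only
        split_ifs with hif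
        · rw [hif]; exact ⟨hp2S, Or.inr rfl⟩
        · rcases par_or hT r hadj with ⟨h, _⟩ | ⟨h, _⟩
          · exact absurd h hif
          · rw [h]; exact ⟨hp1S, Or.inl rfl⟩
      have hdomchild : ∀ p ∈ FBadN, ∃ s ∈ S, T.Adj s (child p) := by
        intro p hp
        obtain ⟨hpF, hdom2, hp1S, hp2S⟩ := hprops p hp
        rcases hchildmem p with h | h <;> rw [h]
        · rcases hdom2.1 with h' | h'
          · exact absurd h' hp1S
          · exact h'
        · rcases hdom2.2 with h' | h'
          · exact absurd h' hp2S
          · exact h'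
      apply Finset.card_le_card_of_injOn
        (fun p => if h : ∃ s ∈ S, T.Adj s (child p) then h.choose else r)
      · intro p hp
        simp only [Finset.mem_coe]
        rw [dif_pos (hdomchild p hp)]
        exact (hdomchild p hp).choose_spec.1
      · intro p hp q hq heq
        simp only [Finset.mem_coe] at hp hq
        dsimp only at heq
        rw [dif_pos (hdomchild p hp), dif_pos (hdomchild q hq)] at heq
        have hsp := (hdomchild p hp).choose_spec
        have hsq := (hdomchild q hq).choose_spec
        -- par of the chosen s equals the child
        have hps : par hT r (hdomchild p hp).choose = child p := by
          rcases par_or hT r hsp.2 with ⟨h, _⟩ | ⟨h, _⟩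
          · exact h
          · exact absurd (h ▸ hsp.1) (hparchild p hp).1
        have hqs : par hT r (hdomchild q hq).choose = child q := by
          rcases par_or hT r hsq.2 with ⟨h, _⟩ | ⟨h, _⟩
          · exact h
          · exact absurd (h ▸ hsq.1) (hparchild q hq).1
        have hcc : child p = child q := by rw [← hps, ← hqs, heq]
        apply match_eq_of hFm (hBadNF p hp) (hBadNF q hq)
        rcases hchildmem p with h | h <;> rcases hchildmem q with h' | h' <;>
          rw [h, h'] at hcc <;> tauto
    -- FGood injects into the free vertices
    have hGW : FGood.card ≤
        (univ.filter (fun w => w ∉ S ∧ ∀ s ∈ S, ¬ T.Adj s w)).card := by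
      apply Finset.card_le_card_of_injOn (fun p => if dom p.1 then p.2 else p.1)
      · intro p hp
        have hpnb : ¬ (dom p.1 ∧ dom p.2) := by
          rw [hFGood, Finset.mem_coe, mem_sdiff, hFBad, mem_filter] at hp
          intro h
          exact hp.2 ⟨hp.1, h⟩
        have hfree : ¬ dom (if dom p.1 then p.2 else p.1) := by
          split_ifs with h
          · intro h2; exact hpnb ⟨h, h2⟩
          · exact h
        rw [Finset.mem_coe, mem_filter]
        refine ⟨mem_univ _, ?_, ?_⟩
        · intro h; exact hfree (Or.inl h)
        · intro s hs hadj; exact hfree (Or.inr ⟨s, hs, hadj⟩)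
      · intro p hp q hq heq
        simp only [Finset.mem_coe] at hp hq
        dsimp only at heq
        apply match_eq_of hFm (hGoodF p hp) (hGoodF q hq)
        split_ifs at heq <;> tauto
    -- count
    have hsub1 : FBadS ⊆ FBad := filter_subset _ _
    have hsub2 : FBad ⊆ F := filter_subset _ _
    have hc1 : FBadN.card = FBad.card - FBadS.card := by
      rw [hFBadN, card_sdiff_of_subset hsub1]
    have hc2 : FGood.card = F.card - FBad.card := by
      rw [hFGood, card_sdiff_of_subset hsub2]
    have hle1 : FBadS.card ≤ FBad.card := card_le_card hsub1
    have hle2 : FBad.card ≤ F.card := card_le_card hsub2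
    omega

end StmtAux

theorem stmt_3 {V : Type*} [Fintype V] (T : SimpleGraph V) (hT : T.IsTree) (n α : ℕ)
    (hn : n = Fintype.card V)
    (hα : IsGreatest {m | ∃ s : Finset V, IsIndepFinset T s ∧ s.card = m} α) :
    ∀ k : ℕ, 1 ≤ k → k ≤ ⌈((n - α + 1 : ℕ) : ℚ) / 4⌉₊ →
      indepCount T (k - 1) ≤ indepCount T k := by
  classical
  intro k hk hkc
  have hnn : Nonempty V := hT.isConnected.nonempty
  set r : V := Classical.arbitrary V with hr
  obtain ⟨F, hFsub, hFm, t₀, ht₀sub, ht₀ind, ht₀card⟩ :=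
    StmtAux.konig hT r (univ : Finset V).card univ rfl
  have htα : t₀.card ≤ α := hα.2 ⟨t₀, ht₀ind, rfl⟩
  -- extract the numeric bound
  have hceil : ((k - 1 : ℕ) : ℚ) < ((n - α + 1 : ℕ) : ℚ) / 4 := by
    have : (k - 1 : ℕ) < ⌈((n - α + 1 : ℕ) : ℚ) / 4⌉₊ := by omega
    exact Nat.lt_ceil.1 this
  have hnum : 4 * (k - 1) < n - α + 1 := by
    have h4 : ((4 * (k - 1) : ℕ) : ℚ) < ((n - α + 1 : ℕ) : ℚ) := by
      push_cast
      push_cast at hceil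
      linarith
    exact_mod_cast h4
  have hFcard : 4 * k - 4 ≤ F.card := by
    have hnle : n ≤ t₀.card + F.card := by
      rw [hn]; exact ht₀card
    omega
  -- double counting
  unfold indepCount
  refine Nat.le_of_mul_le_mul_right ?_ (show 0 < k by omega)
  refine Finset.card_mul_le_card_mul (fun S S' => S ⊆ S') ?_ ?_
  · -- lower bound on extensions
    intro S hS
    rw [mem_filter] at hS
    obtain ⟨-, hcardS, hindS⟩ := hS
    have hW := StmtAux.ext_lower hT r hk hFm hFcard hindS hcardS
    refine le_trans hW (Finset.card_le_card_of_injOn (fun w => insert w S) ?_ ?_)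
    · intro w hw
      simp only [Finset.mem_coe] at hw ⊢
      rw [mem_filter] at hw
      obtain ⟨-, hwS, hwadj⟩ := hw
      rw [Finset.mem_bipartiteAbove]
      refine ⟨?_, subset_insert _ _⟩
      rw [mem_filter]
      refine ⟨mem_univ _, ?_, ?_⟩
      · rw [card_insert_of_notMem hwS, hcardS]; omega
      · intro a ha b hb hab
        rcases mem_insert.mp ha with h | h <;> rcases mem_insert.mp hb with h' | h'
        · subst h; subst h'; exact T.irrefl hab
        · subst h; exact hwadj b h' (hab.symm)
        · subst h'; exact hwadj a h hab
        · exact hindS a h b h' hab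
    · intro w hw w' hw' heq
      simp only [Finset.mem_coe, mem_filter] at hw hw'
      dsimp only at heq
      have : w ∈ insert w' S := heq ▸ mem_insert_self w S
      rcases mem_insert.mp this with h | h
      · exact h
      · exact absurd h hw.2.1
  · -- upper bound: subsets of a k-set of size k-1
    intro S' hS'
    rw [mem_filter] at hS'
    obtain ⟨-, hcardS', hindS'⟩ := hS'
    have hsub : (univ.filter fun s : Finset V => s.card = k - 1 ∧ IsIndepFinset T s).bipartiteBelow
        (fun S S' => S ⊆ S') S' ⊆ S'.powersetCard (k - 1) := by
      intro S hS
      rw [Finset.mem_bipartiteBelow] at hS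
      rw [mem_filter] at hS
      rw [mem_powersetCard]
      exact ⟨hS.2, hS.1.2.1⟩
    have hchoose : k.choose (k - 1) = k := by
      have h1 : k - (k - 1) = 1 := by omega
      have h2 := Nat.choose_symm (Nat.sub_le k 1)
      rw [h1, Nat.choose_one_right] at h2
      omega
    calc ((univ.filter fun s : Finset V => s.card = k - 1 ∧ IsIndepFinset T s).bipartiteBelow
          (fun S S' => S ⊆ S') S').card
        ≤ (S'.powersetCard (k - 1)).card := card_le_card hsub
      _ = k := by rw [Finset.card_powersetCard, hcardS', hchoose]
      _ ≤ k := le_refl k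
end

section
/- For any graph G with n vertices and maximum independent set size α, and any 0 ≤ k ≤ α, the number of independent sets of size k satisfies i_k ≤ C(α,k) · (n/α)^k. -/
open Finset

namespace ZykovAux

attribute [local instance] Classical.propDecidable

variable {V : Type*}

/-- Evaluation of a sum of products after updating two coordinates. -/
lemma eval_update (F : Finset (Finset V)) (x : V → ℚ) (i j : V) (hij : i ≠ j) (p q : ℚ) :
    ∑ A ∈ F, ∏ v ∈ A, Function.update (Function.update x i p) j q v =
      (∑ A ∈ F.filter fun A => i ∉ A ∧ j ∉ A, ∏ v ∈ A, x v)
      + p * ∑ A ∈ F.filter (fun A => i ∈ A ∧ j ∉ A), ∏ v ∈ A.erase i, x v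
      + q * ∑ A ∈ F.filter (fun A => i ∉ A ∧ j ∈ A), ∏ v ∈ A.erase j, x v
      + p * q * ∑ A ∈ F.filter (fun A => i ∈ A ∧ j ∈ A), ∏ v ∈ (A.erase i).erase j, x v := by
  classical
  set z := Function.update (Function.update x i p) j q with hz
  have hzi : z i = p := by
    rw [hz, Function.update_of_ne hij, Function.update_self]
  have hzj : z j = q := by rw [hz, Function.update_self]
  have hzo : ∀ v, v ≠ i → v ≠ j → z v = x v := by
    intro v hvi hvj
    rw [hz, Function.update_of_ne hvj, Function.update_of_ne hvi]
  have key : ∀ A : Finset V, (∏ v ∈ A, z v) =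
      (if i ∈ A then p else 1) * ((if j ∈ A then q else 1) *
        ∏ v ∈ (A.erase i).erase j, x v) := by
    intro A
    have hx : ∀ v ∈ (A.erase i).erase j, z v = x v := by
      intro v hv
      exact hzo v (Finset.ne_of_mem_erase (Finset.mem_of_mem_erase hv)) (Finset.ne_of_mem_erase hv)
    by_cases hiA : i ∈ A <;> by_cases hjA : j ∈ A
    · have hjA' : j ∈ A.erase i := Finset.mem_erase.2 ⟨fun h => hij h.symm, hjA⟩
      rw [← Finset.mul_prod_erase A z hiA, ← Finset.mul_prod_erase (A.erase i) z hjA',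
        hzi, hzj, Finset.prod_congr rfl hx, if_pos hiA, if_pos hjA]
    · have h1 : (A.erase i).erase j = A.erase i := Finset.erase_eq_of_notMem
        (fun h => hjA (Finset.mem_of_mem_erase h))
      rw [← Finset.mul_prod_erase A z hiA, h1, if_pos hiA, if_neg hjA, one_mul]
      congr 1
      refine Finset.prod_congr rfl fun v hv => hzo v (Finset.ne_of_mem_erase hv) ?_
      intro h; exact hjA (h ▸ Finset.mem_of_mem_erase hv)
    · have h1 : A.erase i = A := Finset.erase_eq_of_notMem hiA
      rw [h1, ← Finset.mul_prod_erase A z hjA, hzj, if_neg hiA, if_pos hjA, one_mul]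
      congr 1
      refine Finset.prod_congr rfl fun v hv => hzo v ?_ (Finset.ne_of_mem_erase hv)
      intro h; exact hiA (h ▸ Finset.mem_of_mem_erase hv)
    · have h1 : (A.erase i).erase j = A := by
        rw [Finset.erase_eq_of_notMem hiA, Finset.erase_eq_of_notMem hjA]
      rw [h1, if_neg hiA, if_neg hjA, one_mul, one_mul]
      exact Finset.prod_congr rfl fun v hv => hzo v (fun h => hiA (h ▸ hv)) (fun h => hjA (h ▸ hv))
  calc ∑ A ∈ F, ∏ v ∈ A, z v
      = ∑ A ∈ F, (if i ∈ A then p else 1) * ((if j ∈ A then q else 1) *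
          ∏ v ∈ (A.erase i).erase j, x v) := Finset.sum_congr rfl fun A _ => key A
    _ = _ := by
        rw [← Finset.sum_filter_add_sum_filter_not F (fun A => i ∈ A)]
        rw [← Finset.sum_filter_add_sum_filter_not (F.filter (fun A => i ∈ A)) (fun A => j ∈ A)]
        rw [← Finset.sum_filter_add_sum_filter_not (F.filter (fun A => ¬ i ∈ A)) (fun A => j ∈ A)]
        rw [Finset.filter_filter, Finset.filter_filter, Finset.filter_filter,
          Finset.filter_filter]
        have e1 : ∑ A ∈ F.filter (fun A => i ∈ A ∧ j ∈ A),
            (if i ∈ A then p else 1) * ((if j ∈ A then q else 1) * ∏ v ∈ (A.erase i).erase j, x v)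
            = p * q * ∑ A ∈ F.filter (fun A => i ∈ A ∧ j ∈ A), ∏ v ∈ (A.erase i).erase j, x v := by
          rw [Finset.mul_sum]
          refine Finset.sum_congr rfl fun A hA => ?_
          obtain ⟨-, h1, h2⟩ := Finset.mem_filter.1 hA
          rw [if_pos h1, if_pos h2]; ring
        have e2 : ∑ A ∈ F.filter (fun A => i ∈ A ∧ ¬ j ∈ A),
            (if i ∈ A then p else 1) * ((if j ∈ A then q else 1) * ∏ v ∈ (A.erase i).erase j, x v)
            = p * ∑ A ∈ F.filter (fun A => i ∈ A ∧ j ∉ A), ∏ v ∈ A.erase i, x v := by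
          rw [Finset.mul_sum]
          refine Finset.sum_congr rfl fun A hA => ?_
          obtain ⟨-, h1, h2⟩ := Finset.mem_filter.1 hA
          rw [if_pos h1, if_neg h2, Finset.erase_eq_of_notMem
            (fun h => h2 (Finset.mem_of_mem_erase h))]; ring
        have e3 : ∑ A ∈ F.filter (fun A => ¬ i ∈ A ∧ j ∈ A),
            (if i ∈ A then p else 1) * ((if j ∈ A then q else 1) * ∏ v ∈ (A.erase i).erase j, x v)
            = q * ∑ A ∈ F.filter (fun A => i ∉ A ∧ j ∈ A), ∏ v ∈ A.erase j, x v := by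
          rw [Finset.mul_sum]
          refine Finset.sum_congr rfl fun A hA => ?_
          obtain ⟨-, h1, h2⟩ := Finset.mem_filter.1 hA
          rw [if_neg h1, if_pos h2, Finset.erase_eq_of_notMem h1]; ring
        have e4 : ∑ A ∈ F.filter (fun A => ¬ i ∈ A ∧ ¬ j ∈ A),
            (if i ∈ A then p else 1) * ((if j ∈ A then q else 1) * ∏ v ∈ (A.erase i).erase j, x v)
            = ∑ A ∈ F.filter (fun A => i ∉ A ∧ j ∉ A), ∏ v ∈ A, x v := by
          refine Finset.sum_congr rfl fun A hA => ?_
          obtain ⟨-, h1, h2⟩ := Finset.mem_filter.1 hA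
          rw [if_neg h1, if_neg h2, Finset.erase_eq_of_notMem h1,
            Finset.erase_eq_of_notMem h2, one_mul, one_mul]
        rw [e1, e2, e3, e4]; ring

/-- The two "linear coefficient" sums in the symmetric (powersetCard) case agree. -/
lemma B_eq (s : Finset V) (k : ℕ) (x : V → ℚ) (i j : V) (hij : i ≠ j)
    (hi : i ∈ s) (hj : j ∈ s) :
    ∑ A ∈ (s.powersetCard k).filter (fun A => i ∈ A ∧ j ∉ A), ∏ v ∈ A.erase i, x v
    = ∑ A ∈ (s.powersetCard k).filter (fun A => i ∉ A ∧ j ∈ A), ∏ v ∈ A.erase j, x v := by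
  classical
  refine Finset.sum_nbij' (fun A => insert j (A.erase i)) (fun B => insert i (B.erase j))
    ?_ ?_ ?_ ?_ ?_
  · intro A hA
    obtain ⟨hA, hiA, hjA⟩ := Finset.mem_filter.1 hA
    obtain ⟨hAs, hAc⟩ := Finset.mem_powersetCard.1 hA
    have hjA' : j ∉ A.erase i := fun h => hjA (Finset.mem_of_mem_erase h)
    refine Finset.mem_filter.2 ⟨Finset.mem_powersetCard.2 ⟨?_, ?_⟩, ?_, ?_⟩
    · exact Finset.insert_subset hj ((Finset.erase_subset _ _).trans hAs)
    · rw [Finset.card_insert_of_notMem hjA', Finset.card_erase_of_mem hiA]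
      have : 1 ≤ A.card := Finset.card_pos.2 ⟨i, hiA⟩
      omega
    · intro h
      rcases Finset.mem_insert.1 h with h | h
      · exact hij h
      · exact Finset.notMem_erase i A h
    · exact Finset.mem_insert_self _ _
  · intro B hB
    obtain ⟨hB, hiB, hjB⟩ := Finset.mem_filter.1 hB
    obtain ⟨hBs, hBc⟩ := Finset.mem_powersetCard.1 hB
    have hiB' : i ∉ B.erase j := fun h => hiB (Finset.mem_of_mem_erase h)
    refine Finset.mem_filter.2 ⟨Finset.mem_powersetCard.2 ⟨?_, ?_⟩, ?_, ?_⟩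
    · exact Finset.insert_subset hi ((Finset.erase_subset _ _).trans hBs)
    · rw [Finset.card_insert_of_notMem hiB', Finset.card_erase_of_mem hjB]
      have : 1 ≤ B.card := Finset.card_pos.2 ⟨j, hjB⟩
      omega
    · exact Finset.mem_insert_self _ _
    · intro h
      rcases Finset.mem_insert.1 h with h | h
      · exact hij h.symm
      · exact Finset.notMem_erase j B h
  · intro A hA
    obtain ⟨hA, hiA, hjA⟩ := Finset.mem_filter.1 hA
    have hjA' : j ∉ A.erase i := fun h => hjA (Finset.mem_of_mem_erase h)
    show insert i ((insert j (A.erase i)).erase j) = A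
    rw [Finset.erase_insert hjA', Finset.insert_erase hiA]
  · intro B hB
    obtain ⟨hB, hiB, hjB⟩ := Finset.mem_filter.1 hB
    have hiB' : i ∉ B.erase j := fun h => hiB (Finset.mem_of_mem_erase h)
    show insert j ((insert i (B.erase j)).erase i) = B
    rw [Finset.erase_insert hiB', Finset.insert_erase hjB]
  · intro A hA
    obtain ⟨hA, hiA, hjA⟩ := Finset.mem_filter.1 hA
    have hjA' : j ∉ A.erase i := fun h => hjA (Finset.mem_of_mem_erase h)
    show ∏ v ∈ A.erase i, x v = ∏ v ∈ (insert j (A.erase i)).erase j, x v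
    rw [Finset.erase_insert hjA']

lemma maclaurin_allEq (s : Finset V) (k : ℕ) (y : V → ℚ) (t : ℚ)
    (hall : ∀ v ∈ s, y v = t) :
    ∑ A ∈ s.powersetCard k, ∏ v ∈ A, y v = (s.card.choose k : ℚ) * t ^ k := by
  classical
  have h : ∀ A ∈ s.powersetCard k, (∏ v ∈ A, y v) = t ^ k := by
    intro A hA
    obtain ⟨hAs, hAc⟩ := Finset.mem_powersetCard.1 hA
    rw [Finset.prod_congr rfl (fun v hv => hall v (hAs hv)), Finset.prod_const, hAc]
  rw [Finset.sum_congr rfl h, Finset.sum_const, Finset.card_powersetCard, nsmul_eq_mul]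

/-- Maclaurin-type inequality over a finset, by discrete smoothing. -/
lemma maclaurin (s : Finset V) (k : ℕ) :
    ∀ (d : ℕ) (y : V → ℚ), (∀ v ∈ s, 0 ≤ y v) →
      (s.filter (fun v => y v ≠ (∑ w ∈ s, y w) / (s.card : ℚ))).card ≤ d →
      ∑ A ∈ s.powersetCard k, ∏ v ∈ A, y v
        ≤ (s.card.choose k : ℚ) * ((∑ w ∈ s, y w) / (s.card : ℚ)) ^ k := by
  classical
  intro d
  induction d with
  | zero =>
    intro y hy hcard
    have hall : ∀ v ∈ s, y v = (∑ w ∈ s, y w) / (s.card : ℚ) := by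
      intro v hv
      by_contra h
      have hmem : v ∈ s.filter (fun v => y v ≠ (∑ w ∈ s, y w) / (s.card : ℚ)) :=
        Finset.mem_filter.2 ⟨hv, h⟩
      have := Finset.card_pos.2 ⟨v, hmem⟩
      omega
    exact le_of_eq (maclaurin_allEq s k y _ hall)
  | succ d IH =>
    intro y hy hcard
    set c := ∑ w ∈ s, y w with hc
    set t := c / (s.card : ℚ) with htdef
    by_cases hempty : (s.filter (fun v => y v ≠ t)).card = 0
    · have hall : ∀ v ∈ s, y v = t := by
        intro v hv
        by_contra h
        have hmem : v ∈ s.filter (fun v => y v ≠ t) := Finset.mem_filter.2 ⟨hv, h⟩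
        have := Finset.card_pos.2 ⟨v, hmem⟩
        omega
      exact le_of_eq (maclaurin_allEq s k y t hall)
    · obtain ⟨v, hvfil⟩ := Finset.card_pos.1 (Nat.pos_of_ne_zero hempty)
      obtain ⟨hvs, hvt⟩ := Finset.mem_filter.1 hvfil
      have hscard0 : 0 < s.card := Finset.card_pos.2 ⟨v, hvs⟩
      have hscard : (0:ℚ) < (s.card : ℚ) := by exact_mod_cast hscard0
      have hct : (s.card : ℚ) * t = c := by
        rw [htdef]; field_simp
      have hup : (∃ w ∈ s, y w < t) → ∃ w ∈ s, t < y w := by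
        rintro ⟨w0, hw0, hw0lt⟩
        by_contra hno
        push_neg at hno
        have hlt : ∑ w ∈ s, y w < ∑ w ∈ s, t :=
          Finset.sum_lt_sum hno ⟨w0, hw0, hw0lt⟩
        rw [Finset.sum_const, nsmul_eq_mul, hct, ← hc] at hlt
        exact lt_irrefl _ hlt
      have hdown : (∃ w ∈ s, t < y w) → ∃ w ∈ s, y w < t := by
        rintro ⟨w0, hw0, hw0gt⟩
        by_contra hno
        push_neg at hno
        have hlt : ∑ w ∈ s, t < ∑ w ∈ s, y w :=
          Finset.sum_lt_sum hno ⟨w0, hw0, hw0gt⟩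
        rw [Finset.sum_const, nsmul_eq_mul, hct, ← hc] at hlt
        exact lt_irrefl _ hlt
      have hmain : ∃ i ∈ s, ∃ j ∈ s, y i < t ∧ t < y j := by
        rcases lt_or_gt_of_ne hvt with h | h
        · obtain ⟨j, hjs, hjgt⟩ := hup ⟨v, hvs, h⟩
          exact ⟨v, hvs, j, hjs, h, hjgt⟩
        · obtain ⟨i, his, hilt⟩ := hdown ⟨v, hvs, h⟩
          exact ⟨i, his, v, hvs, hilt, h⟩
      obtain ⟨i, his, j, hjs, hilt, hjgt⟩ := hmain
      have hij : i ≠ j := by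
        rintro rfl
        exact lt_irrefl _ (hilt.trans hjgt)
      set y' := Function.update (Function.update y i t) j (y i + y j - t) with hy'def
      have hy'i : y' i = t := by
        rw [hy'def, Function.update_of_ne hij, Function.update_self]
      have hy'j : y' j = y i + y j - t := by rw [hy'def, Function.update_self]
      have hy'o : ∀ w, w ≠ i → w ≠ j → y' w = y w := by
        intro w hwi hwj
        rw [hy'def, Function.update_of_ne hwj, Function.update_of_ne hwi]
      have ht0 : 0 ≤ t := by
        rw [htdef]
        exact div_nonneg (Finset.sum_nonneg hy) hscard.le
      have hsum' : ∑ w ∈ s, y' w = c := by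
        rw [hy'def, Finset.sum_update_of_mem hjs, Finset.sdiff_singleton_eq_erase,
          Finset.sum_update_of_mem (Finset.mem_erase.2 ⟨hij, his⟩),
          Finset.sdiff_singleton_eq_erase]
        have h1 : y j + ∑ w ∈ s.erase j, y w = ∑ w ∈ s, y w :=
          Finset.add_sum_erase s y hjs
        have h2 : y i + ∑ w ∈ (s.erase j).erase i, y w = ∑ w ∈ s.erase j, y w :=
          Finset.add_sum_erase _ y (Finset.mem_erase.2 ⟨hij, his⟩)
        rw [hc]
        linarith
      have hnn' : ∀ w ∈ s, 0 ≤ y' w := by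
        intro w hw
        rcases eq_or_ne w i with rfl | hwi
        · rw [hy'i]; exact ht0
        rcases eq_or_ne w j with rfl | hwj
        · rw [hy'j]
          have := hy i his
          linarith
        · rw [hy'o w hwi hwj]; exact hy w hw
      have hfil' : (s.filter (fun v => y' v ≠ t)).card ≤ d := by
        have hsub : s.filter (fun v => y' v ≠ t) ⊆ (s.filter (fun v => y v ≠ t)).erase i := by
          intro w hw
          obtain ⟨hws, hwt⟩ := Finset.mem_filter.1 hw
          rcases eq_or_ne w i with rfl | hwi
          · exact absurd hy'i hwt
          refine Finset.mem_erase.2 ⟨hwi, Finset.mem_filter.2 ⟨hws, ?_⟩⟩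
          rcases eq_or_ne w j with rfl | hwj
          · exact hjgt.ne'
          · rw [← hy'o w hwi hwj]; exact hwt
        have hifil : i ∈ s.filter (fun v => y v ≠ t) :=
          Finset.mem_filter.2 ⟨his, hilt.ne⟩
        have h1 := Finset.card_le_card hsub
        rw [Finset.card_erase_of_mem hifil] at h1
        omega
      -- compare the symmetric sums for y and y'
      have hyrep : Function.update (Function.update y i (y i)) j (y j) = y := by
        simp [Function.update_eq_self]
      have h1 := eval_update (s.powersetCard k) y i j hij (y i) (y j)
      rw [hyrep] at h1
      have h2 := eval_update (s.powersetCard k) y i j hij t (y i + y j - t)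
      rw [← hy'def] at h2
      have hBij := B_eq s k y i j hij his hjs
      have hC : 0 ≤ ∑ A ∈ (s.powersetCard k).filter (fun A => i ∈ A ∧ j ∈ A),
          ∏ v ∈ (A.erase i).erase j, y v := by
        refine Finset.sum_nonneg fun A hA => Finset.prod_nonneg fun w hw => ?_
        have hAs := (Finset.mem_powersetCard.1 (Finset.mem_filter.1 hA).1).1
        exact hy w (hAs (Finset.mem_of_mem_erase (Finset.mem_of_mem_erase hw)))
      have hEE : ∑ A ∈ s.powersetCard k, ∏ v ∈ A, y v
          ≤ ∑ A ∈ s.powersetCard k, ∏ v ∈ A, y' v := by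
        rw [h1, h2, hBij]
        have hprod : 0 ≤ (t - y i) * (y j - t) :=
          mul_nonneg (by linarith) (by linarith)
        nlinarith [mul_nonneg hprod hC]
      have hIH := IH y' hnn' (by rw [hsum', ← htdef]; exact hfil')
      rw [hsum', ← htdef] at hIH
      exact hEE.trans hIH

variable [Fintype V]

lemma weighted_of_indep (G : SimpleGraph V) (α k : ℕ) (hk : k ≤ α)
    (hα : IsGreatest {m | ∃ s : Finset V, IsIndepFinset G s ∧ s.card = m} α)
    (x : V → ℚ) (hx : ∀ v, 0 ≤ x v)
    (hind : IsIndepFinset G (univ.filter fun v => x v ≠ 0)) :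
    ∑ S ∈ univ.filter (fun S : Finset V => S.card = k ∧ IsIndepFinset G S), ∏ v ∈ S, x v
      ≤ (α.choose k : ℚ) * ((∑ v, x v) / (α : ℚ)) ^ k := by
  classical
  set T := univ.filter fun v => x v ≠ 0 with hT
  have hTcard : T.card ≤ α := hα.2 ⟨T, hind, rfl⟩
  have hαn : α ≤ (univ : Finset V).card := by
    obtain ⟨s0, hs0, hs0c⟩ := hα.1
    exact hs0c ▸ Finset.card_le_univ s0
  obtain ⟨s, hTs, hsu, hscard⟩ := Finset.exists_subsuperset_card_eq
    (Finset.subset_univ T) hTcard hαn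
  have hzero : ∀ v, v ∉ s → x v = 0 := by
    intro v hv
    by_contra h
    exact hv (hTs (Finset.mem_filter.2 ⟨Finset.mem_univ v, h⟩))
  set F := univ.filter (fun S : Finset V => S.card = k ∧ IsIndepFinset G S) with hF
  have e1 : ∑ S ∈ F.filter (fun S => S ⊆ s), ∏ v ∈ S, x v = ∑ S ∈ F, ∏ v ∈ S, x v := by
    refine Finset.sum_filter_of_ne fun S hS hne => ?_
    intro v hvS
    by_contra hvs
    exact hne (Finset.prod_eq_zero hvS (hzero v hvs))
  have e2 : F.filter (fun S => S ⊆ s) ⊆ s.powersetCard k := by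
    intro S hS
    obtain ⟨hSF, hSs⟩ := Finset.mem_filter.1 hS
    obtain ⟨-, hSk, -⟩ := Finset.mem_filter.1 hSF
    exact Finset.mem_powersetCard.2 ⟨hSs, hSk⟩
  have e3 : ∑ S ∈ F.filter (fun S => S ⊆ s), ∏ v ∈ S, x v
      ≤ ∑ A ∈ s.powersetCard k, ∏ v ∈ A, x v :=
    Finset.sum_le_sum_of_subset_of_nonneg e2
      (fun A _ _ => Finset.prod_nonneg fun v _ => hx v)
  have e4 := maclaurin s k ((s.filter (fun v => x v ≠ (∑ w ∈ s, x w) / (s.card : ℚ))).card)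
    x (fun v _ => hx v) le_rfl
  have e5 : ∑ w ∈ s, x w = ∑ v, x v :=
    Finset.sum_subset hsu (fun v _ hv => hzero v hv)
  rw [hscard, e5] at e4
  calc ∑ S ∈ F, ∏ v ∈ S, x v = ∑ S ∈ F.filter (fun S => S ⊆ s), ∏ v ∈ S, x v := e1.symm
    _ ≤ ∑ A ∈ s.powersetCard k, ∏ v ∈ A, x v := e3
    _ ≤ (α.choose k : ℚ) * ((∑ v, x v) / (α : ℚ)) ^ k := e4

lemma weighted (G : SimpleGraph V) (α k : ℕ) (hk : k ≤ α)
    (hα : IsGreatest {m | ∃ s : Finset V, IsIndepFinset G s ∧ s.card = m} α) :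
    ∀ (N : ℕ) (x : V → ℚ), (∀ v, 0 ≤ x v) →
      (univ.filter fun v => x v ≠ 0).card ≤ N →
      ∑ S ∈ univ.filter (fun S : Finset V => S.card = k ∧ IsIndepFinset G S), ∏ v ∈ S, x v
        ≤ (α.choose k : ℚ) * ((∑ v, x v) / (α : ℚ)) ^ k := by
  classical
  intro N
  induction N with
  | zero =>
    intro x hx hcard
    have hemp : (univ.filter fun v => x v ≠ 0) = ∅ :=
      Finset.card_eq_zero.1 (Nat.le_antisymm hcard (Nat.zero_le _))
    refine weighted_of_indep G α k hk hα x hx ?_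
    intro a ha
    rw [hemp] at ha
    exact absurd ha (Finset.notMem_empty a)
  | succ N IH =>
    intro x hx hcard
    by_cases hind : IsIndepFinset G (univ.filter fun v => x v ≠ 0)
    · exact weighted_of_indep G α k hk hα x hx hind
    · unfold IsIndepFinset at hind
      push_neg at hind
      obtain ⟨a, ha, b, hb, hadj⟩ := hind
      have hab : a ≠ b := G.ne_of_adj hadj
      have hxa : x a ≠ 0 := (Finset.mem_filter.1 ha).2
      have hxb : x b ≠ 0 := (Finset.mem_filter.1 hb).2
      have hxa0 : 0 < x a := (hx a).lt_of_ne (Ne.symm hxa)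
      have hxb0 : 0 < x b := (hx b).lt_of_ne (Ne.symm hxb)
      set F := univ.filter (fun S : Finset V => S.card = k ∧ IsIndepFinset G S) with hF
      have hCempty : F.filter (fun S => a ∈ S ∧ b ∈ S) = ∅ := by
        refine Finset.eq_empty_of_forall_notMem fun S hS => ?_
        obtain ⟨hSF, haS, hbS⟩ := Finset.mem_filter.1 hS
        obtain ⟨-, -, hSind⟩ := Finset.mem_filter.1 hSF
        exact hSind a haS b hbS hadj
      have hrep : Function.update (Function.update x a (x a)) b (x b) = x := by
        simp [Function.update_eq_self]
      have h1 := eval_update F x a b hab (x a) (x b)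
      rw [hrep, hCempty, Finset.sum_empty, mul_zero, add_zero] at h1
      set Ba := ∑ A ∈ F.filter (fun A => a ∈ A ∧ b ∉ A), ∏ v ∈ A.erase a, x v with hBa
      set Bb := ∑ A ∈ F.filter (fun A => a ∉ A ∧ b ∈ A), ∏ v ∈ A.erase b, x v with hBb
      rcases le_total Bb Ba with hcmp | hcmp
      · set x' := Function.update (Function.update x a (x a + x b)) b 0 with hx'def
        have h2 := eval_update F x a b hab (x a + x b) 0
        rw [hCempty, Finset.sum_empty, mul_zero, add_zero, ← hx'def] at h2
        have hx'a : x' a = x a + x b := by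
          rw [hx'def, Function.update_of_ne hab, Function.update_self]
        have hx'b : x' b = 0 := by rw [hx'def, Function.update_self]
        have hx'o : ∀ w, w ≠ a → w ≠ b → x' w = x w := by
          intro w hwa hwb
          rw [hx'def, Function.update_of_ne hwb, Function.update_of_ne hwa]
        have hx'nn : ∀ v, 0 ≤ x' v := by
          intro v
          rcases eq_or_ne v a with rfl | hva
          · rw [hx'a]; positivity
          rcases eq_or_ne v b with rfl | hvb
          · rw [hx'b]
          · rw [hx'o v hva hvb]; exact hx v
        have hsupp : (univ.filter fun v => x' v ≠ 0)
            ⊆ (univ.filter fun v => x v ≠ 0).erase b := by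
          intro w hw
          have hw0 : x' w ≠ 0 := (Finset.mem_filter.1 hw).2
          rcases eq_or_ne w b with rfl | hwb
          · exact absurd hx'b hw0
          refine Finset.mem_erase.2 ⟨hwb, Finset.mem_filter.2 ⟨Finset.mem_univ w, ?_⟩⟩
          rcases eq_or_ne w a with rfl | hwa
          · exact hxa
          · rw [← hx'o w hwa hwb]; exact hw0
        have hcard' : (univ.filter fun v => x' v ≠ 0).card ≤ N := by
          have h3 := Finset.card_le_card hsupp
          rw [Finset.card_erase_of_mem hb] at h3
          omega
        have hIH := IH x' hx'nn hcard'
        have hsum : ∑ v, x' v = ∑ v, x v := by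
          rw [hx'def, Finset.sum_update_of_mem (Finset.mem_univ b),
            Finset.sdiff_singleton_eq_erase,
            Finset.sum_update_of_mem (Finset.mem_erase.2 ⟨hab, Finset.mem_univ a⟩),
            Finset.sdiff_singleton_eq_erase]
          have h3 := Finset.add_sum_erase univ x (Finset.mem_univ b)
          have h4 := Finset.add_sum_erase (univ.erase b) x
            (Finset.mem_erase.2 ⟨hab, Finset.mem_univ a⟩)
          linarith
        rw [hsum] at hIH
        refine le_trans ?_ hIH
        rw [h1, h2]
        nlinarith [mul_le_mul_of_nonneg_left hcmp hxb0.le]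
      · set x' := Function.update (Function.update x a 0) b (x a + x b) with hx'def
        have h2 := eval_update F x a b hab 0 (x a + x b)
        rw [hCempty, Finset.sum_empty, mul_zero, add_zero, ← hx'def] at h2
        have hx'a : x' a = 0 := by
          rw [hx'def, Function.update_of_ne hab, Function.update_self]
        have hx'b : x' b = x a + x b := by rw [hx'def, Function.update_self]
        have hx'o : ∀ w, w ≠ a → w ≠ b → x' w = x w := by
          intro w hwa hwb
          rw [hx'def, Function.update_of_ne hwb, Function.update_of_ne hwa]
        have hx'nn : ∀ v, 0 ≤ x' v := by
          intro v
          rcases eq_or_ne v a with rfl | hva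
          · rw [hx'a]
          rcases eq_or_ne v b with rfl | hvb
          · rw [hx'b]; positivity
          · rw [hx'o v hva hvb]; exact hx v
        have hsupp : (univ.filter fun v => x' v ≠ 0)
            ⊆ (univ.filter fun v => x v ≠ 0).erase a := by
          intro w hw
          have hw0 : x' w ≠ 0 := (Finset.mem_filter.1 hw).2
          rcases eq_or_ne w a with rfl | hwa
          · exact absurd hx'a hw0
          refine Finset.mem_erase.2 ⟨hwa, Finset.mem_filter.2 ⟨Finset.mem_univ w, ?_⟩⟩
          rcases eq_or_ne w b with rfl | hwb
          · exact hxb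
          · rw [← hx'o w hwa hwb]; exact hw0
        have hcard' : (univ.filter fun v => x' v ≠ 0).card ≤ N := by
          have h3 := Finset.card_le_card hsupp
          rw [Finset.card_erase_of_mem ha] at h3
          omega
        have hIH := IH x' hx'nn hcard'
        have hsum : ∑ v, x' v = ∑ v, x v := by
          rw [hx'def, Finset.sum_update_of_mem (Finset.mem_univ b),
            Finset.sdiff_singleton_eq_erase,
            Finset.sum_update_of_mem (Finset.mem_erase.2 ⟨hab, Finset.mem_univ a⟩),
            Finset.sdiff_singleton_eq_erase]
          have h3 := Finset.add_sum_erase univ x (Finset.mem_univ b)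
          have h4 := Finset.add_sum_erase (univ.erase b) x
            (Finset.mem_erase.2 ⟨hab, Finset.mem_univ a⟩)
          linarith
        rw [hsum] at hIH
        refine le_trans ?_ hIH
        rw [h1, h2]
        nlinarith [mul_le_mul_of_nonneg_left hcmp hxa0.le]

end ZykovAux

theorem stmt_6 {V : Type*} [Fintype V] (G : SimpleGraph V) (n α : ℕ)
    (hn : n = Fintype.card V) (hn1 : 1 ≤ n) (hα1 : 1 ≤ α)
    (hα : IsGreatest {m | ∃ s : Finset V, IsIndepFinset G s ∧ s.card = m} α) :
    ∀ k : ℕ, k ≤ α →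
      (indepCount G k : ℚ) ≤ (α.choose k : ℚ) * ((n : ℚ) / (α : ℚ)) ^ k := by
  classical
  intro k hk
  have h := ZykovAux.weighted G α k hk hα (Fintype.card V) (fun _ => (1:ℚ))
    (fun _ => zero_le_one)
    ((Finset.card_filter_le _ _).trans (le_of_eq Finset.card_univ))
  have hL : ∑ S ∈ univ.filter (fun S : Finset V => S.card = k ∧ IsIndepFinset G S),
      ∏ _v ∈ S, (1:ℚ) = (indepCount G k : ℚ) := by
    rw [indepCount]
    simp
  have hR : ∑ _v : V, (1:ℚ) = (n : ℚ) := by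
    rw [hn]
    simp
  rw [hL, hR] at h
  exact h
end

section
/- For any graph G with maximum independent set size α, the sequence (i_k / C(α,k))^{1/k} is weakly decreasing in k for 1 ≤ k ≤ α; equivalently, for all 1 ≤ k ≤ α-1, (i_k / C(α,k))^{k+1} ≥ (i_{k+1} / C(α,k+1))^{k}. -/
open Finset

namespace FRaux
attribute [local instance] Classical.propDecidable

variable {V : Type*}

noncomputable def Esym (s : Finset V) (w : V → ℚ) (j : ℕ) : ℚ :=
  ∑ t ∈ s.powersetCard j, ∏ v ∈ t, w v

lemma Esym_zero (s : Finset V) (w : V → ℚ) : Esym s w 0 = 1 := by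
  simp [Esym]

lemma Esym_of_card_lt {s : Finset V} {j : ℕ} (h : s.card < j) (w : V → ℚ) :
    Esym s w j = 0 := by
  rw [Esym, Finset.powersetCard_eq_empty.2 h, Finset.sum_empty]

lemma Esym_nonneg {s : Finset V} {w : V → ℚ} (hw : ∀ v ∈ s, 0 ≤ w v) (j : ℕ) :
    0 ≤ Esym s w j := by
  apply Finset.sum_nonneg
  intro t ht
  rw [Finset.mem_powersetCard] at ht
  exact Finset.prod_nonneg fun v hv => hw v (ht.1 hv)

lemma Esym_pos {s : Finset V} {w : V → ℚ} (hw : ∀ v ∈ s, 0 < w v) {j : ℕ}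
    (hj : j ≤ s.card) : 0 < Esym s w j := by
  apply Finset.sum_pos
  · intro t ht
    rw [Finset.mem_powersetCard] at ht
    exact Finset.prod_pos fun v hv => hw v (ht.1 hv)
  · exact Finset.powersetCard_nonempty.2 hj

lemma Esym_insert {a : V} {s : Finset V} (ha : a ∉ s) (w : V → ℚ) (j : ℕ) :
    Esym (insert a s) w (j + 1) = Esym s w (j + 1) + w a * Esym s w j := by
  rw [Esym, Finset.powersetCard_succ_insert ha, Finset.sum_union, Finset.sum_image]
  · rw [Esym, Esym, Finset.mul_sum]
    congr 1
    apply Finset.sum_congr rfl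
    intro t ht
    rw [Finset.mem_powersetCard] at ht
    rw [Finset.prod_insert (fun hat => ha (ht.1 hat))]
  · intro t ht t' ht' h
    rw [Finset.mem_coe, Finset.mem_powersetCard] at ht ht'
    have hat : a ∉ t := fun hat => ha (ht.1 hat)
    have hat' : a ∉ t' := fun hat => ha (ht'.1 hat)
    rw [← Finset.erase_insert hat, ← Finset.erase_insert hat', h]
  · rw [Finset.disjoint_right]
    intro t ht hts
    rw [Finset.mem_image] at ht
    obtain ⟨t', ht', rfl⟩ := ht
    rw [Finset.mem_powersetCard] at hts ht'
    exact ha (hts.1 (Finset.mem_insert_self a t'))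

noncomputable def pn (s : Finset V) (w : V → ℚ) (j : ℕ) : ℚ :=
  Esym s w j / (s.card.choose j : ℚ)

lemma pn_zero (s : Finset V) (w : V → ℚ) : pn s w 0 = 1 := by
  simp [pn, Esym_zero]

lemma pn_of_card_lt {s : Finset V} {j : ℕ} (h : s.card < j) (w : V → ℚ) :
    pn s w j = 0 := by
  rw [pn, Esym_of_card_lt h, zero_div]

lemma pn_nonneg {s : Finset V} {w : V → ℚ} (hw : ∀ v ∈ s, 0 ≤ w v) (j : ℕ) :
    0 ≤ pn s w j :=
  div_nonneg (Esym_nonneg hw j) (by positivity)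

lemma pn_pos {s : Finset V} {w : V → ℚ} (hw : ∀ v ∈ s, 0 < w v) {j : ℕ}
    (hj : j ≤ s.card) : 0 < pn s w j :=
  div_pos (Esym_pos hw hj) (by exact_mod_cast Nat.choose_pos hj)

lemma pn_rec {a : V} {s : Finset V} (ha : a ∉ s) (w : V → ℚ) (j : ℕ) :
    ((s.card : ℚ) + 1) * pn (insert a s) w (j + 1)
      = ((s.card : ℚ) - j) * pn s w (j + 1) + ((j : ℚ) + 1) * w a * pn s w j := by
  set m := s.card with hm
  have hcard : (insert a s).card = m + 1 := Finset.card_insert_of_notMem ha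
  rcases lt_or_ge m j with hj | hj
  · rw [pn_of_card_lt (by omega : (insert a s).card < j + 1),
        pn_of_card_lt (by omega : s.card < j + 1),
        pn_of_card_lt (by omega : s.card < j)]
    ring
  · rcases eq_or_lt_of_le hj with hj' | hj'
    · subst hj'
      rw [pn, pn, pn, hcard, Esym_insert ha, Esym_of_card_lt (by omega : s.card < m + 1)]
      simp [Nat.choose_self, ← hm]
      ring
    · have hjm : j + 1 ≤ m := hj'
      have hle : j ≤ m := by omega
      have c1 : (0:ℚ) < (m.choose (j+1) : ℚ) := by exact_mod_cast Nat.choose_pos hjm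
      have c2 : (0:ℚ) < (m.choose j : ℚ) := by exact_mod_cast Nat.choose_pos hle
      have c3 : (0:ℚ) < ((m+1).choose (j+1) : ℚ) := by
        exact_mod_cast Nat.choose_pos (by omega : j + 1 ≤ m + 1)
      have idA : ((m:ℚ) + 1) * (m.choose (j+1) : ℚ)
          = ((m:ℚ) - j) * ((m+1).choose (j+1) : ℚ) := by
        have h0 := Nat.choose_mul_succ_eq m (j+1)
        rw [Nat.succ_sub_succ] at h0
        have hc := congrArg (fun n : ℕ => (n:ℚ)) h0
        push_cast [Nat.cast_sub hle] at hc
        linear_combination hc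
      have idB : ((m:ℚ) + 1) * (m.choose j : ℚ)
          = ((j:ℚ) + 1) * ((m+1).choose (j+1) : ℚ) := by
        have h0 := Nat.add_one_mul_choose_eq m j
        have hc := congrArg (fun n : ℕ => (n:ℚ)) h0
        push_cast at hc
        linear_combination hc
      rw [pn, pn, pn, hcard, Esym_insert ha, ← hm]
      field_simp
      linear_combination (Esym s w (j+1)) * (m.choose j : ℚ) * idA + w a * Esym s w j * (m.choose (j+1) : ℚ) * idB

lemma step_alg0 (M t p1 p2 : ℚ) (hM : 1 ≤ M) (h1 : 0 ≤ p1) (IH : p2 ≤ p1 ^ 2) :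
    (M + 1) * ((M - 1) * p2 + 2 * t * p1) ≤ (M * p1 + t) ^ 2 := by
  nlinarith [mul_le_mul_of_nonneg_left IH (by nlinarith : (0:ℚ) ≤ M ^ 2 - 1),
    sq_nonneg (p1 - t)]

lemma step_alg (M L t pa pr pq pb : ℚ) (ht : 0 < t) (hL : 0 ≤ L) (hcM : L + 2 ≤ M)
    (hapos : 0 < pa) (hrpos : 0 < pr) (hqpos : 0 < pq) (hbnn : 0 ≤ pb)
    (IH1 : pa * pq ≤ pr ^ 2) (IH2 : pr * pb ≤ pq ^ 2) (IH3 : pa * pb ≤ pr * pq) :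
    ((M - L) * pr + (L + 1) * t * pa) * ((M - (L + 2)) * pb + (L + 3) * t * pq)
      ≤ ((M - (L + 1)) * pq + (L + 2) * t * pr) ^ 2 := by
  have c2 : (0:ℚ) ≤ M - (L + 2) := by linarith
  have c0 : (0:ℚ) ≤ M - L := by linarith
  have e1 : (M - L) * (M - (L + 2)) * (pr * pb) ≤ (M - L) * (M - (L + 2)) * pq ^ 2 :=
    mul_le_mul_of_nonneg_left IH2 (mul_nonneg c0 c2)
  have e2 : (L + 1) * (M - (L + 2)) * t * (pa * pb) ≤ (L + 1) * (M - (L + 2)) * t * (pr * pq) :=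
    mul_le_mul_of_nonneg_left IH3 (by positivity)
  have e3 : (L + 1) * (L + 3) * t ^ 2 * (pa * pq) ≤ (L + 1) * (L + 3) * t ^ 2 * pr ^ 2 :=
    mul_le_mul_of_nonneg_left IH1 (by positivity)
  nlinarith [e1, e2, e3, sq_nonneg (pq - t * pr)]

lemma newton (s : Finset V) (w : V → ℚ) (hw : ∀ v ∈ s, 0 < w v) :
    ∀ j : ℕ, pn s w j * pn s w (j + 2) ≤ pn s w (j + 1) ^ 2 := by
  induction s using Finset.induction with
  | empty =>
    intro j
    rw [pn_of_card_lt (by simp : (∅ : Finset V).card < j + 2)]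
    simp [sq_nonneg]
  | @insert a s ha IH =>
    intro j
    have hpos : ∀ v ∈ s, 0 < w v := fun v hv => hw v (Finset.mem_insert_of_mem hv)
    have hwa : 0 < w a := hw a (Finset.mem_insert_self a s)
    have IH' := IH hpos
    have hnn : ∀ i : ℕ, 0 ≤ pn s w i := fun i => pn_nonneg (fun v hv => le_of_lt (hpos v hv)) i
    have hnn' : ∀ i : ℕ, 0 ≤ pn (insert a s) w i :=
      fun i => pn_nonneg (fun v hv => le_of_lt (hw v hv)) i
    have hM : (0:ℚ) < (s.card : ℚ) + 1 := by positivity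
    have hsq : (0:ℚ) < ((s.card:ℚ) + 1) ^ 2 := by positivity
    have hcard : (insert a s).card = s.card + 1 := Finset.card_insert_of_notMem ha
    rcases lt_or_ge (s.card + 1) (j + 2) with hbig | hsmall
    · rw [pn_of_card_lt (by omega : (insert a s).card < j + 2) w, mul_zero]
      exact sq_nonneg _
    · have hj1m : j + 1 ≤ s.card := by omega
      rcases Nat.eq_zero_or_pos j with rfl | hjpos
      · -- j = 0 case
        have R0 := pn_rec ha w 0
        have R1 := pn_rec ha w 1
        rw [pn_zero] at R0
        norm_num at R0 R1
        have step0 : ((s.card:ℚ) + 1) * (((s.card:ℚ) - 1) * pn s w 2 + 2 * w a * pn s w 1)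
            ≤ ((s.card:ℚ) * pn s w 1 + w a) ^ 2 := by
          rcases Nat.eq_zero_or_pos s.card with hm0 | hmpos
          · have z1 : pn s w 1 = 0 := pn_of_card_lt (by omega) w
            have z2 : pn s w 2 = 0 := pn_of_card_lt (by omega) w
            rw [z1, z2, hm0]
            push_cast
            nlinarith [hwa]
          · have hm1 : (1:ℚ) ≤ (s.card:ℚ) := by exact_mod_cast hmpos
            have h2 : pn s w 2 ≤ pn s w 1 ^ 2 := by
              have := IH' 0
              rwa [pn_zero, one_mul] at this
            exact step_alg0 (s.card:ℚ) (w a) (pn s w 1) (pn s w 2) hm1 (hnn 1) h2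
        have q1 : ((s.card:ℚ) + 1) ^ 2 * pn (insert a s) w 2
            = ((s.card:ℚ) + 1) * (((s.card:ℚ) - 1) * pn s w 2 + 2 * w a * pn s w 1) := by
          linear_combination ((s.card:ℚ) + 1) * R1
        have q2 : ((s.card:ℚ) + 1) ^ 2 * (pn (insert a s) w 1 ^ 2)
            = ((s.card:ℚ) * pn s w 1 + w a) ^ 2 := by
          linear_combination (((s.card:ℚ) + 1) * pn (insert a s) w 1
            + ((s.card:ℚ) * pn s w 1 + w a)) * R0
        have h2' : ((s.card:ℚ) + 1) ^ 2 * (pn (insert a s) w 0 * pn (insert a s) w 2)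
            ≤ ((s.card:ℚ) + 1) ^ 2 * (pn (insert a s) w 1 ^ 2) := by
          rw [pn_zero, one_mul]
          linarith [step0, q1, q2]
        exact le_of_mul_le_mul_left h2' hsq
      · -- j = l + 1 case
        obtain ⟨l, rfl⟩ : ∃ l, j = l + 1 := ⟨j - 1, by omega⟩
        have hl2m : l + 2 ≤ s.card := by omega
        have Ra := pn_rec ha w l
        have Rb := pn_rec ha w (l + 1)
        have Rc := pn_rec ha w (l + 2)
        rw [show l + 1 + 1 = l + 2 from rfl] at Rb
        rw [show l + 2 + 1 = l + 3 from rfl] at Rc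
        push_cast at Ra Rb Rc
        have IH1 : pn s w l * pn s w (l + 2) ≤ pn s w (l + 1) ^ 2 := IH' l
        have IH2 : pn s w (l + 1) * pn s w (l + 3) ≤ pn s w (l + 2) ^ 2 := IH' (l + 1)
        have hapos : 0 < pn s w l := pn_pos hpos (by omega)
        have hrpos : 0 < pn s w (l + 1) := pn_pos hpos (by omega)
        have hqpos : 0 < pn s w (l + 2) := pn_pos hpos (by omega)
        have IH3 : pn s w l * pn s w (l + 3) ≤ pn s w (l + 1) * pn s w (l + 2) := by
          have h := mul_le_mul IH1 IH2 (mul_nonneg (le_of_lt hrpos) (hnn _)) (by positivity)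
          nlinarith [h, hrpos, hqpos, hnn (l + 3)]
        have hcast : (l:ℚ) + 2 ≤ (s.card : ℚ) := by exact_mod_cast hl2m
        have sa := step_alg (s.card : ℚ) (l:ℚ) (w a)
          (pn s w l) (pn s w (l + 1)) (pn s w (l + 2)) (pn s w (l + 3))
          hwa (by positivity) hcast hapos hrpos hqpos (hnn _) IH1 IH2 IH3
        have key : (((s.card:ℚ) + 1) * pn (insert a s) w (l + 1))
              * (((s.card:ℚ) + 1) * pn (insert a s) w (l + 3))
            ≤ (((s.card:ℚ) + 1) * pn (insert a s) w (l + 2)) ^ 2 := by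
          rw [Ra, Rb, Rc]
          linarith [sa]
        have h2' : ((s.card:ℚ) + 1) ^ 2 * (pn (insert a s) w (l + 1) * pn (insert a s) w (l + 1 + 2))
            ≤ ((s.card:ℚ) + 1) ^ 2 * (pn (insert a s) w (l + 1 + 1) ^ 2) := by
          rw [show l + 1 + 2 = l + 3 from rfl, show l + 1 + 1 = l + 2 from rfl]
          nlinarith [key, hnn' (l+1), hnn' (l+2), hnn' (l+3)]
        exact le_of_mul_le_mul_left h2' hsq

lemma maclaurin (s : Finset V) (w : V → ℚ) (hw : ∀ v ∈ s, 0 < w v) :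
    ∀ k : ℕ, 1 ≤ k → pn s w (k + 1) ^ k ≤ pn s w k ^ (k + 1) := by
  intro k
  induction k with
  | zero => intro h; omega
  | succ k IHk =>
    intro _
    have hnn : ∀ i : ℕ, 0 ≤ pn s w i := fun i => pn_nonneg (fun v hv => le_of_lt (hw v hv)) i
    rcases Nat.eq_zero_or_pos k with rfl | hkpos
    · -- k + 1 = 1 : pn 2 ≤ pn 1 ^ 2
      have := newton s w hw 0
      rw [pn_zero, one_mul] at this
      simpa using this
    · rcases lt_or_ge s.card (k + 2) with hbig | hsmall
      · rw [pn_of_card_lt hbig w]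
        rw [zero_pow (by omega : k + 1 ≠ 0)]
        exact pow_nonneg (hnn _) _
      · have h0 : 0 < pn s w k := pn_pos hw (by omega)
        have h1 : 0 < pn s w (k + 1) := pn_pos hw (by omega)
        have h2 : 0 < pn s w (k + 2) := pn_pos hw (by omega)
        have hnewton := newton s w hw k
        have IH := IHk hkpos
        have step1 : (pn s w k * pn s w (k + 2)) ^ (k + 1) ≤ (pn s w (k + 1) ^ 2) ^ (k + 1) :=
          pow_le_pow_left₀ (by positivity) hnewton _
        have e1 : (pn s w k * pn s w (k + 2)) ^ (k + 1)
            = pn s w (k + 2) ^ (k + 1) * pn s w k ^ (k + 1) := by ring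
        have e2 : (pn s w (k + 1) ^ 2) ^ (k + 1)
            = pn s w (k + 1) ^ (k + 2) * pn s w (k + 1) ^ k := by
          rw [← pow_add, ← pow_mul]
          congr 1
          omega
        have step2 : pn s w (k + 1) ^ (k + 2) * pn s w (k + 1) ^ k
            ≤ pn s w (k + 1) ^ (k + 2) * pn s w k ^ (k + 1) :=
          mul_le_mul_of_nonneg_left IH (by positivity)
        have final : pn s w (k + 2) ^ (k + 1) * pn s w k ^ (k + 1)
            ≤ pn s w (k + 1) ^ (k + 2) * pn s w k ^ (k + 1) := by
          calc pn s w (k + 2) ^ (k + 1) * pn s w k ^ (k + 1)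
              = (pn s w k * pn s w (k + 2)) ^ (k + 1) := e1.symm
            _ ≤ (pn s w (k + 1) ^ 2) ^ (k + 1) := step1
            _ = pn s w (k + 1) ^ (k + 2) * pn s w (k + 1) ^ k := e2
            _ ≤ pn s w (k + 1) ^ (k + 2) * pn s w k ^ (k + 1) := step2
        exact le_of_mul_le_mul_right final (by positivity)

lemma maclaurin_E (s : Finset V) (w : V → ℚ) (hw : ∀ v ∈ s, 0 < w v) (k : ℕ) (hk : 1 ≤ k) :
    Esym s w (k + 1) ^ k * (s.card.choose k : ℚ) ^ (k + 1)
      ≤ Esym s w k ^ (k + 1) * (s.card.choose (k + 1) : ℚ) ^ k := by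
  have hnnE : ∀ i : ℕ, 0 ≤ Esym s w i := fun i => Esym_nonneg (fun v hv => le_of_lt (hw v hv)) i
  rcases lt_or_ge s.card (k + 1) with hbig | hsmall
  · rw [Esym_of_card_lt hbig w, zero_pow (by omega : k ≠ 0)]
    rw [zero_mul]
    exact mul_nonneg (pow_nonneg (hnnE k) _) (by positivity)
  · have c0 : (0:ℚ) < (s.card.choose k : ℚ) := by
      exact_mod_cast Nat.choose_pos (by omega : k ≤ s.card)
    have c1 : (0:ℚ) < (s.card.choose (k+1) : ℚ) := by exact_mod_cast Nat.choose_pos hsmall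
    have h := maclaurin s w hw k hk
    rw [pn, pn, div_pow, div_pow, div_le_div_iff₀ (by positivity) (by positivity)] at h
    linarith [h]

lemma pow_binom_aux : ∀ (k a : ℕ), (a + k + 1) * a ^ k ≤ (a + 1) ^ (k + 1) := by
  intro k
  induction k with
  | zero => intro a; simp
  | succ k IH =>
    intro a
    have h1 := Nat.mul_le_mul_left (a + 1) (IH a)
    have h2 : (a + (k + 1) + 1) * a ^ (k + 1) ≤ (a + 1) * ((a + k + 1) * a ^ k) := by
      have : (a + (k + 1) + 1) * a ≤ (a + 1) * (a + k + 1) := by nlinarith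
      calc (a + (k + 1) + 1) * a ^ (k + 1) = ((a + (k + 1) + 1) * a) * a ^ k := by ring
        _ ≤ ((a + 1) * (a + k + 1)) * a ^ k := Nat.mul_le_mul_right _ this
        _ = (a + 1) * ((a + k + 1) * a ^ k) := by ring
    calc (a + (k + 1) + 1) * a ^ (k + 1) ≤ (a + 1) * ((a + k + 1) * a ^ k) := h2
      _ ≤ (a + 1) * (a + 1) ^ (k + 1) := h1
      _ = (a + 1) ^ (k + 2) := by ring

lemma choose_mono (k m : ℕ) (hm : k + 1 ≤ m) :
    ∀ α, m ≤ α →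
      (m.choose (k+1)) ^ k * (α.choose k) ^ (k+1) ≤ (α.choose (k+1)) ^ k * (m.choose k) ^ (k+1) := by
  intro α hα
  induction α, hα using Nat.le_induction with
  | base => exact le_rfl
  | succ α hα IH =>
    have IH' := IH
    have hkα : k + 1 ≤ α := le_trans hm hα
    have e1 : ((α+1).choose k) ^ (k+1) * (α+1-k) ^ (k+1) = (α+1) ^ (k+1) * (α.choose k) ^ (k+1) := by
      rw [← mul_pow, ← mul_pow]
      congr 1
      have h := Nat.choose_mul_succ_eq α k
      exact h.symm.trans (mul_comm _ _)
    have e2 : ((α+1).choose (k+1)) ^ k * (α-k) ^ k = (α+1) ^ k * (α.choose (k+1)) ^ k := by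
      rw [← mul_pow, ← mul_pow]
      congr 1
      have h := Nat.choose_mul_succ_eq α (k+1)
      rw [show α + 1 - (k+1) = α - k by omega] at h
      exact h.symm.trans (mul_comm _ _)
    have key : (α+1) * (α-k) ^ k ≤ (α+1-k) ^ (k+1) := by
      have h := pow_binom_aux k (α - k)
      have ea : α - k + k + 1 = α + 1 := by omega
      have eb : α - k + 1 = α + 1 - k := by omega
      rwa [ea, eb] at h
    have Ppos : 0 < (α+1-k) ^ (k+1) * (α-k) ^ k := by
      have h1 : 0 < α + 1 - k := by omega
      have h2 : 0 < α - k := by omega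
      exact Nat.mul_pos (Nat.pow_pos h1) (Nat.pow_pos h2)
    apply Nat.le_of_mul_le_mul_right _ Ppos
    calc (m.choose (k+1)) ^ k * ((α+1).choose k) ^ (k+1) * ((α+1-k) ^ (k+1) * (α-k) ^ k)
        = (m.choose (k+1)) ^ k * (α-k) ^ k * (((α+1).choose k) ^ (k+1) * (α+1-k) ^ (k+1)) := by ring
      _ = (m.choose (k+1)) ^ k * (α-k) ^ k * ((α+1) ^ (k+1) * (α.choose k) ^ (k+1)) := by rw [e1]
      _ = ((m.choose (k+1)) ^ k * (α.choose k) ^ (k+1)) * (α+1) ^ k * ((α+1) * (α-k) ^ k) := by ring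
      _ ≤ ((m.choose (k+1)) ^ k * (α.choose k) ^ (k+1)) * (α+1) ^ k * (α+1-k) ^ (k+1) := by
          exact Nat.mul_le_mul_left _ key
      _ ≤ ((α.choose (k+1)) ^ k * (m.choose k) ^ (k+1)) * (α+1) ^ k * (α+1-k) ^ (k+1) := by
          exact Nat.mul_le_mul_right _ (Nat.mul_le_mul_right _ IH')
      _ = (m.choose k) ^ (k+1) * (α+1-k) ^ (k+1) * (((α+1) ^ k) * (α.choose (k+1)) ^ k) := by ring
      _ = (m.choose k) ^ (k+1) * (α+1-k) ^ (k+1) * (((α+1).choose (k+1)) ^ k * (α-k) ^ k) := by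
          rw [e2]
      _ = ((α+1).choose (k+1)) ^ k * (m.choose k) ^ (k+1) * ((α+1-k) ^ (k+1) * (α-k) ^ k) := by
          ring

lemma maclaurin_alpha (s : Finset V) (w : V → ℚ) (hw : ∀ v ∈ s, 0 < w v) (k : ℕ) (hk : 1 ≤ k)
    (α : ℕ) (hsα : s.card ≤ α) :
    Esym s w (k + 1) ^ k * (α.choose k : ℚ) ^ (k + 1)
      ≤ Esym s w k ^ (k + 1) * (α.choose (k + 1) : ℚ) ^ k := by
  have hnnE : ∀ i : ℕ, 0 ≤ Esym s w i := fun i => Esym_nonneg (fun v hv => le_of_lt (hw v hv)) i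
  rcases lt_or_ge s.card (k + 1) with hbig | hsmall
  · rw [Esym_of_card_lt hbig w, zero_pow (by omega : k ≠ 0), zero_mul]
    exact mul_nonneg (pow_nonneg (hnnE k) _) (by positivity)
  · have c0 : (0:ℚ) < (s.card.choose k : ℚ) := by
      exact_mod_cast Nat.choose_pos (by omega : k ≤ s.card)
    have c1 : (0:ℚ) < (s.card.choose (k+1) : ℚ) := by exact_mod_cast Nat.choose_pos hsmall
    have mac := maclaurin_E s w hw k hk
    have mono : ((s.card.choose (k+1) : ℚ)) ^ k * ((α.choose k : ℚ)) ^ (k+1)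
        ≤ ((α.choose (k+1) : ℚ)) ^ k * ((s.card.choose k : ℚ)) ^ (k+1) := by
      exact_mod_cast choose_mono k s.card hsmall α hsα
    have h1 : Esym s w (k+1) ^ k * (α.choose k : ℚ) ^ (k+1) * (s.card.choose k : ℚ) ^ (k+1)
        ≤ Esym s w k ^ (k+1) * (α.choose (k+1) : ℚ) ^ k * (s.card.choose k : ℚ) ^ (k+1) := by
      calc Esym s w (k+1) ^ k * (α.choose k : ℚ) ^ (k+1) * (s.card.choose k : ℚ) ^ (k+1)
          = (Esym s w (k+1) ^ k * (s.card.choose k : ℚ) ^ (k+1)) * (α.choose k : ℚ) ^ (k+1) := by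
            ring
        _ ≤ (Esym s w k ^ (k+1) * (s.card.choose (k+1) : ℚ) ^ k) * (α.choose k : ℚ) ^ (k+1) := by
            apply mul_le_mul_of_nonneg_right mac (by positivity)
        _ = Esym s w k ^ (k+1) * ((s.card.choose (k+1) : ℚ) ^ k * (α.choose k : ℚ) ^ (k+1)) := by
            ring
        _ ≤ Esym s w k ^ (k+1) * ((α.choose (k+1) : ℚ) ^ k * (s.card.choose k : ℚ) ^ (k+1)) := by
            apply mul_le_mul_of_nonneg_left mono (pow_nonneg (hnnE k) _)
        _ = Esym s w k ^ (k+1) * (α.choose (k+1) : ℚ) ^ k * (s.card.choose k : ℚ) ^ (k+1) := by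
            ring
    exact le_of_mul_le_mul_right h1 (by positivity)

section Graph

variable {V : Type*} [Fintype V] (G : SimpleGraph V)

noncomputable def indS (j : ℕ) : Finset (Finset V) :=
  Finset.univ.filter fun s : Finset V => s.card = j ∧ IsIndepFinset G s

noncomputable def wf (j : ℕ) (w : V → ℚ) : ℚ :=
  ∑ s ∈ indS G j, ∏ v ∈ s, w v

noncomputable def wB (j : ℕ) (u : V) (w : V → ℚ) : ℚ :=
  ∑ s ∈ (indS G j).filter (fun s => u ∈ s), ∏ v ∈ s.erase u, w v

variable {G}

lemma indep_subset {s t : Finset V} (h : s ⊆ t) (ht : IsIndepFinset G t) :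
    IsIndepFinset G s := fun a ha b hb => ht a (h ha) b (h hb)

lemma wf_nonneg {w : V → ℚ} (hw : ∀ v, 0 ≤ w v) (j : ℕ) : 0 ≤ wf G j w :=
  Finset.sum_nonneg fun s _ => Finset.prod_nonneg fun v _ => hw v

lemma wB_nonneg {w : V → ℚ} (hw : ∀ v, 0 ≤ w v) (j : ℕ) (u : V) : 0 ≤ wB G j u w :=
  Finset.sum_nonneg fun s _ => Finset.prod_nonneg fun v _ => hw v

lemma wf_split (j : ℕ) (u : V) (w : V → ℚ) :
    wf G j w = wf G j (Function.update w u 0) + w u * wB G j u w := by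
  have key : ∀ w' : V → ℚ, wf G j w'
      = (∑ s ∈ (indS G j).filter (fun s => u ∈ s), ∏ v ∈ s, w' v)
        + ∑ s ∈ (indS G j).filter (fun s => ¬ u ∈ s), ∏ v ∈ s, w' v := by
    intro w'
    rw [wf, Finset.sum_filter_add_sum_filter_not]
  rw [key w, key (Function.update w u 0)]
  have e1 : ∑ s ∈ (indS G j).filter (fun s => u ∈ s), ∏ v ∈ s, Function.update w u 0 v = 0 := by
    apply Finset.sum_eq_zero
    intro s hs
    exact Finset.prod_eq_zero (Finset.mem_filter.1 hs).2 (Function.update_self u 0 w)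
  have e2 : ∑ s ∈ (indS G j).filter (fun s => ¬ u ∈ s), ∏ v ∈ s, Function.update w u 0 v
      = ∑ s ∈ (indS G j).filter (fun s => ¬ u ∈ s), ∏ v ∈ s, w v := by
    apply Finset.sum_congr rfl
    intro s hs
    apply Finset.prod_congr rfl
    intro x hx
    exact Function.update_of_ne (fun hxu => (Finset.mem_filter.1 hs).2 (by rw [← hxu]; exact hx)) 0 w
  have e3 : ∑ s ∈ (indS G j).filter (fun s => u ∈ s), ∏ v ∈ s, w v = w u * wB G j u w := by
    rw [wB, Finset.mul_sum]
    apply Finset.sum_congr rfl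
    intro s hs
    exact (Finset.mul_prod_erase s w (Finset.mem_filter.1 hs).2).symm
  rw [e1, e2, e3]
  ring

lemma wB_step_zero {w : V → ℚ} (hw : ∀ v, 0 ≤ w v) {k : ℕ} (hk : 1 ≤ k) {u : V}
    (h : wB G k u w = 0) : wB G (k + 1) u w = 0 := by
  have hnn : ∀ s ∈ (indS G (k+1)).filter (fun s => u ∈ s), (0:ℚ) ≤ ∏ v ∈ s.erase u, w v :=
    fun s _ => Finset.prod_nonneg fun v _ => hw v
  have hz := (Finset.sum_eq_zero_iff_of_nonneg
    (fun s hs => Finset.prod_nonneg fun v _ => hw v)).1 h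
  apply Finset.sum_eq_zero
  intro s hs
  by_contra hne
  obtain ⟨hs', hus⟩ := Finset.mem_filter.1 hs
  obtain ⟨hcard, hind⟩ := (Finset.mem_filter.1 hs').2
  have hfac : ∀ x ∈ s.erase u, w x ≠ 0 := Finset.prod_ne_zero_iff.1 hne
  have hce : (s.erase u).card = k := by
    rw [Finset.card_erase_of_mem hus, hcard]
    omega
  have hne' : (s.erase u).Nonempty := Finset.card_pos.1 (by omega)
  obtain ⟨x₀, hx₀⟩ := hne'
  have hx₀s : x₀ ∈ s := Finset.mem_of_mem_erase hx₀
  have hx₀u : x₀ ≠ u := (Finset.mem_erase.1 hx₀).1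
  set s' := s.erase x₀ with hs'def
  have hs'mem : s' ∈ (indS G k).filter (fun t => u ∈ t) := by
    rw [Finset.mem_filter]
    constructor
    · rw [indS, Finset.mem_filter]
      refine ⟨Finset.mem_univ _, ?_, indep_subset (Finset.erase_subset _ _) hind⟩
      rw [Finset.card_erase_of_mem hx₀s, hcard]
      omega
    · exact Finset.mem_erase.2 ⟨fun h' => hx₀u h'.symm, hus⟩
  have hterm := hz s' hs'mem
  have : ∏ v ∈ s'.erase u, w v ≠ 0 := by
    apply Finset.prod_ne_zero_iff.2
    intro x hx
    apply hfac
    have hxs' : x ∈ s' := Finset.mem_of_mem_erase hx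
    exact Finset.mem_erase.2 ⟨(Finset.mem_erase.1 hx).1, Finset.mem_of_mem_erase hxs'⟩
  exact this hterm

lemma indep_pair_not_mem {u v : V} (huv : G.Adj u v) {s : Finset V}
    (hind : IsIndepFinset G s) (hu : u ∈ s) : v ∉ s :=
  fun hv => hind u hu v hv huv

lemma wB_congr {u v : V} (huv : G.Adj u v) {w₁ w₂ : V → ℚ}
    (h : ∀ x, x ≠ u → x ≠ v → w₁ x = w₂ x) (j : ℕ) : wB G j u w₁ = wB G j u w₂ := by
  apply Finset.sum_congr rfl
  intro s hs
  obtain ⟨hs', hus⟩ := Finset.mem_filter.1 hs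
  have hind := ((Finset.mem_filter.1 hs').2).2
  have hvs : v ∉ s := indep_pair_not_mem huv hind hus
  apply Finset.prod_congr rfl
  intro x hx
  exact h x (Finset.mem_erase.1 hx).1 (fun hxv => hvs (hxv ▸ Finset.mem_of_mem_erase hx))

lemma wf_split2 {u v : V} (huv : G.Adj u v) (j : ℕ) (w : V → ℚ) :
    wf G j w = wf G j (Function.update (Function.update w u 0) v 0)
      + w u * wB G j u w + w v * wB G j v w := by
  have hne : u ≠ v := G.ne_of_adj huv
  have h1 := wf_split (G := G) j u w
  have h2 := wf_split (G := G) j v (Function.update w u 0)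
  have e1 : Function.update w u 0 v = w v := Function.update_of_ne (Ne.symm hne) 0 w
  have e2 : wB G j v (Function.update w u 0) = wB G j v w := by
    apply wB_congr huv.symm
    intro x hxv hxu
    exact Function.update_of_ne hxu 0 w
  rw [e1, e2] at h2
  linarith [h1, h2]

lemma supp_update_zero (w : V → ℚ) (u : V) :
    (Finset.univ.filter fun x => Function.update w u 0 x ≠ 0)
      = (Finset.univ.filter fun x => w x ≠ 0).erase u := by
  ext x
  rw [Finset.mem_erase, Finset.mem_filter, Finset.mem_filter]
  rcases eq_or_ne x u with rfl | hxu
  · simp [Function.update_self]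
  · simp [Function.update_of_ne hxu, hxu]

lemma wf_eq_esym {w : V → ℚ} (hind : IsIndepFinset G (Finset.univ.filter fun v => w v ≠ 0))
    (j : ℕ) : wf G j w = Esym (Finset.univ.filter fun v => w v ≠ 0) w j := by
  set σ := Finset.univ.filter fun v => w v ≠ 0 with hσ
  rw [wf, Esym]
  apply (Finset.sum_subset ?_ ?_).symm
  · intro t ht
    rw [Finset.mem_powersetCard] at ht
    rw [indS, Finset.mem_filter]
    exact ⟨Finset.mem_univ _, ht.2, indep_subset ht.1 hind⟩
  · intro s hs hnotin
    obtain ⟨-, hcard, -⟩ := Finset.mem_filter.1 hs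
    have hns : ¬ s ⊆ σ := fun hsub => hnotin (Finset.mem_powersetCard.2 ⟨hsub, hcard⟩)
    obtain ⟨x, hxs, hxσ⟩ := Finset.not_subset.1 hns
    apply Finset.prod_eq_zero hxs
    by_contra hwx
    exact hxσ (Finset.mem_filter.2 ⟨Finset.mem_univ _, hwx⟩)

lemma base_case {α k : ℕ} (hub : ∀ s : Finset V, IsIndepFinset G s → s.card ≤ α) (hk : 1 ≤ k)
    {w : V → ℚ} (hw : ∀ v, 0 ≤ w v)
    (hind : IsIndepFinset G (Finset.univ.filter fun v => w v ≠ 0)) :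
    wf G (k + 1) w ^ k * (α.choose k : ℚ) ^ (k + 1)
      ≤ wf G k w ^ (k + 1) * (α.choose (k + 1) : ℚ) ^ k := by
  set σ := Finset.univ.filter fun v => w v ≠ 0 with hσ
  have hpos : ∀ v ∈ σ, 0 < w v := by
    intro v hv
    exact lt_of_le_of_ne (hw v) (Ne.symm (Finset.mem_filter.1 hv).2)
  rw [wf_eq_esym hind, wf_eq_esym hind]
  exact maclaurin_alpha σ w hpos k hk α (hub σ hind)

lemma move_lemma {u v : V} (huv : G.Adj u v) {w : V → ℚ} (hw : ∀ x, 0 ≤ w x) {k : ℕ}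
    (hu : w u ≠ 0) (hv : w v ≠ 0) (hB : wB G k u w ≠ 0)
    (hdir : wB G (k + 1) v w * wB G k u w ≤ wB G (k + 1) u w * wB G k v w) :
    ∃ w' : V → ℚ, (∀ x, 0 ≤ w' x)
      ∧ (Finset.univ.filter fun x => w' x ≠ 0)
          = (Finset.univ.filter fun x => w x ≠ 0).erase v
      ∧ wf G k w' = wf G k w ∧ wf G (k + 1) w ≤ wf G (k + 1) w' := by
  have hne : u ≠ v := G.ne_of_adj huv
  have hBpos : 0 < wB G k u w := lt_of_le_of_ne (wB_nonneg hw k u) (Ne.symm hB)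
  have hupos : 0 < w u := lt_of_le_of_ne (hw u) (Ne.symm hu)
  set c : ℚ := w u + wB G k v w / wB G k u w * w v with hc
  have hcpos : 0 < c := by
    have h0 : 0 ≤ wB G k v w / wB G k u w * w v :=
      mul_nonneg (div_nonneg (wB_nonneg hw k v) (le_of_lt hBpos)) (hw v)
    rw [hc]
    linarith
  set w' : V → ℚ := Function.update (Function.update w v 0) u c with hw'def
  have hw'u : w' u = c := by rw [hw'def]; simp [Function.update_self]
  have hw'v : w' v = 0 := by
    rw [hw'def, Function.update_of_ne (Ne.symm hne), Function.update_self]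
  have hw'x : ∀ x, x ≠ u → x ≠ v → w' x = w x := by
    intro x hxu hxv
    rw [hw'def, Function.update_of_ne hxu, Function.update_of_ne hxv]
  have hw'nn : ∀ x, 0 ≤ w' x := by
    intro x
    rcases eq_or_ne x u with rfl | hxu
    · rw [hw'u]; exact le_of_lt hcpos
    · rcases eq_or_ne x v with rfl | hxv
      · rw [hw'v]
      · rw [hw'x x hxu hxv]; exact hw x
  have hBu : ∀ j, wB G j u w' = wB G j u w := fun j => wB_congr huv hw'x j
  have hBv : ∀ j, wB G j v w' = wB G j v w := fun j =>
    wB_congr huv.symm (fun x hxv hxu => hw'x x hxu hxv) j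
  have hDfun : Function.update (Function.update w' u 0) v 0
      = Function.update (Function.update w u 0) v 0 := by
    funext x
    rcases eq_or_ne x v with rfl | hxv
    · rw [Function.update_self, Function.update_self]
    · rw [Function.update_of_ne hxv, Function.update_of_ne hxv]
      rcases eq_or_ne x u with rfl | hxu
      · rw [Function.update_self, Function.update_self]
      · rw [Function.update_of_ne hxu, Function.update_of_ne hxu]
        exact hw'x x hxu hxv
  have split_w : ∀ j, wf G j w = wf G j (Function.update (Function.update w u 0) v 0)
      + w u * wB G j u w + w v * wB G j v w := fun j => wf_split2 huv j w
  have split_w' : ∀ j, wf G j w' = wf G j (Function.update (Function.update w u 0) v 0)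
      + c * wB G j u w := by
    intro j
    have h := wf_split2 huv j w'
    rw [hw'u, hw'v, hBu, hBv, hDfun, zero_mul, add_zero] at h
    exact h
  refine ⟨w', hw'nn, ?_, ?_, ?_⟩
  · ext x
    rw [Finset.mem_erase, Finset.mem_filter, Finset.mem_filter]
    rcases eq_or_ne x v with rfl | hxv
    · simp [hw'v]
    · rcases eq_or_ne x u with rfl | hxu
      · simp [hw'u, ne_of_gt hcpos, hxv, hu]
      · rw [hw'x x hxu hxv]
        simp [hxv]
  · rw [split_w' k, split_w k, hc]
    field_simp
    ring
  · rw [split_w' (k+1), split_w (k+1), hc]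
    have key : w v * wB G (k+1) v w ≤ wB G k v w / wB G k u w * w v * wB G (k+1) u w := by
      rw [div_mul_eq_mul_div, div_mul_eq_mul_div, le_div_iff₀ hBpos]
      have hwv : 0 ≤ w v := hw v
      nlinarith [hdir]
    linarith [key]

lemma kill_lemma {u : V} {w : V → ℚ} (hw : ∀ x, 0 ≤ w x) {k : ℕ} (hk : 1 ≤ k)
    (hB : wB G k u w = 0) :
    wf G k (Function.update w u 0) = wf G k w
      ∧ wf G (k + 1) (Function.update w u 0) = wf G (k + 1) w := by
  have h1 := wf_split (G := G) k u w
  have h2 := wf_split (G := G) (k + 1) u w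
  rw [hB, mul_zero, add_zero] at h1
  rw [wB_step_zero hw hk hB, mul_zero, add_zero] at h2
  exact ⟨h1.symm, h2.symm⟩

theorem main_ind {α k : ℕ} (hub : ∀ s : Finset V, IsIndepFinset G s → s.card ≤ α)
    (hk : 1 ≤ k) :
    ∀ (n : ℕ) (w : V → ℚ), (∀ x, 0 ≤ w x)
      → (Finset.univ.filter fun x => w x ≠ 0).card ≤ n →
      wf G (k + 1) w ^ k * (α.choose k : ℚ) ^ (k + 1)
        ≤ wf G k w ^ (k + 1) * (α.choose (k + 1) : ℚ) ^ k := by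
  intro n
  induction n with
  | zero =>
    intro w hw hcard
    apply base_case hub hk hw
    intro a ha
    exfalso
    have : (Finset.univ.filter fun x => w x ≠ 0).Nonempty := ⟨a, ha⟩
    have := Finset.card_pos.2 this
    omega
  | succ n IH =>
    intro w hw hcard
    by_cases hpair : ∃ u v, G.Adj u v ∧ w u ≠ 0 ∧ w v ≠ 0
    · obtain ⟨u, v, huv, hu, hv⟩ := hpair
      have husupp : u ∈ Finset.univ.filter fun x => w x ≠ 0 :=
        Finset.mem_filter.2 ⟨Finset.mem_univ _, hu⟩
      have hvsupp : v ∈ Finset.univ.filter fun x => w x ≠ 0 :=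
        Finset.mem_filter.2 ⟨Finset.mem_univ _, hv⟩
      by_cases hB : wB G k u w = 0
      · obtain ⟨e0, e1⟩ := kill_lemma hw hk hB
        rw [← e0, ← e1]
        apply IH _ (fun x => by
          rcases eq_or_ne x u with rfl | hxu
          · rw [Function.update_self]
          · rw [Function.update_of_ne hxu]; exact hw x)
        rw [supp_update_zero, Finset.card_erase_of_mem husupp]
        omega
      · by_cases hC : wB G k v w = 0
        · obtain ⟨e0, e1⟩ := kill_lemma hw hk hC
          rw [← e0, ← e1]
          apply IH _ (fun x => by
            rcases eq_or_ne x v with rfl | hxv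
            · rw [Function.update_self]
            · rw [Function.update_of_ne hxv]; exact hw x)
          rw [supp_update_zero, Finset.card_erase_of_mem hvsupp]
          omega
        · have hmove : ∃ w' : V → ℚ, (∀ x, 0 ≤ w' x)
              ∧ ((Finset.univ.filter fun x => w' x ≠ 0)
                  = (Finset.univ.filter fun x => w x ≠ 0).erase v
                ∨ (Finset.univ.filter fun x => w' x ≠ 0)
                  = (Finset.univ.filter fun x => w x ≠ 0).erase u)
              ∧ wf G k w' = wf G k w ∧ wf G (k + 1) w ≤ wf G (k + 1) w' := by
            rcases le_total (wB G (k + 1) v w * wB G k u w) (wB G (k + 1) u w * wB G k v w)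
              with hdir | hdir
            · obtain ⟨w', h1, h2, h3, h4⟩ := move_lemma huv hw hu hv hB hdir
              exact ⟨w', h1, Or.inl h2, h3, h4⟩
            · obtain ⟨w', h1, h2, h3, h4⟩ := move_lemma huv.symm hw hv hu hC hdir
              exact ⟨w', h1, Or.inr h2, h3, h4⟩
          obtain ⟨w', hw', hsupp, hek, hek1⟩ := hmove
          have hcard' : (Finset.univ.filter fun x => w' x ≠ 0).card ≤ n := by
            rcases hsupp with h | h
            · rw [h, Finset.card_erase_of_mem hvsupp]; omega
            · rw [h, Finset.card_erase_of_mem husupp]; omega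
          have hIH := IH w' hw' hcard'
          calc wf G (k + 1) w ^ k * (α.choose k : ℚ) ^ (k + 1)
              ≤ wf G (k + 1) w' ^ k * (α.choose k : ℚ) ^ (k + 1) := by
                apply mul_le_mul_of_nonneg_right _ (by positivity)
                exact pow_le_pow_left₀ (wf_nonneg hw (k + 1)) hek1 k
            _ ≤ wf G k w' ^ (k + 1) * (α.choose (k + 1) : ℚ) ^ k := hIH
            _ = wf G k w ^ (k + 1) * (α.choose (k + 1) : ℚ) ^ k := by rw [hek]
    · apply base_case hub hk hw
      intro a ha b hb hadj
      push_neg at hpair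
      exact (Finset.mem_filter.1 hb).2 (hpair a b hadj (Finset.mem_filter.1 ha).2)

lemma wf_one (j : ℕ) : wf G j (fun _ => (1:ℚ)) = (indepCount G j : ℚ) := by
  rw [wf]
  simp only [Finset.prod_const_one, Finset.sum_const, nsmul_eq_mul, mul_one]
  norm_cast

end Graph


end FRaux

theorem stmt_7 {V : Type*} [Fintype V] (G : SimpleGraph V) (α : ℕ)
    (hα : IsGreatest {m | ∃ s : Finset V, IsIndepFinset G s ∧ s.card = m} α) :
    ∀ k : ℕ, 1 ≤ k → k ≤ α - 1 →
      ((indepCount G (k + 1) : ℚ) / (α.choose (k + 1) : ℚ)) ^ k ≤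
        ((indepCount G k : ℚ) / (α.choose k : ℚ)) ^ (k + 1) := by
  intro k hk1 hkα
  have hub : ∀ s : Finset V, IsIndepFinset G s → s.card ≤ α := fun s hs => hα.2 ⟨s, hs, rfl⟩
  have hα1 : k + 1 ≤ α := by
    rcases Nat.eq_zero_or_pos α with rfl | hαpos
    · omega
    · omega
  have main := FRaux.main_ind (G := G) hub hk1 (Fintype.card V) (fun _ => (1:ℚ))
    (fun _ => zero_le_one)
    (le_trans (Finset.card_filter_le _ _) (by rw [Finset.card_univ]))
  rw [FRaux.wf_one, FRaux.wf_one] at main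
  have c0 : (0:ℚ) < (α.choose k : ℚ) := by
    exact_mod_cast Nat.choose_pos (by omega : k ≤ α)
  have c1 : (0:ℚ) < (α.choose (k+1) : ℚ) := by exact_mod_cast Nat.choose_pos hα1
  rw [div_pow, div_pow, div_le_div_iff₀ (by positivity) (by positivity)]
  linarith [main]
end

section
/- For any graph G with n vertices and maximum independent set size α, if for some k ≤ α-1 we have i_{k+1} > i_k, then k < α(n-1)/(α+n). -/
open Finset

/-! ### Auxiliary definitions -/

open Classical in
noncomputable def auxIfam {V : Type*} [Fintype V] (G : SimpleGraph V) (k : ℕ) :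
    Finset (Finset V) :=
  Finset.univ.filter fun s : Finset V => s.card = k ∧ IsIndepFinset G s

noncomputable def auxFpoly {V : Type*} [Fintype V] (G : SimpleGraph V) (j : ℕ) (x : V → ℚ) : ℚ :=
  ∑ A ∈ auxIfam G j, ∏ v ∈ A, x v

lemma mem_auxIfam {V : Type*} [Fintype V] {G : SimpleGraph V} {j : ℕ} {A : Finset V} :
    A ∈ auxIfam G j ↔ A.card = j ∧ IsIndepFinset G A := by
  classical
  simp [auxIfam]

def auxEsym {V : Type*} [DecidableEq V] (x : V → ℚ) (j : ℕ) (T : Finset V) : ℚ :=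
  ∑ A ∈ T.powersetCard j, ∏ w ∈ A, x w

section EsymLemmas

variable {V : Type*} [DecidableEq V]

lemma auxEsym_nonneg {x : V → ℚ} (hx : ∀ v, 0 ≤ x v) (j : ℕ) (T : Finset V) :
    0 ≤ auxEsym x j T :=
  Finset.sum_nonneg fun A _ => Finset.prod_nonneg fun w _ => hx w

lemma auxEsym_insert {x : V → ℚ} {j : V} {T : Finset V} (hj : j ∉ T) (t : ℕ) :
    auxEsym x (t + 1) (insert j T) = auxEsym x (t + 1) T + x j * auxEsym x t T := by
  unfold auxEsym
  rw [powersetCard_succ_insert hj, sum_union, sum_image, mul_sum]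
  · congr 1
    refine sum_congr rfl fun A hA => ?_
    have hjA : j ∉ A := fun h => hj ((mem_powersetCard.mp hA).1 h)
    rw [prod_insert hjA]
  · intro A hA B hB hAB
    have hjA : j ∉ A := fun h => hj ((mem_powersetCard.mp hA).1 h)
    have hjB : j ∉ B := fun h => hj ((mem_powersetCard.mp hB).1 h)
    rw [← erase_insert hjA, ← erase_insert hjB, hAB]
  · rw [Finset.disjoint_left]
    intro A hA hA'
    obtain ⟨A', hA', rfl⟩ := Finset.mem_image.mp hA'
    exact hj ((mem_powersetCard.mp hA).1 (mem_insert_self _ _))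

lemma auxEsym_erase {x : V → ℚ} {j : V} {T : Finset V} (hj : j ∈ T) (t : ℕ) :
    auxEsym x (t + 1) T = auxEsym x (t + 1) (T.erase j) + x j * auxEsym x t (T.erase j) := by
  conv_lhs => rw [← insert_erase hj]
  exact auxEsym_insert (notMem_erase _ _) t

lemma auxId1 (x : V → ℚ) (t : ℕ) (T : Finset V) :
    ∑ i ∈ T, x i * auxEsym x t (T.erase i) = ((t : ℚ) + 1) * auxEsym x (t + 1) T := by
  have lhs : ∑ i ∈ T, x i * auxEsym x t (T.erase i)
      = ∑ p ∈ T.sigma (fun i => (T.erase i).powersetCard t), ∏ w ∈ insert p.1 p.2, x w := by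
    rw [sum_sigma]
    refine sum_congr rfl fun i hi => ?_
    rw [auxEsym, mul_sum]
    refine sum_congr rfl fun A hA => ?_
    have hiA : i ∉ A := fun h => (notMem_erase i T) ((mem_powersetCard.mp hA).1 h)
    rw [prod_insert hiA]
  have rhs : ((t : ℚ) + 1) * auxEsym x (t + 1) T
      = ∑ p ∈ (T.powersetCard (t + 1)).sigma (fun B => B), ∏ w ∈ p.1, x w := by
    rw [sum_sigma, auxEsym, mul_sum]
    refine sum_congr rfl fun B hB => ?_
    have hconst : ∀ s ∈ B, (∏ w ∈ (⟨B, s⟩ : Σ _ : Finset V, V).fst, x w) = ∏ w ∈ B, x w :=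
      fun s _ => rfl
    rw [sum_congr rfl hconst, sum_const, (mem_powersetCard.mp hB).2, nsmul_eq_mul]
    push_cast
    ring
  rw [lhs, rhs]
  refine sum_nbij' (fun p => ⟨insert p.1 p.2, p.1⟩) (fun q => ⟨q.2, q.1.erase q.2⟩)
    ?_ ?_ ?_ ?_ ?_
  · rintro ⟨i, A⟩ hp
    rw [mem_sigma] at hp
    obtain ⟨hi, hA⟩ := hp
    rw [mem_powersetCard] at hA
    have hiA : i ∉ A := fun h => (notMem_erase i T) (hA.1 h)
    rw [mem_sigma]
    constructor
    · rw [mem_powersetCard]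
      refine ⟨?_, by rw [card_insert_of_notMem hiA, hA.2]⟩
      intro w hw
      rcases mem_insert.mp hw with rfl | hw
      · exact hi
      · exact mem_of_mem_erase (hA.1 hw)
    · exact mem_insert_self _ _
  · rintro ⟨B, i⟩ hq
    rw [mem_sigma] at hq
    obtain ⟨hB, hi⟩ := hq
    rw [mem_powersetCard] at hB
    rw [mem_sigma]
    constructor
    · exact hB.1 hi
    · rw [mem_powersetCard]
      constructor
      · intro w hw
        rw [mem_erase] at hw ⊢
        exact ⟨hw.1, hB.1 hw.2⟩
      · rw [card_erase_of_mem hi, hB.2]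
        omega
  · rintro ⟨i, A⟩ hp
    rw [mem_sigma] at hp
    have hiA : i ∉ A := fun h => (notMem_erase i T) ((mem_powersetCard.mp hp.2).1 h)
    simp only [erase_insert hiA]
  · rintro ⟨B, i⟩ hq
    rw [mem_sigma] at hq
    simp only [insert_erase hq.2]
  · rintro ⟨i, A⟩ _
    rfl

lemma auxId2 (x : V → ℚ) (t : ℕ) (T : Finset V) (ht : t ≤ T.card) :
    ∑ i ∈ T, auxEsym x t (T.erase i) = ((T.card : ℚ) - t) * auxEsym x t T := by
  have lhs : ∑ i ∈ T, auxEsym x t (T.erase i)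
      = ∑ p ∈ T.sigma (fun i => (T.erase i).powersetCard t), ∏ w ∈ p.2, x w := by
    rw [sum_sigma]
    rfl
  have rhs : ((T.card : ℚ) - t) * auxEsym x t T
      = ∑ p ∈ (T.powersetCard t).sigma (fun A => T \ A), ∏ w ∈ p.1, x w := by
    rw [sum_sigma, auxEsym, mul_sum]
    refine sum_congr rfl fun A hA => ?_
    rw [mem_powersetCard] at hA
    have hconst : ∀ s ∈ T \ A, (∏ w ∈ (⟨A, s⟩ : Σ _ : Finset V, V).fst, x w) = ∏ w ∈ A, x w :=
      fun s _ => rfl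
    rw [sum_congr rfl hconst, sum_const, card_sdiff_of_subset hA.1, hA.2, nsmul_eq_mul,
      Nat.cast_sub ht]
  rw [lhs, rhs]
  refine sum_nbij' (fun p => ⟨p.2, p.1⟩) (fun q => ⟨q.2, q.1⟩) ?_ ?_ ?_ ?_ ?_
  · rintro ⟨i, A⟩ hp
    rw [mem_sigma] at hp
    obtain ⟨hi, hA⟩ := hp
    rw [mem_powersetCard] at hA
    have hiA : i ∉ A := fun h => (notMem_erase i T) (hA.1 h)
    rw [mem_sigma, mem_powersetCard]
    exact ⟨⟨fun w hw => mem_of_mem_erase (hA.1 hw), hA.2⟩, mem_sdiff.mpr ⟨hi, hiA⟩⟩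
  · rintro ⟨A, i⟩ hq
    simp only [mem_sigma, mem_powersetCard, mem_sdiff] at hq
    obtain ⟨⟨hAT, hAc⟩, hiT, hiA⟩ := hq
    simp only [mem_sigma, mem_powersetCard]
    refine ⟨hiT, ?_, hAc⟩
    intro w hw
    rw [mem_erase]
    exact ⟨fun h => hiA (h ▸ hw), hAT hw⟩
  · rintro ⟨i, A⟩ _; rfl
  · rintro ⟨A, i⟩ _; rfl
  · rintro ⟨i, A⟩ _; rfl

lemma auxAntivary {x : V → ℚ} (hx : ∀ v, 0 ≤ x v) {T : Finset V} {i j : V}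
    (hi : i ∈ T) (hj : j ∈ T) (hij : i ≠ j) (t : ℕ) :
    (x i - x j) * (auxEsym x t (T.erase i) - auxEsym x t (T.erase j)) ≤ 0 := by
  cases t with
  | zero =>
    have h1 : auxEsym x 0 (T.erase i) = 1 := by simp [auxEsym]
    have h2 : auxEsym x 0 (T.erase j) = 1 := by simp [auxEsym]
    rw [h1, h2]
    simp
  | succ m =>
    have hjTi : j ∈ T.erase i := mem_erase.mpr ⟨hij.symm, hj⟩
    have hiTj : i ∈ T.erase j := mem_erase.mpr ⟨hij, hi⟩
    rw [auxEsym_erase hjTi m, auxEsym_erase hiTj m, erase_right_comm (a := i) (b := j)]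
    have hE := auxEsym_nonneg hx m ((T.erase j).erase i)
    nlinarith [sq_nonneg (x i - x j)]

lemma auxCheb (T : Finset V) (a b : V → ℚ)
    (h : ∀ i ∈ T, ∀ j ∈ T, (a i - a j) * (b i - b j) ≤ 0) :
    (T.card : ℚ) * ∑ i ∈ T, a i * b i ≤ (∑ i ∈ T, a i) * (∑ i ∈ T, b i) := by
  have H : ∑ i ∈ T, ∑ j ∈ T, (a i - a j) * (b i - b j) ≤ 0 :=
    sum_nonpos fun i hi => sum_nonpos fun j hj => h i hi j hj
  have expand : ∑ i ∈ T, ∑ j ∈ T, (a i - a j) * (b i - b j)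
      = 2 * ((T.card : ℚ) * ∑ i ∈ T, a i * b i) - 2 * ((∑ i ∈ T, a i) * (∑ i ∈ T, b i)) := by
    have : ∀ i ∈ T, ∑ j ∈ T, (a i - a j) * (b i - b j)
        = (T.card : ℚ) * (a i * b i) - a i * (∑ j ∈ T, b j)
          - (∑ j ∈ T, a j) * b i + (∑ j ∈ T, a j * b j) := by
      intro i _
      have hterm : ∀ j ∈ T, (a i - a j) * (b i - b j)
          = a i * b i - a i * b j - a j * b i + a j * b j := fun j _ => by ring
      rw [sum_congr rfl hterm, sum_add_distrib, sum_sub_distrib, sum_sub_distrib, sum_const,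
        ← mul_sum, ← sum_mul, nsmul_eq_mul]
      try ring
    rw [sum_congr rfl this, sum_add_distrib, sum_sub_distrib, sum_sub_distrib, sum_const,
      ← mul_sum, ← mul_sum, ← sum_mul, nsmul_eq_mul]
    try ring
  linarith

end EsymLemmas

section Main

variable {V : Type*} [Fintype V]

lemma auxFpoly_indep_support [DecidableEq V] (G : SimpleGraph V) (x : V → ℚ)
    (hS : IsIndepFinset G (univ.filter fun v => x v ≠ 0)) (j : ℕ) :
    auxFpoly G j x = auxEsym x j (univ.filter fun v => x v ≠ 0) := by
  classical
  set S := univ.filter fun v => x v ≠ 0 with hSdef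
  rw [auxFpoly, auxEsym]
  refine (sum_subset ?_ ?_).symm
  · intro A hA
    rw [mem_powersetCard] at hA
    rw [mem_auxIfam]
    exact ⟨hA.2, fun a ha b hb => hS a (hA.1 ha) b (hA.1 hb)⟩
  · intro A hA hA'
    rw [mem_auxIfam] at hA
    have : ¬ A ⊆ S := fun h => hA' (mem_powersetCard.mpr ⟨h, hA.1⟩)
    obtain ⟨w, hwA, hwS⟩ := not_subset.mp this
    have hxw : x w = 0 := by
      by_contra hc
      exact hwS (mem_filter.mpr ⟨mem_univ _, hc⟩)
    exact prod_eq_zero hwA hxw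

lemma auxFpoly_split [DecidableEq V] (G : SimpleGraph V) {u v : V} (hadj : G.Adj u v)
    (x : V → ℚ) (j : ℕ) :
    (x u + x v) * auxFpoly G j x
      = x u * auxFpoly G j (Function.update (Function.update x u (x u + x v)) v 0)
        + x v * auxFpoly G j (Function.update (Function.update x v (x u + x v)) u 0) := by
  have huv : u ≠ v := hadj.ne
  set x1 := Function.update (Function.update x u (x u + x v)) v 0 with hx1
  set x2 := Function.update (Function.update x v (x u + x v)) u 0 with hx2
  have hx1u : x1 u = x u + x v := by
    rw [hx1, Function.update_of_ne huv, Function.update_self]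
  have hx1v : x1 v = 0 := by rw [hx1, Function.update_self]
  have hx2v : x2 v = x u + x v := by
    rw [hx2, Function.update_of_ne huv.symm, Function.update_self]
  have hx2u : x2 u = 0 := by rw [hx2, Function.update_self]
  have hx1w : ∀ w, w ≠ u → w ≠ v → x1 w = x w := fun w hwu hwv => by
    rw [hx1, Function.update_of_ne hwv, Function.update_of_ne hwu]
  have hx2w : ∀ w, w ≠ u → w ≠ v → x2 w = x w := fun w hwu hwv => by
    rw [hx2, Function.update_of_ne hwu, Function.update_of_ne hwv]
  rw [auxFpoly, auxFpoly, auxFpoly, mul_sum, mul_sum, mul_sum, ← sum_add_distrib]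
  refine sum_congr rfl fun A hA => ?_
  have hInd : IsIndepFinset G A := (mem_auxIfam.mp hA).2
  have hnot : ¬ (u ∈ A ∧ v ∈ A) := fun ⟨hu, hv⟩ => hInd u hu v hv hadj
  by_cases hu : u ∈ A
  · have hv : v ∉ A := fun hv => hnot ⟨hu, hv⟩
    have e0 : ∏ w ∈ A, x w = x u * ∏ w ∈ A.erase u, x w := (mul_prod_erase A x hu).symm
    have e1 : ∏ w ∈ A, x1 w = (x u + x v) * ∏ w ∈ A.erase u, x w := by
      rw [← mul_prod_erase A x1 hu, hx1u]
      congr 1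
      refine prod_congr rfl fun w hw => ?_
      have hwu : w ≠ u := (mem_erase.mp hw).1
      have hwv : w ≠ v := fun h => hv (h ▸ (mem_erase.mp hw).2)
      exact hx1w w hwu hwv
    have e2 : ∏ w ∈ A, x2 w = 0 := prod_eq_zero hu hx2u
    rw [e0, e1, e2]
    ring
  · by_cases hv : v ∈ A
    · have e0 : ∏ w ∈ A, x w = x v * ∏ w ∈ A.erase v, x w := (mul_prod_erase A x hv).symm
      have e2 : ∏ w ∈ A, x2 w = (x u + x v) * ∏ w ∈ A.erase v, x w := by
        rw [← mul_prod_erase A x2 hv, hx2v]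
        congr 1
        refine prod_congr rfl fun w hw => ?_
        have hwv : w ≠ v := (mem_erase.mp hw).1
        have hwu : w ≠ u := fun h => hu (h ▸ (mem_erase.mp hw).2)
        exact hx2w w hwu hwv
      have e1 : ∏ w ∈ A, x1 w = 0 := prod_eq_zero hv hx1v
      rw [e0, e1, e2]
      ring
    · have e1 : ∏ w ∈ A, x1 w = ∏ w ∈ A, x w :=
        prod_congr rfl fun w hw =>
          hx1w w (fun h => hu (h ▸ hw)) (fun h => hv (h ▸ hw))
      have e2 : ∏ w ∈ A, x2 w = ∏ w ∈ A, x w :=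
        prod_congr rfl fun w hw =>
          hx2w w (fun h => hu (h ▸ hw)) (fun h => hv (h ▸ hw))
      rw [e1, e2]
      ring

lemma auxMain [DecidableEq V] (G : SimpleGraph V) (α t : ℕ)
    (hub : ∀ s : Finset V, IsIndepFinset G s → s.card ≤ α) (ht : t < α) :
    ∀ x : V → ℚ, (∀ w, 0 ≤ x w) →
      (α : ℚ) * ((t : ℚ) + 1) * auxFpoly G (t + 1) x
        ≤ (∑ w, x w) * ((α : ℚ) - t) * auxFpoly G t x := by
  suffices H : ∀ c : ℕ, ∀ x : V → ℚ, (∀ w, 0 ≤ x w) →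
      (univ.filter fun w => x w ≠ 0).card = c →
      (α : ℚ) * ((t : ℚ) + 1) * auxFpoly G (t + 1) x
        ≤ (∑ w, x w) * ((α : ℚ) - t) * auxFpoly G t x by
    intro x hx
    exact H _ x hx rfl
  intro c
  induction c using Nat.strong_induction_on with
  | _ c ih =>
    intro x hx hc
    set S := univ.filter fun w => x w ≠ 0 with hSdef
    by_cases hS : IsIndepFinset G S
    · -- independent support: elementary symmetric polynomial estimates
      have hcard : S.card ≤ α := hub S hS
      have hfs : ∀ j, auxFpoly G j x = auxEsym x j S := fun j =>
        auxFpoly_indep_support G x hS j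
      have hsum : ∑ i ∈ S, x i = ∑ w, x w := by
        rw [hSdef]
        exact sum_filter_ne_zero univ
      have hsumnn : 0 ≤ ∑ w, x w := sum_nonneg fun w _ => hx w
      have hEt : 0 ≤ auxEsym x t S := auxEsym_nonneg hx t S
      rw [hfs t, hfs (t + 1)]
      by_cases hts : t < S.card
      · -- Chebyshev sum inequality
        have cheb := auxCheb S x (fun i => auxEsym x t (S.erase i))
          (fun i hi => fun j hj => by
            rcases eq_or_ne i j with rfl | hij
            · simp
            · exact auxAntivary hx hi hj hij t)
        rw [auxId1 x t S, auxId2 x t S (le_of_lt hts), hsum] at cheb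
        -- cheb : S.card * ((t+1) * E_{t+1}) ≤ (∑ x) * ((S.card - t) * E_t)
        have hE1 : 0 ≤ auxEsym x (t + 1) S := auxEsym_nonneg hx (t + 1) S
        have hspos : (0 : ℚ) < (S.card : ℚ) := by
          have : 0 < S.card := lt_of_le_of_lt (Nat.zero_le t) hts
          exact_mod_cast this
        have hαs : (S.card : ℚ) ≤ (α : ℚ) := by exact_mod_cast hcard
        have hα0 : (0 : ℚ) ≤ (α : ℚ) := Nat.cast_nonneg α
        have ht0 : (0 : ℚ) ≤ (t : ℚ) := Nat.cast_nonneg t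
        have key : (S.card : ℚ) * ((α : ℚ) * ((t : ℚ) + 1) * auxEsym x (t + 1) S)
            ≤ (S.card : ℚ) * ((∑ w, x w) * ((α : ℚ) - t) * auxEsym x t S) := by
          have h1 : (α : ℚ) * ((S.card : ℚ) * (((t : ℚ) + 1) * auxEsym x (t + 1) S))
              ≤ (α : ℚ) * ((∑ w, x w) * (((S.card : ℚ) - t) * auxEsym x t S)) :=
            mul_le_mul_of_nonneg_left cheb hα0
          have h2 : (0 : ℚ) ≤ ((∑ w, x w) * auxEsym x t S) * (((α : ℚ) - S.card) * t) := by
            apply mul_nonneg (mul_nonneg hsumnn hEt)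
            apply mul_nonneg (by linarith) ht0
          nlinarith [h1, h2]
        exact le_of_mul_le_mul_left key hspos
      · -- t ≥ |S| : the (t+1)-st symmetric polynomial vanishes
        have hempty : auxEsym x (t + 1) S = 0 := by
          rw [auxEsym, powersetCard_eq_empty.mpr (by omega), sum_empty]
        rw [hempty, mul_zero]
        apply mul_nonneg (mul_nonneg hsumnn ?_) hEt
        have : (t : ℚ) ≤ (α : ℚ) := by exact_mod_cast le_of_lt ht
        linarith
    · -- there is an edge inside the support: shift mass along it
      rw [IsIndepFinset] at hS
      push_neg at hS
      obtain ⟨u, hu, v, hv, hadj⟩ := hS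
      have huv : u ≠ v := hadj.ne
      have hxu : 0 < x u := lt_of_le_of_ne (hx u) (Ne.symm (mem_filter.mp hu).2)
      have hxv : 0 < x v := lt_of_le_of_ne (hx v) (Ne.symm (mem_filter.mp hv).2)
      set x1 := Function.update (Function.update x u (x u + x v)) v 0 with hx1def
      set x2 := Function.update (Function.update x v (x u + x v)) u 0 with hx2def
      have hx1 : ∀ w, 0 ≤ x1 w := by
        intro w
        rcases eq_or_ne w v with rfl | hwv
        · rw [hx1def, Function.update_self]
        · rw [hx1def, Function.update_of_ne hwv]
          rcases eq_or_ne w u with rfl | hwu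
          · rw [Function.update_self]; linarith
          · rw [Function.update_of_ne hwu]; exact hx w
      have hx2 : ∀ w, 0 ≤ x2 w := by
        intro w
        rcases eq_or_ne w u with rfl | hwu
        · rw [hx2def, Function.update_self]
        · rw [hx2def, Function.update_of_ne hwu]
          rcases eq_or_ne w v with rfl | hwv
          · rw [Function.update_self]; linarith
          · rw [Function.update_of_ne hwv]; exact hx w
      have hsupp1 : (univ.filter fun w => x1 w ≠ 0) = S.erase v := by
        ext w
        rw [mem_filter, mem_erase, hSdef, mem_filter]
        constructor
        · intro ⟨_, hw⟩
          rcases eq_or_ne w v with rfl | hwv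
          · exact absurd (by rw [hx1def, Function.update_self]) hw
          · refine ⟨hwv, mem_univ _, ?_⟩
            rcases eq_or_ne w u with rfl | hwu
            · exact (mem_filter.mp hu).2
            · rw [hx1def, Function.update_of_ne hwv, Function.update_of_ne hwu] at hw
              exact hw
        · intro ⟨hwv, _, hw⟩
          refine ⟨mem_univ _, ?_⟩
          rcases eq_or_ne w u with rfl | hwu
          · rw [hx1def, Function.update_of_ne hwv, Function.update_self]
            positivity
          · rw [hx1def, Function.update_of_ne hwv, Function.update_of_ne hwu]
            exact hw
      have hsupp2 : (univ.filter fun w => x2 w ≠ 0) = S.erase u := by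
        ext w
        rw [mem_filter, mem_erase, hSdef, mem_filter]
        constructor
        · intro ⟨_, hw⟩
          rcases eq_or_ne w u with rfl | hwu
          · exact absurd (by rw [hx2def, Function.update_self]) hw
          · refine ⟨hwu, mem_univ _, ?_⟩
            rcases eq_or_ne w v with rfl | hwv
            · exact (mem_filter.mp hv).2
            · rw [hx2def, Function.update_of_ne hwu, Function.update_of_ne hwv] at hw
              exact hw
        · intro ⟨hwu, _, hw⟩
          refine ⟨mem_univ _, ?_⟩
          rcases eq_or_ne w v with rfl | hwv
          · rw [hx2def, Function.update_of_ne hwu, Function.update_self]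
            positivity
          · rw [hx2def, Function.update_of_ne hwu, Function.update_of_ne hwv]
            exact hw
      have hsum1 : ∑ w, x1 w = ∑ w, x w := by
        rw [hx1def]
        rw [Finset.sum_update_of_mem (mem_univ v)]
        simp only [sdiff_singleton_eq_erase]
        rw [Finset.sum_update_of_mem (mem_erase.mpr ⟨huv, mem_univ u⟩)]
        simp only [sdiff_singleton_eq_erase]
        have t1 : ∑ w, x w = x v + ∑ w ∈ univ.erase v, x w := (add_sum_erase univ x (mem_univ v)).symm
        have t2 : ∑ w ∈ univ.erase v, x w
            = x u + ∑ w ∈ (univ.erase v).erase u, x w :=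
          (add_sum_erase _ x (mem_erase.mpr ⟨huv, mem_univ u⟩)).symm
        rw [t1, t2]
        ring
      have hsum2 : ∑ w, x2 w = ∑ w, x w := by
        rw [hx2def]
        rw [Finset.sum_update_of_mem (mem_univ u)]
        simp only [sdiff_singleton_eq_erase]
        rw [Finset.sum_update_of_mem (mem_erase.mpr ⟨huv.symm, mem_univ v⟩)]
        simp only [sdiff_singleton_eq_erase]
        have t1 : ∑ w, x w = x u + ∑ w ∈ univ.erase u, x w := (add_sum_erase univ x (mem_univ u)).symm
        have t2 : ∑ w ∈ univ.erase u, x w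
            = x v + ∑ w ∈ (univ.erase u).erase v, x w :=
          (add_sum_erase _ x (mem_erase.mpr ⟨huv.symm, mem_univ v⟩)).symm
        rw [t1, t2]
        ring
      have hvS : v ∈ S := hv
      have huS : u ∈ S := hu
      have hcpos : 0 < c := by
        rw [← hc, hSdef]
        exact card_pos.mpr ⟨v, hvS⟩
      have h1 := ih (c - 1) (by omega) x1 hx1
        (by rw [hsupp1, card_erase_of_mem hvS, hc])
      have h2 := ih (c - 1) (by omega) x2 hx2
        (by rw [hsupp2, card_erase_of_mem huS, hc])
      rw [hsum1] at h1
      rw [hsum2] at h2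
      have et := auxFpoly_split G hadj x t
      have et1 := auxFpoly_split G hadj x (t + 1)
      rw [← hx1def, ← hx2def] at et et1
      have hpos : (0 : ℚ) < x u + x v := by linarith
      have final : (x u + x v) * ((α : ℚ) * ((t : ℚ) + 1) * auxFpoly G (t + 1) x)
          ≤ (x u + x v) * ((∑ w, x w) * ((α : ℚ) - t) * auxFpoly G t x) := by
        have s1 : (x u + x v) * ((α : ℚ) * ((t : ℚ) + 1) * auxFpoly G (t + 1) x)
            = x u * ((α : ℚ) * ((t : ℚ) + 1) * auxFpoly G (t + 1) x1)
              + x v * ((α : ℚ) * ((t : ℚ) + 1) * auxFpoly G (t + 1) x2) := by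
          linear_combination ((α : ℚ) * ((t : ℚ) + 1)) * et1
        have s2 : (x u + x v) * ((∑ w, x w) * ((α : ℚ) - t) * auxFpoly G t x)
            = x u * ((∑ w, x w) * ((α : ℚ) - t) * auxFpoly G t x1)
              + x v * ((∑ w, x w) * ((α : ℚ) - t) * auxFpoly G t x2) := by
          linear_combination ((∑ w, x w) * ((α : ℚ) - t)) * et
        rw [s1, s2]
        exact add_le_add (mul_le_mul_of_nonneg_left h1 (le_of_lt hxu))
          (mul_le_mul_of_nonneg_left h2 (le_of_lt hxv))
      exact le_of_mul_le_mul_left final hpos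

lemma auxRatio (G : SimpleGraph V) (α t : ℕ)
    (hub : ∀ s : Finset V, IsIndepFinset G s → s.card ≤ α) (ht : t < α) :
    (α : ℚ) * ((t : ℚ) + 1) * (indepCount G (t + 1) : ℚ)
      ≤ (Fintype.card V : ℚ) * ((α : ℚ) - t) * (indepCount G t : ℚ) := by
  classical
  have hmain := auxMain G α t hub ht (fun _ => 1) (fun _ => zero_le_one)
  have hones : ∀ j, auxFpoly G j (fun _ => (1 : ℚ)) = (indepCount G j : ℚ) := by
    intro j
    rw [auxFpoly]
    have : ∀ A ∈ auxIfam G j, ∏ _v ∈ A, (1 : ℚ) = 1 := fun A _ => prod_const_one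
    rw [sum_congr rfl this, sum_const, nsmul_eq_mul, mul_one]
    rfl
  rw [hones, hones] at hmain
  have hsum : ∑ _w : V, (1 : ℚ) = (Fintype.card V : ℚ) := by
    rw [sum_const, nsmul_eq_mul, mul_one, Finset.card_univ]
  rw [hsum] at hmain
  exact hmain

end Main

theorem stmt_8 {V : Type*} [Fintype V] (G : SimpleGraph V) (n α : ℕ)
    (hn : n = Fintype.card V)
    (hα : IsGreatest {m | ∃ s : Finset V, IsIndepFinset G s ∧ s.card = m} α) :
    ∀ k : ℕ, k ≤ α - 1 → indepCount G k < indepCount G (k + 1) →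
      (k : ℚ) < (α : ℚ) * ((n : ℚ) - 1) / ((α : ℚ) + (n : ℚ)) := by
  classical
  intro k _ hlt
  have hub : ∀ s : Finset V, IsIndepFinset G s → s.card ≤ α := fun s hs =>
    hα.2 ⟨s, hs, rfl⟩
  -- there is an independent set of size k+1
  have hpos : 0 < indepCount G (k + 1) := lt_of_le_of_lt (Nat.zero_le _) hlt
  obtain ⟨B, hB⟩ := card_pos.mp hpos
  rw [show (Finset.univ.filter fun s : Finset V => s.card = k + 1 ∧ IsIndepFinset G s)
      = auxIfam G (k + 1) from rfl, mem_auxIfam] at hB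
  have hBcard : B.card = k + 1 := hB.1
  have hkα : k + 1 ≤ α := hBcard ▸ hub B hB.2
  have hBne : B.Nonempty := card_pos.mp (by omega)
  obtain ⟨b, hb⟩ := hBne
  have hn1 : 1 ≤ n := by
    rw [hn]
    exact Fintype.card_pos_iff.mpr ⟨b⟩
  have R := auxRatio G α k hub (by omega)
  rw [← hn] at R
  -- arithmetic
  have hpq : (indepCount G k : ℚ) + 1 ≤ (indepCount G (k + 1) : ℚ) := by
    exact_mod_cast Nat.succ_le_of_lt hlt
  have hp0 : (0 : ℚ) ≤ (indepCount G k : ℚ) := Nat.cast_nonneg _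
  have hN1 : (1 : ℚ) ≤ (n : ℚ) := by exact_mod_cast hn1
  have hKa : (k : ℚ) + 1 ≤ (α : ℚ) := by exact_mod_cast hkα
  have hK0 : (0 : ℚ) ≤ (k : ℚ) := Nat.cast_nonneg _
  have hNaK : (1 : ℚ) ≤ (n : ℚ) * ((α : ℚ) - k) := by nlinarith
  have hq1 : (1 : ℚ) ≤ (indepCount G (k + 1) : ℚ) := by linarith
  have step : (α : ℚ) * ((k : ℚ) + 1) * (indepCount G (k + 1) : ℚ)
        + (n : ℚ) * ((α : ℚ) - k)
      ≤ (n : ℚ) * ((α : ℚ) - k) * (indepCount G (k + 1) : ℚ) := by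
    have h3 : (n : ℚ) * ((α : ℚ) - k) * ((indepCount G k : ℚ) + 1)
        ≤ (n : ℚ) * ((α : ℚ) - k) * (indepCount G (k + 1) : ℚ) :=
      mul_le_mul_of_nonneg_left hpq (by linarith)
    nlinarith [R, h3]
  have key : (α : ℚ) * ((k : ℚ) + 1) < (n : ℚ) * ((α : ℚ) - k) := by
    by_contra hcon
    push_neg at hcon
    have h4 : (n : ℚ) * ((α : ℚ) - k) * (indepCount G (k + 1) : ℚ)
        ≤ (α : ℚ) * ((k : ℚ) + 1) * (indepCount G (k + 1) : ℚ) :=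
      mul_le_mul_of_nonneg_right hcon (by linarith)
    linarith
  have hden : (0 : ℚ) < (α : ℚ) + (n : ℚ) := by linarith
  rw [lt_div_iff₀ hden]
  nlinarith [key]
end

section
/- For all natural numbers N, k and any commutative ring element z, Σ_{ℓ=0}^{N} C(N,ℓ) ℓ^k z^ℓ = Σ_{j=0}^{k} S(k,j) · (N)_j · (1+z)^{N-j} · z^j, where S(k,j) is a Stirling number of the second kind and (N)_j = N(N-1)···(N-j+1) is a falling factorial. -/
open Finset

/-- Stirling numbers of the second kind: `stirling2 k j` is the number of partitions of a
`k`-element set into `j` nonempty blocks. -/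
def stirling2 : ℕ → ℕ → ℕ
  | 0, 0 => 1
  | 0, _ + 1 => 0
  | _ + 1, 0 => 0
  | k + 1, j + 1 => (j + 1) * stirling2 k (j + 1) + stirling2 k j

lemma stirling2_eq_zero_of_lt : ∀ {k j : ℕ}, k < j → stirling2 k j = 0
  | 0, j + 1, _ => rfl
  | k + 1, j + 1, h => by
    rw [stirling2, stirling2_eq_zero_of_lt (by omega), stirling2_eq_zero_of_lt (by omega)]; simp

lemma mul_descFactorial (l j : ℕ) :
    l * l.descFactorial j = l.descFactorial (j + 1) + j * l.descFactorial j := by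
  rw [Nat.descFactorial_succ]
  rcases le_or_gt j l with h | h
  · rw [← Nat.add_mul, Nat.sub_add_cancel h]
  · rw [Nat.descFactorial_eq_zero_iff_lt.2 h]; simp

lemma pow_eq_sum_stirling2 (l : ℕ) : ∀ k : ℕ,
    l ^ k = ∑ j ∈ Finset.range (k + 1), stirling2 k j * l.descFactorial j
  | 0 => by simp [stirling2]
  | k + 1 => by
    rw [pow_succ, pow_eq_sum_stirling2 l k, Finset.sum_mul]
    rw [Finset.sum_range_succ' (fun j => stirling2 (k+1) j * l.descFactorial j)]
    simp only [stirling2, Nat.mul_zero, Nat.add_zero, Nat.descFactorial_zero, Nat.mul_one]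
    have : ∀ j, stirling2 k j * l.descFactorial j * l =
        stirling2 k j * l.descFactorial (j + 1) + j * stirling2 k j * l.descFactorial j := by
      intro j
      rw [Nat.mul_comm _ l, Nat.mul_left_comm, mul_descFactorial]
      ring
    simp only [this]
    rw [Finset.sum_add_distrib]
    have hr : ∀ x : ℕ, ((x+1) * stirling2 k (x+1) + stirling2 k x) * l.descFactorial (x+1)
        = stirling2 k x * l.descFactorial (x+1)
          + (x+1) * stirling2 k (x+1) * l.descFactorial (x+1) := fun x => by ring
    simp only [hr]
    rw [Finset.sum_add_distrib]
    congr 1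
    rw [Finset.sum_range_succ' (fun x => x * stirling2 k x * l.descFactorial x),
        Finset.sum_range_succ (fun x => (x+1) * stirling2 k (x+1) * l.descFactorial (x+1)),
        stirling2_eq_zero_of_lt (Nat.lt_succ_self k)]
    simp

lemma choose_mul_descFactorial (N j m : ℕ) :
    N.choose (j + m) * (j + m).descFactorial j = N.descFactorial j * (N - j).choose m := by
  apply Nat.eq_of_mul_eq_mul_right (Nat.factorial_pos m)
  have h1 : (j + m).descFactorial j * Nat.factorial m = Nat.factorial (j+m) := by
    have := Nat.factorial_mul_descFactorial (Nat.le_add_right j m)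
    simpa [Nat.add_sub_cancel_left, Nat.mul_comm] using this
  calc N.choose (j + m) * (j + m).descFactorial j * Nat.factorial m
      = N.choose (j + m) * ((j + m).descFactorial j * Nat.factorial m) := by ring
    _ = N.choose (j + m) * Nat.factorial (j+m) := by rw [h1]
    _ = N.descFactorial (j + m) := by
        rw [Nat.descFactorial_eq_factorial_mul_choose]; ring
    _ = (N - j).descFactorial m * N.descFactorial j := by
        have := Nat.descFactorial_mul_descFactorial (n := N) (k := j) (m := j + m)
          (Nat.le_add_right j m)
        simpa [Nat.add_sub_cancel_left] using this.symm
    _ = N.descFactorial j * (N - j).choose m * Nat.factorial m := by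
        rw [Nat.descFactorial_eq_factorial_mul_choose]; ring

lemma innerSum17 {R : Type*} [CommRing R] (N j : ℕ) (z : R) :
    ∑ l ∈ Finset.range (N + 1), (N.choose l : R) * (l.descFactorial j : R) * z ^ l =
      (N.descFactorial j : R) * (1 + z) ^ (N - j) * z ^ j := by
  rcases lt_or_ge N j with h | h
  · rw [Nat.descFactorial_eq_zero_iff_lt.2 h]
    push_cast
    rw [Finset.sum_eq_zero, zero_mul, zero_mul]
    intro l hl
    rw [Nat.descFactorial_eq_zero_iff_lt.2 (lt_of_le_of_lt (Nat.lt_succ_iff.1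
      (Finset.mem_range.1 hl)) h)]
    push_cast; ring
  · rw [Finset.range_eq_Ico, ← Finset.sum_Ico_consecutive _ (Nat.zero_le j)
      (by omega : j ≤ N + 1)]
    have h0 : ∑ l ∈ Finset.Ico 0 j, (N.choose l : R) * (l.descFactorial j : R) * z ^ l = 0 := by
      apply Finset.sum_eq_zero
      intro l hl
      rw [Nat.descFactorial_eq_zero_iff_lt.2 (Finset.mem_Ico.1 hl).2]
      push_cast; ring
    rw [h0, zero_add, Finset.sum_Ico_eq_sum_range]
    have key : ∀ m, (N.choose (j + m) : R) * ((j + m).descFactorial j : R) * z ^ (j + m) =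
        (N.descFactorial j : R) * ((N - j).choose m : R) * z ^ j * z ^ m := by
      intro m
      have hc := congrArg (Nat.cast : ℕ → R) (choose_mul_descFactorial N j m)
      push_cast at hc
      rw [pow_add]
      linear_combination (z ^ j * z ^ m) * hc
    simp only [key]
    have hrange : N + 1 - j = (N - j) + 1 := by omega
    rw [hrange]
    have := add_pow z 1 (N - j)
    rw [add_comm z 1] at this
    rw [this, Finset.mul_sum, Finset.sum_mul]
    apply Finset.sum_congr rfl
    intro m _
    ring

theorem stmt_17 {R : Type*} [CommRing R] (N k : ℕ) (z : R) :
    ∑ l ∈ Finset.range (N + 1), (N.choose l : R) * (l : R) ^ k * z ^ l =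
      ∑ j ∈ Finset.range (k + 1),
        (stirling2 k j : R) * (N.descFactorial j : R) * (1 + z) ^ (N - j) * z ^ j := by
  have hl : ∀ l : ℕ, ((l : R)) ^ k =
      ∑ j ∈ Finset.range (k + 1), (stirling2 k j : R) * (l.descFactorial j : R) := by
    intro l
    have := pow_eq_sum_stirling2 l k
    have := congrArg (Nat.cast : ℕ → R) this
    push_cast at this
    exact this
  calc ∑ l ∈ Finset.range (N + 1), (N.choose l : R) * (l : R) ^ k * z ^ l
      = ∑ l ∈ Finset.range (N + 1), ∑ j ∈ Finset.range (k + 1),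
          (stirling2 k j : R) * ((N.choose l : R) * (l.descFactorial j : R) * z ^ l) := by
        apply Finset.sum_congr rfl
        intro l _
        rw [hl l, Finset.mul_sum, Finset.sum_mul]
        apply Finset.sum_congr rfl
        intro j _
        ring
    _ = ∑ j ∈ Finset.range (k + 1), (stirling2 k j : R) *
          ∑ l ∈ Finset.range (N + 1), (N.choose l : R) * (l.descFactorial j : R) * z ^ l := by
        rw [Finset.sum_comm]
        simp [Finset.mul_sum]
    _ = _ := by
        apply Finset.sum_congr rfl
        intro j _
        rw [innerSum17]
        ring
end

section
/- The convolution of two log-concave sequences of positive real numbers is log-concave: if (a_k)_{k=0}^m and (b_k)_{k=0}^p are positive and satisfy a_k² ≥ a_{k-1}a_{k+1} and b_k² ≥ b_{k-1}b_{k+1} for all interior indices, then the sequence c_k = Σ_j a_j b_{k-j} satisfies c_k² ≥ c_{k-1} c_{k+1} for all 1 ≤ k ≤ m+p-1. -/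
open Finset

private def zext (m : ℕ) (a : ℕ → ℝ) : ℤ → ℝ :=
  fun i => if 0 ≤ i ∧ i ≤ (m : ℤ) then a i.toNat else 0

private lemma zext_nonneg {m : ℕ} {a : ℕ → ℝ} (hapos : ∀ k ≤ m, 0 < a k) (i : ℤ) :
    0 ≤ zext m a i := by
  unfold zext
  split_ifs with h
  · exact (hapos _ (by omega)).le
  · exact le_rfl

private lemma zext_cast {m : ℕ} {a : ℕ → ℝ} (ha0 : ∀ k, m < k → a k = 0) (j : ℕ) :
    zext m a (j : ℤ) = a j := by
  unfold zext
  split_ifs with h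
  · have : ((j : ℤ)).toNat = j := by omega
    rw [this]
  · rw [ha0 j (by omega)]

private lemma zext_ne {m : ℕ} {a : ℕ → ℝ} {i : ℤ} (h : zext m a i ≠ 0) :
    0 ≤ i ∧ i ≤ (m : ℤ) := by
  by_contra hcon
  exact h (by unfold zext; rw [if_neg hcon])

private lemma nat_spread {m : ℕ} {a : ℕ → ℝ} (hapos : ∀ k ≤ m, 0 < a k)
    (halc : ∀ k, 1 ≤ k → k + 1 ≤ m → a (k - 1) * a (k + 1) ≤ a k ^ 2) :
    ∀ j i : ℕ, 1 ≤ i → i ≤ j + 1 → j + 1 ≤ m → a (i - 1) * a (j + 1) ≤ a i * a j := by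
  intro j
  induction j with
  | zero =>
    intro i h1 h2 _
    interval_cases i
    simp [mul_comm]
  | succ j ih =>
    intro i h1 h2 hm
    rcases Nat.lt_or_ge i (j + 2) with hlt | hge
    · have h1' : a (i - 1) * a (j + 1) ≤ a i * a j := ih i h1 (by omega) (by omega)
      have h2' := halc (j + 1) (by omega) (by omega)
      simp only [Nat.add_sub_cancel] at h2'
      have p0 := hapos j (by omega)
      have p1 := hapos (j + 1) (by omega)
      have p2 := hapos (j + 2) (by omega)
      have pi := hapos i (by omega)
      have pim := hapos (i - 1) (by omega)
      have hprod := mul_le_mul h1' h2' (by positivity) (by positivity)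
      nlinarith [hprod, mul_pos p0 p1]
    · have : i = j + 2 := by omega
      subst this
      simp [mul_comm]

private lemma zext_spread {m : ℕ} {a : ℕ → ℝ} (hapos : ∀ k ≤ m, 0 < a k)
    (halc : ∀ k, 1 ≤ k → k + 1 ≤ m → a (k - 1) * a (k + 1) ≤ a k ^ 2) :
    ∀ i j : ℤ, i ≤ j + 1 → zext m a (i - 1) * zext m a (j + 1) ≤ zext m a i * zext m a j := by
  intro i j hij
  by_cases h1 : i - 1 < 0 ∨ (m : ℤ) < j + 1
  · have hz : zext m a (i - 1) * zext m a (j + 1) = 0 := by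
      rcases h1 with h | h
      · rw [show zext m a (i-1) = 0 from by unfold zext; rw [if_neg (by omega)], zero_mul]
      · rw [show zext m a (j+1) = 0 from by unfold zext; rw [if_neg (by omega)], mul_zero]
    rw [hz]
    exact mul_nonneg (zext_nonneg hapos _) (zext_nonneg hapos _)
  · push_neg at h1
    obtain ⟨hi1, hjm⟩ := h1
    have hi1' : 1 ≤ i := by omega
    have hj0 : 0 ≤ j := by omega
    have e1 : zext m a (i - 1) = a (i.toNat - 1) := by
      unfold zext; rw [if_pos (by omega)]; congr 1; omega
    have e2 : zext m a (j + 1) = a (j.toNat + 1) := by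
      unfold zext; rw [if_pos (by omega)]; congr 1; omega
    have e3 : zext m a i = a i.toNat := by
      unfold zext; rw [if_pos (by omega)]
    have e4 : zext m a j = a j.toNat := by
      unfold zext; rw [if_pos (by omega)]
    rw [e1, e2, e3, e4]
    exact nat_spread hapos halc j.toNat i.toNat (by omega) (by omega) (by omega)

private lemma sum_support_eq {β : Type*} [DecidableEq β] (f : β → ℝ) (S T : Finset β)
    (h : ∀ x, f x ≠ 0 → x ∈ S ∧ x ∈ T) : ∑ x ∈ S, f x = ∑ x ∈ T, f x := by
  have hS : ∑ x ∈ S ∩ T, f x = ∑ x ∈ S, f x :=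
    Finset.sum_subset Finset.inter_subset_left
      (fun x hx hnx => by
        by_contra hf
        exact hnx (Finset.mem_inter.mpr (h x hf)))
  have hT : ∑ x ∈ S ∩ T, f x = ∑ x ∈ T, f x :=
    Finset.sum_subset Finset.inter_subset_right
      (fun x hx hnx => by
        by_contra hf
        exact hnx (Finset.mem_inter.mpr (h x hf)))
  rw [← hS, hT]

theorem stmt_18 (m p : ℕ) (a b : ℕ → ℝ)
    (hapos : ∀ k ≤ m, 0 < a k) (hbpos : ∀ k ≤ p, 0 < b k)
    (ha0 : ∀ k, m < k → a k = 0) (hb0 : ∀ k, p < k → b k = 0)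
    (halc : ∀ k, 1 ≤ k → k + 1 ≤ m → a (k - 1) * a (k + 1) ≤ a k ^ 2)
    (hblc : ∀ k, 1 ≤ k → k + 1 ≤ p → b (k - 1) * b (k + 1) ≤ b k ^ 2)
    (c : ℕ → ℝ) (hc : ∀ k, c k = ∑ j ∈ Finset.range (k + 1), a j * b (k - j)) :
    ∀ k, 1 ≤ k → k + 1 ≤ m + p → c (k - 1) * c (k + 1) ≤ c k ^ 2 := by
  intro k hk1 hkm
  set A : ℤ → ℝ := zext m a with hA
  set B : ℤ → ℝ := zext p b with hB
  have hAnn : ∀ i, 0 ≤ A i := zext_nonneg hapos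
  have hBnn : ∀ i, 0 ≤ B i := zext_nonneg hbpos
  have hAne : ∀ i : ℤ, A i ≠ 0 → 0 ≤ i ∧ i ≤ (m : ℤ) := fun i h => zext_ne h
  have hBne : ∀ i : ℤ, B i ≠ 0 → 0 ≤ i ∧ i ≤ (p : ℤ) := fun i h => zext_ne h
  have hAsp : ∀ i j : ℤ, i ≤ j + 1 → A (i - 1) * A (j + 1) ≤ A i * A j :=
    zext_spread hapos halc
  have hBsp : ∀ i j : ℤ, i ≤ j + 1 → B (i - 1) * B (j + 1) ≤ B i * B j :=
    zext_spread hbpos hblc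
  set K : ℤ := (k : ℤ) with hK
  set U : Finset ℤ := Finset.Icc (-1 : ℤ) (K + 1) with hU
  -- expression of c as a sum over U
  have hcs : ∀ n : ℕ, (n : ℤ) ≤ K + 1 → c n = ∑ i ∈ U, A i * B ((n : ℤ) - i) := by
    intro n hn
    rw [hc n]
    have step1 : ∑ j ∈ Finset.range (n + 1), a j * b (n - j)
        = ∑ j ∈ Finset.range (n + 1), A (j : ℤ) * B ((n : ℤ) - (j : ℤ)) := by
      refine Finset.sum_congr rfl fun j hj => ?_
      have hjn : j ≤ n := Nat.lt_succ_iff.mp (Finset.mem_range.mp hj)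
      rw [hA, hB, zext_cast ha0 j]
      have e : ((n : ℤ) - (j : ℤ)) = ((n - j : ℕ) : ℤ) := by omega
      rw [e, zext_cast hb0 (n - j)]
    rw [step1]
    have hinj : ∀ x ∈ Finset.range (n + 1), ∀ y ∈ Finset.range (n + 1),
        (x : ℤ) = (y : ℤ) → x = y := fun x _ y _ h => by exact_mod_cast h
    have himg : ∑ i ∈ (Finset.range (n + 1)).image (fun j : ℕ => (j : ℤ)),
        A i * B ((n : ℤ) - i) = ∑ j ∈ Finset.range (n + 1), A (j : ℤ) * B ((n : ℤ) - (j : ℤ)) :=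
      Finset.sum_image hinj
    rw [← himg]
    apply sum_support_eq
    intro i hne
    have h1 : A i ≠ 0 := fun h => hne (by rw [h, zero_mul])
    have h2 : B ((n : ℤ) - i) ≠ 0 := fun h => hne (by rw [h, mul_zero])
    have hi0 : 0 ≤ i := (hAne i h1).1
    have hin : i ≤ (n : ℤ) := by have := (hBne _ h2).1; omega
    constructor
    · exact Finset.mem_image.mpr ⟨i.toNat, Finset.mem_range.mpr (by omega), by omega⟩
    · rw [hU]; rw [Finset.mem_Icc]; omega
  have hck : c k = ∑ i ∈ U, A i * B (K - i) := hcs k (by omega)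
  have hck1 : c (k + 1) = ∑ i ∈ U, A i * B (K + 1 - i) := by
    have h := hcs (k + 1) (by push_cast; omega)
    rw [h]
    have e : ((k + 1 : ℕ) : ℤ) = K + 1 := by push_cast; omega
    rw [e]
  have hckm : c (k - 1) = ∑ i ∈ U, A i * B (K - 1 - i) := by
    have h := hcs (k - 1) (by omega)
    rw [h]
    have e : ((k - 1 : ℕ) : ℤ) = K - 1 := by omega
    rw [e]
  -- the difference as a single sum over U ×ˢ U
  have e1 : c k ^ 2 = ∑ q ∈ U ×ˢ U, (A q.1 * B (K - q.1)) * (A q.2 * B (K - q.2)) := by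
    rw [hck, sq, Finset.sum_mul_sum, Finset.sum_product]
  have e2 : c (k - 1) * c (k + 1)
      = ∑ q ∈ U ×ˢ U, (A q.1 * B (K - 1 - q.1)) * (A q.2 * B (K + 1 - q.2)) := by
    rw [hckm, hck1, Finset.sum_mul_sum, Finset.sum_product]
  have e3 : ∑ q ∈ U ×ˢ U, (A q.1 * B (K - 1 - q.1)) * (A q.2 * B (K + 1 - q.2))
      = ∑ q ∈ U ×ˢ U, (A (q.1 - 1) * B (K - q.1)) * (A (q.2 + 1) * B (K - q.2)) := by
    have hinj : ∀ x ∈ U ×ˢ U, ∀ y ∈ U ×ˢ U,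
        (x.1 + 1, x.2 - 1) = ((y.1 + 1, y.2 - 1) : ℤ × ℤ) → x = y := by
      intro x _ y _ h
      simp only [Prod.mk.injEq] at h
      exact Prod.ext (by omega) (by omega)
    have himg : ∑ q ∈ (U ×ˢ U).image (fun q : ℤ × ℤ => (q.1 + 1, q.2 - 1)),
        (A (q.1 - 1) * B (K - q.1)) * (A (q.2 + 1) * B (K - q.2))
        = ∑ q ∈ U ×ˢ U,
        (A ((q.1 + 1) - 1) * B (K - (q.1 + 1))) * (A ((q.2 - 1) + 1) * B (K - (q.2 - 1))) :=
      Finset.sum_image hinj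
    have hterm : ∀ q : ℤ × ℤ,
        (A ((q.1 + 1) - 1) * B (K - (q.1 + 1))) * (A ((q.2 - 1) + 1) * B (K - (q.2 - 1)))
        = (A q.1 * B (K - 1 - q.1)) * (A q.2 * B (K + 1 - q.2)) := by
      intro q
      have a1 : q.1 + 1 - 1 = q.1 := by ring
      have a2 : q.2 - 1 + 1 = q.2 := by ring
      have a3 : K - (q.1 + 1) = K - 1 - q.1 := by ring
      have a4 : K - (q.2 - 1) = K + 1 - q.2 := by ring
      rw [a1, a2, a3, a4]
    rw [Finset.sum_congr rfl (fun q _ => hterm q)] at himg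
    rw [← himg]
    refine sum_support_eq
      (fun q : ℤ × ℤ => (A (q.1 - 1) * B (K - q.1)) * (A (q.2 + 1) * B (K - q.2)))
      ((U ×ˢ U).image (fun q : ℤ × ℤ => (q.1 + 1, q.2 - 1))) (U ×ˢ U) ?_
    intro q hne
    have h1 : A (q.1 - 1) ≠ 0 := fun h => hne (by rw [h, zero_mul, zero_mul])
    have h2 : B (K - q.1) ≠ 0 := fun h => hne (by rw [h, mul_zero, zero_mul])
    have h3 : A (q.2 + 1) ≠ 0 := fun h => hne (by rw [h, zero_mul, mul_zero])
    have h4 : B (K - q.2) ≠ 0 := fun h => hne (by rw [h, mul_zero, mul_zero])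
    have c1 := hAne _ h1
    have c2 := (hBne _ h2).1
    have c3 := hAne _ h3
    have c4 := (hBne _ h4).1
    constructor
    · refine Finset.mem_image.mpr ⟨(q.1 - 1, q.2 + 1), ?_, ?_⟩
      · rw [Finset.mem_product, hU, Finset.mem_Icc, Finset.mem_Icc]
        constructor <;> omega
      · exact Prod.ext (by omega) (by omega)
    · rw [Finset.mem_product, hU, Finset.mem_Icc, Finset.mem_Icc]
      constructor <;> omega
  set H : ℤ × ℤ → ℝ := fun q =>
    (A q.1 * A q.2 - A (q.1 - 1) * A (q.2 + 1)) * (B (K - q.1) * B (K - q.2)) with hH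
  have e4 : c k ^ 2 - c (k - 1) * c (k + 1) = ∑ q ∈ U ×ˢ U, H q := by
    rw [e1, e2, e3, ← Finset.sum_sub_distrib]
    refine Finset.sum_congr rfl fun q _ => ?_
    rw [hH]
    ring
  -- symmetrized sum
  have e5 : ∑ q ∈ U ×ˢ U, H q = ∑ q ∈ U ×ˢ U, H (q.2 + 1, q.1 - 1) := by
    have hinj : ∀ x ∈ U ×ˢ U, ∀ y ∈ U ×ˢ U,
        (x.2 + 1, x.1 - 1) = ((y.2 + 1, y.1 - 1) : ℤ × ℤ) → x = y := by
      intro x _ y _ h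
      simp only [Prod.mk.injEq] at h
      exact Prod.ext (by omega) (by omega)
    have himg : ∑ q ∈ (U ×ˢ U).image (fun q : ℤ × ℤ => (q.2 + 1, q.1 - 1)), H q
        = ∑ q ∈ U ×ˢ U, H (q.2 + 1, q.1 - 1) := Finset.sum_image hinj
    rw [← himg]
    refine sum_support_eq H (U ×ˢ U) ((U ×ˢ U).image (fun q : ℤ × ℤ => (q.2 + 1, q.1 - 1))) ?_
    intro q hne
    rw [hH] at hne
    simp only at hne
    have h1 : A q.1 * A q.2 - A (q.1 - 1) * A (q.2 + 1) ≠ 0 :=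
      fun h => hne (by rw [h, zero_mul])
    have h2 : B (K - q.1) ≠ 0 := fun h => hne (by rw [h, zero_mul, mul_zero])
    have h3 : B (K - q.2) ≠ 0 := fun h => hne (by rw [h, mul_zero, mul_zero])
    have c2 := (hBne _ h2).1
    have c3 := (hBne _ h3).1
    have c1 : 0 ≤ q.1 ∧ -1 ≤ q.2 := by
      by_cases ha : A q.1 * A q.2 ≠ 0
      · have d1 := hAne q.1 (fun h => ha (by rw [h, zero_mul]))
        have d2 := hAne q.2 (fun h => ha (by rw [h, mul_zero]))
        omega
      · push_neg at ha
        have hb : A (q.1 - 1) * A (q.2 + 1) ≠ 0 := fun h => h1 (by rw [ha, h, sub_zero])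
        have d1 := hAne (q.1 - 1) (fun h => hb (by rw [h, zero_mul]))
        have d2 := hAne (q.2 + 1) (fun h => hb (by rw [h, mul_zero]))
        omega
    constructor
    · rw [Finset.mem_product, hU, Finset.mem_Icc, Finset.mem_Icc]
      constructor <;> omega
    · refine Finset.mem_image.mpr ⟨(q.2 + 1, q.1 - 1), ?_, ?_⟩
      · rw [Finset.mem_product, hU, Finset.mem_Icc, Finset.mem_Icc]
        constructor <;> omega
      · exact Prod.ext (by omega) (by omega)
  -- pointwise identity for the symmetrized terms
  have key : ∀ q : ℤ × ℤ, H q + H (q.2 + 1, q.1 - 1)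
      = (A q.1 * A q.2 - A (q.1 - 1) * A (q.2 + 1))
        * (B (K - q.1) * B (K - q.2) - B (K - q.1 + 1) * B (K - q.2 - 1)) := by
    intro q
    rw [hH]
    simp only
    have a1 : q.2 + 1 - 1 = q.2 := by ring
    have a2 : q.1 - 1 + 1 = q.1 := by ring
    have a3 : K - (q.2 + 1) = K - q.2 - 1 := by ring
    have a4 : K - (q.1 - 1) = K - q.1 + 1 := by ring
    rw [a1, a2, a3, a4]
    ring
  -- pointwise nonnegativity
  have keynn : ∀ q : ℤ × ℤ, 0 ≤ H q + H (q.2 + 1, q.1 - 1) := by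
    intro q
    rw [key q]
    rcases le_or_gt q.1 (q.2 + 1) with hle | hlt
    · apply mul_nonneg
      · exact sub_nonneg.mpr (hAsp q.1 q.2 hle)
      · have h := hBsp (K - q.2) (K - q.1) (by omega)
        have a1 : K - q.2 - 1 = K - q.2 - 1 := rfl
        nlinarith [h]
    · have f1 : A q.1 * A q.2 - A (q.1 - 1) * A (q.2 + 1) ≤ 0 := by
        have h := hAsp (q.2 + 1) (q.1 - 1) (by omega)
        have a1 : q.2 + 1 - 1 = q.2 := by ring
        have a2 : q.1 - 1 + 1 = q.1 := by ring
        rw [a1, a2] at h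
        nlinarith [h]
      have f2 : B (K - q.1) * B (K - q.2) - B (K - q.1 + 1) * B (K - q.2 - 1) ≤ 0 := by
        have h := hBsp (K - q.1 + 1) (K - q.2 - 1) (by omega)
        have a1 : K - q.1 + 1 - 1 = K - q.1 := by ring
        have a2 : K - q.2 - 1 + 1 = K - q.2 := by ring
        rw [a1, a2] at h
        nlinarith [h]
      nlinarith [f1, f2]
  have hsum : 0 ≤ ∑ q ∈ U ×ˢ U, H q := by
    have h2s : (2 : ℝ) * ∑ q ∈ U ×ˢ U, H q
        = ∑ q ∈ U ×ˢ U, (H q + H (q.2 + 1, q.1 - 1)) := by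
      rw [Finset.sum_add_distrib, ← e5]
      ring
    have hnn : 0 ≤ ∑ q ∈ U ×ˢ U, (H q + H (q.2 + 1, q.1 - 1)) :=
      Finset.sum_nonneg fun q _ => keynn q
    linarith
  linarith [e4, hsum]
end
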